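/- arXiv:1111.1281 — 7 statements merged into one kernel-verified Lean document; each statement's English description precedes it below -/
import Mathlib

section
/- Let α: H ⊗ A → A and ω: H ⊗ H → A be maps making A a twisted partial H-module algebra, and suppose ω is trivial, i.e. h·(l·1_A) = ω(h,l) = Σ (h₍₁₎·1_A)(h₍₂₎l·1_A) for all h,l ∈ H. Then α is a partial action of H on A, i.e. h·(l·a) = Σ (h₍₁₎·1_A)(h₍₂₎l·a) for all h,l ∈ H, a ∈ A. -/
open TensorProduct

noncomputable section

/-- A twisted partial action `(α, ω)` of a Hopf algebra `H` on a unital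
algebra `A` (Definition 2.1 of Alves–Batista–Dokuchaev–Paques).  Sweedler sums
are expressed by quantifying over arbitrary finite representations of the
comultiplication. -/
structure TwistedPartialAction (k H A : Type) [CommRing k]
    [Ring H] [HopfAlgebra k H] [Ring A] [Algebra k A] where
  act : H →ₗ[k] A →ₗ[k] A
  cocycle : H →ₗ[k] H →ₗ[k] A
  /-- `1_H · a = a` -/
  act_one : ∀ a : A, act 1 a = a
  /-- `h · (ab) = Σ (h₁ · a)(h₂ · b)` -/
  act_mul : ∀ (h : H) (a b : A) (ι : Type) (s : Finset ι) (h1 h2 : ι → H),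
    Coalgebra.comul (R := k) h = ∑ i ∈ s, h1 i ⊗ₜ[k] h2 i →
    act h (a * b) = ∑ i ∈ s, act (h1 i) a * act (h2 i) b
  /-- `Σ (h₁ · (l₁ · a)) ω(h₂, l₂) = Σ ω(h₁, l₁)(h₂ l₂ · a)` -/
  twisted : ∀ (h l : H) (a : A) (ι κ : Type) (s : Finset ι) (t : Finset κ)
    (h1 h2 : ι → H) (l1 l2 : κ → H),
    Coalgebra.comul (R := k) h = ∑ i ∈ s, h1 i ⊗ₜ[k] h2 i →
    Coalgebra.comul (R := k) l = ∑ j ∈ t, l1 j ⊗ₜ[k] l2 j →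
    ∑ i ∈ s, ∑ j ∈ t, act (h1 i) (act (l1 j) a) * cocycle (h2 i) (l2 j) =
      ∑ i ∈ s, ∑ j ∈ t, cocycle (h1 i) (l1 j) * act (h2 i * l2 j) a
  /-- `ω(h,l) = Σ ω(h₁, l₁)(h₂ l₂ · 1)` -/
  cocycle_absorb : ∀ (h l : H) (ι κ : Type) (s : Finset ι) (t : Finset κ)
    (h1 h2 : ι → H) (l1 l2 : κ → H),
    Coalgebra.comul (R := k) h = ∑ i ∈ s, h1 i ⊗ₜ[k] h2 i →
    Coalgebra.comul (R := k) l = ∑ j ∈ t, l1 j ⊗ₜ[k] l2 j →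
    cocycle h l = ∑ i ∈ s, ∑ j ∈ t, cocycle (h1 i) (l1 j) * act (h2 i * l2 j) 1

variable {k H A : Type} [CommRing k] [Ring H] [HopfAlgebra k H] [Ring A] [Algebra k A]

/-- The bilinear map `(x, y) ↦ (x · a)(y · b)`. -/
noncomputable def TwistedPartialAction.B (P : TwistedPartialAction k H A) (a b : A) :
    H →ₗ[k] H →ₗ[k] A :=
  LinearMap.mk₂ k (fun x y => P.act x a * P.act y b)
    (fun x x' y => by simp [add_mul])
    (fun r x y => by simp [smul_mul_assoc])
    (fun x y y' => by simp [mul_add])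
    (fun r x y => by simp [mul_smul_comm])

@[simp] lemma TwistedPartialAction.B_apply (P : TwistedPartialAction k H A) (a b : A) (x y : H) :
    P.B a b x y = P.act x a * P.act y b := rfl

/-- `act_mul` repackaged as a statement about a linear map applied to `comul`. -/
lemma TwistedPartialAction.act_mul' (P : TwistedPartialAction k H A) (m : H) (a b : A) :
    P.act m (a * b) = TensorProduct.lift (P.B a b) (Coalgebra.comul (R := k) m) := by
  obtain ⟨t, ht⟩ := TensorProduct.exists_finset (Coalgebra.comul (R := k) m)
  rw [P.act_mul m a b (H × H) t Prod.fst Prod.snd ht, ht, map_sum]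
  simp

/-- If the cocycle `ω` of a twisted partial action is trivial, i.e.
`h·(l·1) = ω(h,l) = Σ (h₁·1)(h₂l·1)`, then the underlying action is a
partial action in the sense of Caenepeel–Janssen:
`h·(l·a) = Σ (h₁·1)(h₂l·a)`. -/
theorem trivialCocycle_partialAction
    {k H A : Type} [CommRing k] [Ring H] [HopfAlgebra k H]
    [Ring A] [Algebra k A] (P : TwistedPartialAction k H A)
    (htriv1 : ∀ h l : H, P.act h (P.act l 1) = P.cocycle h l)
    (htriv2 : ∀ (h l : H) (ι : Type) (s : Finset ι) (h1 h2 : ι → H),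
      Coalgebra.comul (R := k) h = ∑ i ∈ s, h1 i ⊗ₜ[k] h2 i →
      P.cocycle h l = ∑ i ∈ s, P.act (h1 i) 1 * P.act (h2 i * l) 1) :
    ∀ (h l : H) (a : A) (ι : Type) (s : Finset ι) (h1 h2 : ι → H),
      Coalgebra.comul (R := k) h = ∑ i ∈ s, h1 i ⊗ₜ[k] h2 i →
      P.act h (P.act l a) = ∑ i ∈ s, P.act (h1 i) 1 * P.act (h2 i * l) a := by
  intro h l a ι s h1 h2 hrep
  obtain ⟨t, htl⟩ := TensorProduct.exists_finset (Coalgebra.comul (R := k) l)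
  -- Step 1: `l · a = Σ (l₁ · a)(l₂ · 1)`
  have hla : P.act l a = ∑ p ∈ t, P.act p.1 a * P.act p.2 1 := by
    have h0 := P.act_mul l a 1 (H × H) t Prod.fst Prod.snd htl
    rwa [mul_one] at h0
  -- Step 2: expand `h · (l · a)` and use triviality of the cocycle
  have step2 : P.act h (P.act l a)
      = ∑ p ∈ t, ∑ i ∈ s, P.act (h1 i) (P.act p.1 a) * P.cocycle (h2 i) p.2 := by
    rw [hla, map_sum]
    refine Finset.sum_congr rfl fun p _ => ?_
    rw [P.act_mul h _ _ ι s h1 h2 hrep]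
    exact Finset.sum_congr rfl fun i _ => by rw [htriv1]
  -- Step 3: use the twisted-module condition
  have step3 : P.act h (P.act l a)
      = ∑ i ∈ s, ∑ p ∈ t, P.cocycle (h1 i) p.1 * P.act (h2 i * p.2) a := by
    rw [step2, Finset.sum_comm,
      P.twisted h l a ι (H × H) s t h1 h2 Prod.fst Prod.snd hrep htl]
  -- choose representations of `comul (h1 i)`
  choose c hc using fun i => TensorProduct.exists_finset (Coalgebra.comul (R := k) (h1 i))
  -- Step 4: expand the cocycle using `htriv2`
  have step4 : P.act h (P.act l a)
      = ∑ i ∈ s, ∑ p ∈ t,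
        (∑ q ∈ c i, P.act q.1 1 * P.act (q.2 * p.1) 1) * P.act (h2 i * p.2) a := by
    rw [step3]
    refine Finset.sum_congr rfl fun i _ => Finset.sum_congr rfl fun p _ => ?_
    rw [htriv2 (h1 i) p.1 (H × H) (c i) Prod.fst Prod.snd (hc i)]
  -- auxiliary linear maps, used to transport the identity along coassociativity
  set Φ : H ⊗[k] H →ₗ[k] A :=
    (TensorProduct.lift (P.B 1 a)) ∘ₗ LinearMap.mulRight k (Coalgebra.comul (R := k) l)
    with hΦ
  set Ψ : H ⊗[k] (H ⊗[k] H) →ₗ[k] A :=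
    TensorProduct.lift (LinearMap.mk₂ k (fun x w => P.act x 1 * Φ w)
      (fun x x' w => by simp [add_mul])
      (fun r x w => by simp [smul_mul_assoc])
      (fun x w w' => by simp [mul_add])
      (fun r x w => by simp [mul_smul_comm])) with hΨ
  have hΨ_tmul : ∀ (x : H) (w : H ⊗[k] H), Ψ (x ⊗ₜ[k] w) = P.act x 1 * Φ w := by
    intro x w; rw [hΨ, TensorProduct.lift.tmul]; rfl
  have hΦ1 : ∀ y z : H, Φ (y ⊗ₜ[k] z) = ∑ p ∈ t, P.act (y * p.1) 1 * P.act (z * p.2) a := by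
    intro y z
    rw [hΦ]
    simp only [LinearMap.comp_apply, LinearMap.mulRight_apply, htl, Finset.mul_sum,
      Algebra.TensorProduct.tmul_mul_tmul, map_sum, TensorProduct.lift.tmul,
      TwistedPartialAction.B_apply]
  have hΦ2 : ∀ i : ι, Φ (Coalgebra.comul (R := k) (h2 i)) = P.act (h2 i * l) a := by
    intro i
    have e : Φ (Coalgebra.comul (R := k) (h2 i))
        = TensorProduct.lift (P.B 1 a) (Coalgebra.comul (R := k) (h2 i * l)) := by
      rw [hΦ]
      simp [Bialgebra.comul_mul]
    rw [e, ← P.act_mul', one_mul]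
  -- compute `Ψ` on the left-hand side of coassociativity
  have hL : Ψ ((TensorProduct.assoc k H H H)
        ((Coalgebra.comul (R := k)).rTensor H (Coalgebra.comul (R := k) h)))
      = ∑ i ∈ s, ∑ q ∈ c i, P.act q.1 1 * Φ (q.2 ⊗ₜ[k] h2 i) := by
    rw [hrep, map_sum, map_sum, map_sum]
    refine Finset.sum_congr rfl fun i _ => ?_
    rw [LinearMap.rTensor_tmul, hc i, TensorProduct.sum_tmul, map_sum, map_sum]
    refine Finset.sum_congr rfl fun q _ => ?_
    rw [TensorProduct.assoc_tmul, hΨ_tmul]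
  -- compute `Ψ` on the right-hand side of coassociativity
  have hR : Ψ ((Coalgebra.comul (R := k)).lTensor H (Coalgebra.comul (R := k) h))
      = ∑ i ∈ s, P.act (h1 i) 1 * P.act (h2 i * l) a := by
    rw [hrep, map_sum, map_sum]
    refine Finset.sum_congr rfl fun i _ => ?_
    rw [LinearMap.lTensor_tmul, hΨ_tmul, hΦ2 i]
  have key := congrArg Ψ (Coalgebra.coassoc_apply (R := k) h)
  -- match the quadruple sum with `Ψ` of the left side
  have hmatch : ∀ i ∈ s,
      (∑ p ∈ t, (∑ q ∈ c i, P.act q.1 1 * P.act (q.2 * p.1) 1) * P.act (h2 i * p.2) a)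
      = ∑ q ∈ c i, P.act q.1 1 * Φ (q.2 ⊗ₜ[k] h2 i) := by
    intro i _
    simp only [Finset.sum_mul]
    rw [Finset.sum_comm]
    refine Finset.sum_congr rfl fun q _ => ?_
    rw [hΦ1 q.2 (h2 i), Finset.mul_sum]
    exact Finset.sum_congr rfl fun p _ => by rw [mul_assoc]
  calc P.act h (P.act l a)
      = ∑ i ∈ s, ∑ p ∈ t,
        (∑ q ∈ c i, P.act q.1 1 * P.act (q.2 * p.1) 1) * P.act (h2 i * p.2) a := step4
    _ = ∑ i ∈ s, ∑ q ∈ c i, P.act q.1 1 * Φ (q.2 ⊗ₜ[k] h2 i) :=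
        Finset.sum_congr rfl hmatch
    _ = Ψ ((TensorProduct.assoc k H H H)
          ((Coalgebra.comul (R := k)).rTensor H (Coalgebra.comul (R := k) h))) := hL.symm
    _ = Ψ ((Coalgebra.comul (R := k)).lTensor H (Coalgebra.comul (R := k) h)) := key
    _ = ∑ i ∈ s, P.act (h1 i) 1 * P.act (h2 i * l) a := hR
end
end

section
/- Let H = kG be the group Hopf algebra of a group G over a commutative ring k, and let ({D_g}, {α_g}, {w_{g,h}}) be an idempotent twisted partial action of G on a unital algebra A, where each D_g = 1_g A for a central idempotent 1_g, each α_g: D_{g⁻¹} → D_g is a unital algebra isomorphism, each w_{g,h} ∈ D_g D_{gh}, with 1_e = 1_A, α_e = id_A, and α_g(α_h(a 1_{h⁻¹}) 1_{g⁻¹}) w_{g,h} = w_{g,h} α_{gh}(a 1_{(gh)⁻¹}). Then the k-linear maps α: kG ⊗ A → A, g ⊗ a ↦ α_g(a 1_{g⁻¹}), and ω: kG ⊗ kG → A, g ⊗ h ↦ w_{g,h}, form a twisted partial action of kG on A. -/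
open TensorProduct

noncomputable section

/-- Example 2.3: an idempotent twisted partial action
`({D_g}, {α_g}, {w_{g,h}})` of a group `G` on a unital algebra `A` gives rise
to a twisted partial action of the group Hopf algebra `kG` on `A`.
The group algebra `kG` is presented as a Hopf algebra `H` having a basis `b`
indexed by `G` consisting of grouplike elements with `b g * b g' = b (g g')`
and `b 1 = 1`.  Here `e g` is the central idempotent generating `D_g`, and
`f g : A → A` is the map `a ↦ α_g(a 1_{g⁻¹})`. -/
theorem groupTwistedPartialAction_toHopf
    {k A G H : Type} [CommRing k] [Ring A] [Algebra k A] [Group G]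
    [Ring H] [HopfAlgebra k H]
    (b : Module.Basis G k H)
    (hb_mul : ∀ g g' : G, (b g : H) * b g' = b (g * g'))
    (hb_one : (b 1 : H) = 1)
    (hb_comul : ∀ g : G,
      Coalgebra.comul (R := k) (b g : H) = (b g : H) ⊗ₜ[k] (b g : H))
    (e : G → A) (f : G → A →ₗ[k] A) (w : G → G → A)
    (he_idem : ∀ g, e g * e g = e g)
    (he_central : ∀ (g : G) (a : A), e g * a = a * e g)
    (he_one : e 1 = 1)
    (hf_one : f 1 = LinearMap.id)
    (hf_proj : ∀ (g : G) (a : A), f g a = f g (a * e g⁻¹))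
    (hf_mul : ∀ (g : G) (a a' : A), f g (a * a') = f g a * f g a')
    (hf_into : ∀ (g : G) (a : A), f g a = e g * f g a)
    (hf_unital : ∀ g : G, f g (e g⁻¹) = e g)
    (hf_inj : ∀ (g : G) (a a' : A), a = e g⁻¹ * a → a' = e g⁻¹ * a' →
      f g a = f g a' → a = a')
    (hf_surj : ∀ (g : G) (a' : A), ∃ a : A, f g a = e g * a')
    (hw_mem : ∀ g g' : G, w g g' = e g * (e (g * g') * w g g'))
    (hw_compat : ∀ (g g' : G) (a : A),
      f g (f g' a) * w g g' = w g g' * f (g * g') a)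
    (act : H →ₗ[k] A →ₗ[k] A) (cocy : H →ₗ[k] H →ₗ[k] A)
    (hact : ∀ g : G, act (b g) = f g)
    (hcocy : ∀ g g' : G, cocy (b g) (b g') = w g g') :
    ∃ P : TwistedPartialAction k H A, P.act = act ∧ P.cocycle = cocy := by
  -- auxiliary facts
  have hf1 : ∀ g'' : G, f g'' (1 : A) = e g'' := by
    intro g''
    rw [hf_proj, one_mul, hf_unital]
  have hwe : ∀ g g' : G, w g g' * e (g * g') = w g g' := by
    intro g g'
    conv_lhs => rw [hw_mem g g']
    rw [mul_assoc, mul_assoc, ← he_central, ← mul_assoc (e (g * g')), he_idem,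
      ← hw_mem]
  -- the linear map (x ⊗ u) ↦ act x (act u a)
  set PP : A → H ⊗[k] H →ₗ[k] A := fun a => TensorProduct.lift
    (LinearMap.mk₂ k (fun x u => act x (act u a))
      (by intros; simp) (by intros; simp) (by intros; simp) (by intros; simp))
    with hPP
  -- the linear map (y ⊗ v) ↦ cocy y v
  set QQ : H ⊗[k] H →ₗ[k] A := TensorProduct.lift cocy with hQQ
  -- the linear map (y ⊗ v) ↦ act (y * v) a
  set RR : A → H ⊗[k] H →ₗ[k] A := fun a =>
    (act.flip a).comp (LinearMap.mul' k H) with hRR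
  -- LHS map of the twisted condition: ((x⊗y)⊗(u⊗v)) ↦ act x (act u a) * cocy y v
  set Φ : A → (H ⊗[k] H) ⊗[k] (H ⊗[k] H) →ₗ[k] A := fun a =>
    ((LinearMap.mul' k A).comp (TensorProduct.map (PP a) QQ)).comp
      (TensorProduct.tensorTensorTensorComm k H H H H).toLinearMap with hΦ
  -- RHS map: ((x⊗y)⊗(u⊗v)) ↦ cocy x u * act (y * v) a
  set Ψ : A → (H ⊗[k] H) ⊗[k] (H ⊗[k] H) →ₗ[k] A := fun a =>
    ((LinearMap.mul' k A).comp (TensorProduct.map QQ (RR a))).comp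
      (TensorProduct.tensorTensorTensorComm k H H H H).toLinearMap with hΨ
  have hΦt : ∀ (a : A) (x y u v : H),
      Φ a ((x ⊗ₜ[k] y) ⊗ₜ[k] (u ⊗ₜ[k] v)) = act x (act u a) * cocy y v := by
    intro a x y u v
    simp [hΦ, hPP, hQQ]
  have hΨt : ∀ (a : A) (x y u v : H),
      Ψ a ((x ⊗ₜ[k] y) ⊗ₜ[k] (u ⊗ₜ[k] v)) = cocy x u * act (y * v) a := by
    intro a x y u v
    simp [hΨ, hQQ, hRR]
  have hΦΨ : ∀ a : A, (Φ a).comp (TensorProduct.map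
        (Coalgebra.comul (R := k)) (Coalgebra.comul (R := k))) =
      (Ψ a).comp (TensorProduct.map
        (Coalgebra.comul (R := k)) (Coalgebra.comul (R := k))) := by
    intro a
    apply (b.tensorProduct b).ext
    rintro ⟨g, g'⟩
    simp only [Module.Basis.tensorProduct_apply, LinearMap.coe_comp,
      Function.comp_apply, TensorProduct.map_tmul, hb_comul, hΦt, hΨt,
      hact, hcocy, hb_mul]
    exact hw_compat g g' a
  refine ⟨⟨act, cocy, ?_, ?_, ?_, ?_⟩, rfl, rfl⟩
  · intro a
    rw [← hb_one, hact, hf_one, LinearMap.id_apply]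
  · intro h a c ι s h1 h2 hc
    set μ : H ⊗[k] H →ₗ[k] A :=
      (LinearMap.mul' k A).comp (TensorProduct.map (act.flip a) (act.flip c))
      with hμdef
    have hμ : ∀ x y : H, μ (x ⊗ₜ[k] y) = act x a * act y c := by
      intro x y; simp [hμdef]
    have key : act.flip (a * c) = μ.comp (Coalgebra.comul (R := k)) := by
      apply b.ext
      intro g
      simp only [LinearMap.coe_comp, Function.comp_apply, hb_comul, hμ,
        LinearMap.flip_apply, hact, hf_mul]
    have : act h (a * c) = μ (Coalgebra.comul (R := k) h) := by
      have := congrArg (fun φ : H →ₗ[k] A => φ h) key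
      simpa using this
    rw [this, hc, map_sum]
    exact Finset.sum_congr rfl fun i _ => hμ _ _
  · intro h l a ι κ s t h1 h2 l1 l2 hc hc'
    have hL : ∑ i ∈ s, ∑ j ∈ t, act (h1 i) (act (l1 j) a) * cocy (h2 i) (l2 j)
        = Φ a ((Coalgebra.comul (R := k) h) ⊗ₜ[k] (Coalgebra.comul (R := k) l)) := by
      rw [hc, hc', TensorProduct.sum_tmul]
      rw [map_sum]
      refine Finset.sum_congr rfl fun i _ => ?_
      rw [TensorProduct.tmul_sum, map_sum]
      exact Finset.sum_congr rfl fun j _ => (hΦt a _ _ _ _).symm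
    have hR : ∑ i ∈ s, ∑ j ∈ t, cocy (h1 i) (l1 j) * act (h2 i * l2 j) a
        = Ψ a ((Coalgebra.comul (R := k) h) ⊗ₜ[k] (Coalgebra.comul (R := k) l)) := by
      rw [hc, hc', TensorProduct.sum_tmul]
      rw [map_sum]
      refine Finset.sum_congr rfl fun i _ => ?_
      rw [TensorProduct.tmul_sum, map_sum]
      exact Finset.sum_congr rfl fun j _ => (hΨt a _ _ _ _).symm
    rw [hL, hR]
    have := congrArg (fun φ => φ (h ⊗ₜ[k] l)) (hΦΨ a)
    simpa using this
  · intro h l ι κ s t h1 h2 l1 l2 hc hc'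
    have hR : ∑ i ∈ s, ∑ j ∈ t, cocy (h1 i) (l1 j) * act (h2 i * l2 j) (1 : A)
        = Ψ 1 ((Coalgebra.comul (R := k) h) ⊗ₜ[k] (Coalgebra.comul (R := k) l)) := by
      rw [hc, hc', TensorProduct.sum_tmul]
      rw [map_sum]
      refine Finset.sum_congr rfl fun i _ => ?_
      rw [TensorProduct.tmul_sum, map_sum]
      exact Finset.sum_congr rfl fun j _ => (hΨt 1 _ _ _ _).symm
    rw [hR]
    have key : QQ = (Ψ 1).comp (TensorProduct.map
        (Coalgebra.comul (R := k)) (Coalgebra.comul (R := k))) := by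
      apply (b.tensorProduct b).ext
      rintro ⟨g, g'⟩
      simp only [Module.Basis.tensorProduct_apply, LinearMap.coe_comp,
        Function.comp_apply, TensorProduct.map_tmul, hb_comul, hΨt, hQQ,
        TensorProduct.lift.tmul, hcocy, hb_mul, hact, hf1]
      exact (hwe g g').symm
    have := congrArg (fun φ => φ (h ⊗ₜ[k] l)) key
    simp only [LinearMap.coe_comp, Function.comp_apply,
      TensorProduct.map_tmul] at this
    rw [← this, hQQ, TensorProduct.lift.tmul]
end
end

section
/- Let B be a unital algebra with an H-measuring β: H ⊗ B → B (written h ▷ b) satisfying h ▷ (ab) = Σ(h₍₁₎ ▷ a)(h₍₂₎ ▷ b), h ▷ 1_B = ε(h)1_B, 1_H ▷ a = a, twisted by u: H ⊗ H → B satisfying Σ(h₍₁₎ ▷ (k₍₁₎ ▷ a)) u(h₍₂₎,k₍₂₎) = Σ u(h₍₁₎,k₍₁₎)(h₍₂₎k₍₂₎ ▷ a). Let 1_A be a central idempotent of B and A = 1_A B. Define h·a = 1_A(h ▷ a) for a ∈ A and ω(h,k) = Σ(h₍₁₎·1_A) u(h₍₂₎,k₍₁₎)(h₍₃₎k₍₂₎·1_A).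 Then (A, ·, ω) is a twisted partial H-module algebra. -/
open TensorProduct

noncomputable section Tools

variable (k : Type) {H B : Type} [CommRing k] [Ring H] [HopfAlgebra k H]
  [Ring B] [Algebra k B]

/-- A canonical finite representation of the comultiplication. -/
noncomputable def rep (g : H) : Finset (H × H) :=
  (TensorProduct.exists_finset (Coalgebra.comul (R := k) g)).choose

lemma rep_spec (g : H) :
    Coalgebra.comul (R := k) g = ∑ p ∈ rep k g, p.1 ⊗ₜ[k] p.2 :=
  (TensorProduct.exists_finset (Coalgebra.comul (R := k) g)).choose_spec

/-- bilinear map `(a, b) ↦ D * f a * (g b * D')`. -/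
noncomputable def bi (D : B) (f g : H →ₗ[k] B) (D' : B) : H →ₗ[k] H →ₗ[k] B :=
  ((LinearMap.mul k B) ∘ₗ (LinearMap.mulLeft k D) ∘ₗ f).compl₂
    ((LinearMap.mulRight k D') ∘ₗ g)

@[simp] lemma bi_apply (D : B) (f g : H →ₗ[k] B) (D' : B) (a b : H) :
    bi k D f g D' a b = D * f a * (g b * D') := rfl

/-- trilinear map `(a, b, c) ↦ D * f a * (g b * (h c * D'))`. -/
noncomputable def tri (D : B) (f g h : H →ₗ[k] B) (D' : B) :
    H →ₗ[k] H →ₗ[k] H →ₗ[k] B where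
  toFun a := bi k (D * f a) g h D'
  map_add' a a' := by ext b c; simp [map_add, mul_add, add_mul]
  map_smul' r a := by ext b c; simp [map_smul, smul_mul_assoc]

@[simp] lemma tri_apply (D : B) (f g h : H →ₗ[k] B) (D' : B) (a b c : H) :
    tri k D f g h D' a b c = D * f a * g b * (h c * D') := rfl

/-- `SS F c = ∑_{(c)} F c₁ c₂`. -/
noncomputable def SS (F : H →ₗ[k] H →ₗ[k] B) : H →ₗ[k] B :=
  (TensorProduct.lift F) ∘ₗ (Coalgebra.comul (R := k))

lemma SS_apply (F : H →ₗ[k] H →ₗ[k] B) (c : H) :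
    SS k F c = ∑ q ∈ rep k c, F q.1 q.2 := by
  simp [SS, rep_spec k c, map_sum]

/-- Coassociativity, in "Sweedler sum" form: re-nesting a double sum. -/
theorem renest (t : H →ₗ[k] H →ₗ[k] H →ₗ[k] B) {g : H} {ι : Type*} {s : Finset ι}
    {f1 f2 : ι → H}
    (hg : Coalgebra.comul (R := k) g = ∑ i ∈ s, f1 i ⊗ₜ[k] f2 i) :
    ∑ i ∈ s, ∑ q ∈ rep k (f1 i), t q.1 q.2 (f2 i)
      = ∑ i ∈ s, ∑ q ∈ rep k (f2 i), t (f1 i) q.1 q.2 := by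
  set M : (H ⊗[k] H) ⊗[k] H →ₗ[k] B := TensorProduct.lift (TensorProduct.lift t)
  set N : H ⊗[k] (H ⊗[k] H) →ₗ[k] B :=
    TensorProduct.lift ((TensorProduct.lift.equiv (RingHom.id k) H H B).toLinearMap ∘ₗ t)
  have hM : ∀ a b c : H, M ((a ⊗ₜ[k] b) ⊗ₜ[k] c) = t a b c := by
    intro a b c; simp [M]
  have hN : ∀ a b c : H, N (a ⊗ₜ[k] (b ⊗ₜ[k] c)) = t a b c := by
    intro a b c; simp [N]
  have hMN : N ∘ₗ (TensorProduct.assoc k H H H).toLinearMap = M := by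
    apply TensorProduct.ext_threefold
    intro a b c
    simp [hM, hN]
  have lhs_eq : ∑ i ∈ s, ∑ q ∈ rep k (f1 i), t q.1 q.2 (f2 i)
      = M ((Coalgebra.comul (R := k)).rTensor H (Coalgebra.comul (R := k) g)) := by
    rw [hg]
    simp only [map_sum]
    refine Finset.sum_congr rfl fun i _ => ?_
    rw [LinearMap.rTensor_tmul, rep_spec k (f1 i), sum_tmul, map_sum]
    exact Finset.sum_congr rfl fun q _ => (hM _ _ _).symm
  have rhs_eq : ∑ i ∈ s, ∑ q ∈ rep k (f2 i), t (f1 i) q.1 q.2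
      = N ((Coalgebra.comul (R := k)).lTensor H (Coalgebra.comul (R := k) g)) := by
    rw [hg]
    simp only [map_sum]
    refine Finset.sum_congr rfl fun i _ => ?_
    rw [LinearMap.lTensor_tmul, rep_spec k (f2 i), tmul_sum, map_sum]
    exact Finset.sum_congr rfl fun q _ => (hN _ _ _).symm
  rw [lhs_eq, rhs_eq, ← Coalgebra.coassoc_apply, ← hMN]
  simp

lemma fact2l {B γ δ : Type*} [NonUnitalNonAssocSemiring B] (C : B)
    (s1 : Finset γ) (s2 : γ → Finset δ) (f : γ → δ → B) :
    ∑ y ∈ s1, ∑ m ∈ s2 y, C * f y m = C * ∑ y ∈ s1, ∑ m ∈ s2 y, f y m := by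
  rw [Finset.mul_sum]
  exact Finset.sum_congr rfl fun y _ => (Finset.mul_sum _ _ _).symm

lemma fact2 {B γ δ : Type*} [NonUnitalNonAssocSemiring B] (C C' : B)
    (s1 : Finset γ) (s2 : γ → Finset δ) (f : γ → δ → B) :
    ∑ y ∈ s1, ∑ m ∈ s2 y, C * f y m * C'
      = C * (∑ y ∈ s1, ∑ m ∈ s2 y, f y m) * C' := by
  rw [Finset.mul_sum, Finset.sum_mul]
  refine Finset.sum_congr rfl fun y _ => ?_
  rw [Finset.mul_sum, Finset.sum_mul]

end Tools

set_option maxHeartbeats 4000000 in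
/-- Example 2.6 (induced twisted partial action): if `B` is measured by
`β : H ⊗ B → B` (written `h ▷ b`), twisted by `u`, and `e` is a central
idempotent of `B`, then `h · a := e(h ▷ a)` together with
`ω(h,l) := Σ (h₁·e) u(h₂,l₁)(h₃l₂·e)` makes the ideal `A = eB` a twisted
partial `H`-module algebra (with unit `e`). -/
theorem induced_twistedPartialAction
    {k H B : Type} [CommRing k] [Ring H] [HopfAlgebra k H]
    [Ring B] [Algebra k B]
    (β : H →ₗ[k] B →ₗ[k] B) (u : H →ₗ[k] H →ₗ[k] B) (e : B)
    (hβ_one : ∀ b : B, β 1 b = b)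
    (hβ_unit : ∀ h : H, β h 1 = Coalgebra.counit (R := k) h • (1 : B))
    (hβ_mul : ∀ (h : H) (a b : B) (ι : Type) (s : Finset ι) (h1 h2 : ι → H),
      Coalgebra.comul (R := k) h = ∑ i ∈ s, h1 i ⊗ₜ[k] h2 i →
      β h (a * b) = ∑ i ∈ s, β (h1 i) a * β (h2 i) b)
    (hβ_twist : ∀ (h l : H) (a : B) (ι κ : Type) (s : Finset ι) (t : Finset κ)
      (h1 h2 : ι → H) (l1 l2 : κ → H),
      Coalgebra.comul (R := k) h = ∑ i ∈ s, h1 i ⊗ₜ[k] h2 i →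
      Coalgebra.comul (R := k) l = ∑ j ∈ t, l1 j ⊗ₜ[k] l2 j →
      ∑ i ∈ s, ∑ j ∈ t, β (h1 i) (β (l1 j) a) * u (h2 i) (l2 j) =
        ∑ i ∈ s, ∑ j ∈ t, u (h1 i) (l1 j) * β (h2 i * l2 j) a)
    (he_central : ∀ b : B, e * b = b * e) (he_idem : e * e = e)
    (W : H →ₗ[k] H →ₗ[k] B)
    (hW : ∀ (h l : H) (ι ι' κ : Type) (s : Finset ι) (s' : ι → Finset ι')
      (t : Finset κ) (h1 h2 : ι → H) (h21 h22 : ι → ι' → H) (l1 l2 : κ → H),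
      Coalgebra.comul (R := k) h = ∑ i ∈ s, h1 i ⊗ₜ[k] h2 i →
      (∀ i ∈ s, Coalgebra.comul (R := k) (h2 i) =
        ∑ j ∈ s' i, h21 i j ⊗ₜ[k] h22 i j) →
      Coalgebra.comul (R := k) l = ∑ p ∈ t, l1 p ⊗ₜ[k] l2 p →
      W h l = ∑ i ∈ s, ∑ j ∈ s' i, ∑ p ∈ t,
        (e * β (h1 i) e) * u (h21 i j) (l1 p) *
          (e * β (h22 i j * l2 p) e)) :
    -- `(A, ·, ω)` is a twisted partial `H`-module algebra, where `A = eB`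
    (∀ a : B, e * a = a → e * β 1 a = a) ∧
    (∀ (h : H) (a b : B), e * a = a → e * b = b →
      ∀ (ι : Type) (s : Finset ι) (h1 h2 : ι → H),
      Coalgebra.comul (R := k) h = ∑ i ∈ s, h1 i ⊗ₜ[k] h2 i →
      e * β h (a * b) = ∑ i ∈ s, (e * β (h1 i) a) * (e * β (h2 i) b)) ∧
    (∀ (h l : H) (a : B), e * a = a →
      ∀ (ι κ : Type) (s : Finset ι) (t : Finset κ)
        (h1 h2 : ι → H) (l1 l2 : κ → H),
      Coalgebra.comul (R := k) h = ∑ i ∈ s, h1 i ⊗ₜ[k] h2 i →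
      Coalgebra.comul (R := k) l = ∑ j ∈ t, l1 j ⊗ₜ[k] l2 j →
      ∑ i ∈ s, ∑ j ∈ t,
          (e * β (h1 i) (e * β (l1 j) a)) * W (h2 i) (l2 j) =
        ∑ i ∈ s, ∑ j ∈ t, W (h1 i) (l1 j) * (e * β (h2 i * l2 j) a)) ∧
    (∀ (h l : H) (ι κ : Type) (s : Finset ι) (t : Finset κ)
        (h1 h2 : ι → H) (l1 l2 : κ → H),
      Coalgebra.comul (R := k) h = ∑ i ∈ s, h1 i ⊗ₜ[k] h2 i →
      Coalgebra.comul (R := k) l = ∑ j ∈ t, l1 j ⊗ₜ[k] l2 j →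
      W h l = ∑ i ∈ s, ∑ j ∈ t,
        W (h1 i) (l1 j) * (e * β (h2 i * l2 j) e)) := by
  -- e commutes and collapses
  have hcol : ∀ x y : B, (e * x) * (e * y) = e * (x * y) := by
    intro x y
    rw [mul_assoc, ← mul_assoc x e y, ← he_central x, ← mul_assoc, ← mul_assoc,
      he_idem, mul_assoc]
  have hmove : ∀ x y : B, x * (e * y) = e * (x * y) := by
    intro x y
    rw [← mul_assoc, ← he_central x, mul_assoc]
  have hce : ∀ c : B, (e * c) * e = e * c := by
    intro c
    rw [← he_central (e * c), ← mul_assoc, he_idem]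
  -- instantiated multiplicativity
  have hmul' : ∀ (g : H) (c c' : B),
      β g (c * c') = ∑ q ∈ rep k g, β q.1 c * β q.2 c' :=
    fun g c c' => hβ_mul g c c' (H × H) (rep k g) Prod.fst Prod.snd (rep_spec k g)
  have hprod : ∀ w v : H, Coalgebra.comul (R := k) (w * v)
      = ∑ q ∈ rep k w ×ˢ rep k v, (q.1.1 * q.2.1) ⊗ₜ[k] (q.1.2 * q.2.2) := by
    intro w v
    rw [Bialgebra.comul_mul, rep_spec k w, rep_spec k v, Finset.sum_mul_sum,
      Finset.sum_product]
    simp [Algebra.TensorProduct.tmul_mul_tmul]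
  have hmulprod : ∀ (w v : H) (c c' : B), β (w * v) (c * c')
      = ∑ q ∈ rep k w, ∑ m ∈ rep k v, β (q.1 * m.1) c * β (q.2 * m.2) c' := by
    intro w v c c'
    rw [hβ_mul (w * v) c c' ((H × H) × (H × H)) (rep k w ×ˢ rep k v)
      (fun p => p.1.1 * p.2.1) (fun p => p.1.2 * p.2.2) (hprod w v),
      Finset.sum_product]
  have hmerge : ∀ (w v : H) (c c' : B),
      ∑ q ∈ rep k w, ∑ m ∈ rep k v,
        (e * β (q.1 * m.1) c) * (e * β (q.2 * m.2) c') = e * β (w * v) (c * c') := by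
    intro w v c c'
    rw [hmulprod w v c c', Finset.mul_sum]
    refine Finset.sum_congr rfl fun q _ => ?_
    rw [Finset.mul_sum]
    exact Finset.sum_congr rfl fun m _ => hcol _ _
  have hmerge2 : ∀ (w v : H) (c c' : B),
      ∑ q ∈ rep k w, ∑ m ∈ rep k v,
        β (q.1 * m.1) c * (e * β (q.2 * m.2) c') = e * β (w * v) (c * c') := by
    intro w v c c'
    rw [hmulprod w v c c', Finset.mul_sum]
    refine Finset.sum_congr rfl fun q _ => ?_
    rw [Finset.mul_sum]
    exact Finset.sum_congr rfl fun m _ => hmove _ _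
  have habsorb : ∀ (w : H) (c : B),
      ∑ q ∈ rep k w, (e * β q.1 (e * c)) * (e * β q.2 e) = e * β w (e * c) := by
    intro w c
    have : ∀ q : H × H, (e * β q.1 (e * c)) * (e * β q.2 e)
        = e * (β q.1 (e * c) * β q.2 e) := fun q => hcol _ _
    rw [Finset.sum_congr rfl fun q _ => this q, ← Finset.mul_sum, ← hmul', hce c]
  have hLa : ∀ (w : H) (c : B),
      ∑ q ∈ rep k w, (e * β q.1 e) * β q.2 c = e * β w (e * c) := by
    intro w c
    have : ∀ q : H × H, (e * β q.1 e) * β q.2 c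
        = e * (β q.1 e * β q.2 c) := fun q => mul_assoc _ _ _
    rw [Finset.sum_congr rfl fun q _ => this q, ← Finset.mul_sum, ← hmul']
  have htwist' : ∀ (w v : H) (c : B),
      ∑ q ∈ rep k w, ∑ m ∈ rep k v, β q.1 (β m.1 c) * u q.2 m.2
        = ∑ q ∈ rep k w, ∑ m ∈ rep k v, u q.1 m.1 * β (q.2 * m.2) c :=
    fun w v c => hβ_twist w v c (H × H) (H × H) (rep k w) (rep k v)
      Prod.fst Prod.snd Prod.fst Prod.snd (rep_spec k w) (rep_spec k v)
  have hWrep : ∀ w v : H, W w v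
      = ∑ r ∈ rep k w, ∑ q ∈ rep k r.2, ∑ m ∈ rep k v,
          (e * β r.1 e) * u q.1 m.1 * (e * β (q.2 * m.2) e) :=
    fun w v => hW w v (H × H) (H × H) (H × H) (rep k w) (fun r => rep k r.2)
      (rep k v) Prod.fst Prod.snd (fun _ q => q.1) (fun _ q => q.2)
      Prod.fst Prod.snd (rep_spec k w) (fun r _ => rep_spec k r.2) (rep_spec k v)
  have key : ∀ (c : B), e * c = c → ∀ (hh ll : H) (ι κ : Type) (s : Finset ι)
      (t : Finset κ) (h1 h2 : ι → H) (l1 l2 : κ → H),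
      Coalgebra.comul (R := k) hh = ∑ i ∈ s, h1 i ⊗ₜ[k] h2 i →
      Coalgebra.comul (R := k) ll = ∑ j ∈ t, l1 j ⊗ₜ[k] l2 j →
      ∑ i ∈ s, ∑ j ∈ t, W (h1 i) (l1 j) * (e * β (h2 i * l2 j) c)
        = ∑ i ∈ s, ∑ r ∈ rep k (h2 i), ∑ j ∈ t,
            e * β (h1 i) e * u r.1 (l1 j) * (e * β (r.2 * l2 j) c) := by
    intro c hc hh ll ι κ s t h1 h2 l1 l2 hs ht
    calc
      ∑ i ∈ s, ∑ j ∈ t, W (h1 i) (l1 j) * (e * β (h2 i * l2 j) c)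
          = ∑ i ∈ s, ∑ r ∈ rep k (h1 i), ∑ q ∈ rep k r.2, ∑ j ∈ t, ∑ m ∈ rep k (l1 j),
              e * β r.1 e * u q.1 m.1 * (e * β (q.2 * m.2) e)
                * (e * β (h2 i * l2 j) c) := by
            refine Finset.sum_congr rfl fun i _ => ?_
            simp only [hWrep, Finset.sum_mul]
            exact Finset.sum_comm.trans (Finset.sum_congr rfl fun r _ => Finset.sum_comm)
      _ = ∑ i ∈ s, ∑ r ∈ rep k (h1 i), ∑ q ∈ rep k r.2, ∑ j ∈ t, ∑ m ∈ rep k (l2 j),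
              e * β r.1 e * u q.1 (l1 j) * (e * β (q.2 * m.1) e)
                * (e * β (h2 i * m.2) c) := by
            refine Finset.sum_congr rfl fun i _ => Finset.sum_congr rfl fun r _ =>
              Finset.sum_congr rfl fun q _ => ?_
            have h0 := renest k (tri k (e * β r.1 e) (u q.1)
                (LinearMap.mulLeft k e ∘ₗ β.flip e ∘ₗ LinearMap.mulLeft k q.2)
                (LinearMap.mulLeft k e ∘ₗ β.flip c ∘ₗ LinearMap.mulLeft k (h2 i)) 1) ht
            simpa only [tri_apply, LinearMap.coe_comp, Function.comp_apply,
              LinearMap.mulLeft_apply, LinearMap.flip_apply, mul_one] using h0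
      _ = ∑ i ∈ s, ∑ r ∈ rep k (h1 i), ∑ j ∈ t, ∑ m ∈ rep k (l2 j), ∑ q ∈ rep k r.2,
              e * β r.1 e * u q.1 (l1 j) * (e * β (q.2 * m.1) e)
                * (e * β (h2 i * m.2) c) := by
            refine Finset.sum_congr rfl fun i _ => Finset.sum_congr rfl fun r _ => ?_
            exact Finset.sum_comm.trans (Finset.sum_congr rfl fun j _ => Finset.sum_comm)
      _ = ∑ i ∈ s, ∑ r ∈ rep k (h2 i), ∑ j ∈ t, ∑ m ∈ rep k (l2 j), ∑ q ∈ rep k r.1,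
              e * β (h1 i) e * u q.1 (l1 j) * (e * β (q.2 * m.1) e)
                * (e * β (r.2 * m.2) c) := by
            have h0 := renest k (∑ j ∈ t, ∑ m ∈ rep k (l2 j),
                tri k 1 (LinearMap.mulLeft k e ∘ₗ β.flip e)
                  (SS k (bi k 1 (u.flip (l1 j))
                    (LinearMap.mulLeft k e ∘ₗ β.flip e ∘ₗ LinearMap.mulRight k m.1) 1))
                  (LinearMap.mulLeft k e ∘ₗ β.flip c ∘ₗ LinearMap.mulRight k m.2) 1) hs
            simpa only [LinearMap.coe_sum, Finset.sum_apply, tri_apply, bi_apply,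
              SS_apply, LinearMap.coe_comp, Function.comp_apply, LinearMap.mulLeft_apply,
              LinearMap.mulRight_apply, LinearMap.flip_apply, one_mul, mul_one,
              Finset.mul_sum, Finset.sum_mul, mul_assoc] using h0
      _ = ∑ i ∈ s, ∑ r ∈ rep k (h2 i), ∑ q ∈ rep k r.1, ∑ j ∈ t, ∑ m ∈ rep k (l2 j),
              e * β (h1 i) e * u q.1 (l1 j) * (e * β (q.2 * m.1) e)
                * (e * β (r.2 * m.2) c) := by
            refine Finset.sum_congr rfl fun i _ => Finset.sum_congr rfl fun r _ => ?_
            exact (Finset.sum_congr rfl fun j _ => Finset.sum_comm).trans Finset.sum_comm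
      _ = ∑ i ∈ s, ∑ r ∈ rep k (h2 i), ∑ q ∈ rep k r.2, ∑ j ∈ t, ∑ m ∈ rep k (l2 j),
              e * β (h1 i) e * u r.1 (l1 j) * (e * β (q.1 * m.1) e)
                * (e * β (q.2 * m.2) c) := by
            refine Finset.sum_congr rfl fun i _ => ?_
            have h0 := renest k (∑ j ∈ t, ∑ m ∈ rep k (l2 j),
                tri k (e * β (h1 i) e) (u.flip (l1 j))
                  (LinearMap.mulLeft k e ∘ₗ β.flip e ∘ₗ LinearMap.mulRight k m.1)
                  (LinearMap.mulLeft k e ∘ₗ β.flip c ∘ₗ LinearMap.mulRight k m.2) 1)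
                (rep_spec k (h2 i))
            simpa only [LinearMap.coe_sum, Finset.sum_apply, tri_apply,
              LinearMap.coe_comp, Function.comp_apply, LinearMap.mulLeft_apply,
              LinearMap.mulRight_apply, LinearMap.flip_apply, mul_one,
              mul_assoc] using h0
      _ = ∑ i ∈ s, ∑ r ∈ rep k (h2 i), ∑ j ∈ t,
              e * β (h1 i) e * u r.1 (l1 j) * (e * β (r.2 * l2 j) c) := by
            refine Finset.sum_congr rfl fun i _ => Finset.sum_congr rfl fun r _ => ?_
            rw [Finset.sum_comm]
            refine Finset.sum_congr rfl fun j _ => ?_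
            calc ∑ q ∈ rep k r.2, ∑ m ∈ rep k (l2 j),
                  e * β (h1 i) e * u r.1 (l1 j) * (e * β (q.1 * m.1) e)
                    * (e * β (q.2 * m.2) c)
                = e * β (h1 i) e * u r.1 (l1 j) * ∑ q ∈ rep k r.2, ∑ m ∈ rep k (l2 j),
                    (e * β (q.1 * m.1) e) * (e * β (q.2 * m.2) c) := by
                  simp only [Finset.mul_sum, mul_assoc]
              _ = e * β (h1 i) e * u r.1 (l1 j) * (e * β (r.2 * l2 j) (e * c)) := by
                  rw [hmerge]
              _ = e * β (h1 i) e * u r.1 (l1 j) * (e * β (r.2 * l2 j) c) := by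
                  rw [hc]
  refine ⟨?_, ?_, ?_, ?_⟩
  · intro a ha
    rw [hβ_one]; exact ha
  · intro h a b ha hb ι s h1 h2 hs
    rw [hβ_mul h a b ι s h1 h2 hs, Finset.mul_sum]
    exact Finset.sum_congr rfl fun i _ => (hcol _ _).symm
  · intro h l a ha ι κ s t h1 h2 l1 l2 hs ht
    rw [key a ha h l ι κ s t h1 h2 l1 l2 hs ht]
    calc
      ∑ i ∈ s, ∑ j ∈ t, (e * β (h1 i) (e * β (l1 j) a)) * W (h2 i) (l2 j)
          = ∑ i ∈ s, ∑ x ∈ rep k (h2 i), ∑ y ∈ rep k x.2, ∑ j ∈ t, ∑ m ∈ rep k (l2 j),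
              (e * β (h1 i) (e * β (l1 j) a))
                * (e * β x.1 e * u y.1 m.1 * (e * β (y.2 * m.2) e)) := by
            refine Finset.sum_congr rfl fun i _ => ?_
            simp only [hWrep, Finset.mul_sum]
            exact Finset.sum_comm.trans (Finset.sum_congr rfl fun x _ => Finset.sum_comm)
      _ = ∑ i ∈ s, ∑ x ∈ rep k (h2 i), ∑ j ∈ t, ∑ m ∈ rep k (l2 j), ∑ y ∈ rep k x.2,
              (e * β (h1 i) (e * β (l1 j) a))
                * (e * β x.1 e * u y.1 m.1 * (e * β (y.2 * m.2) e)) := by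
            refine Finset.sum_congr rfl fun i _ => Finset.sum_congr rfl fun x _ => ?_
            exact Finset.sum_comm.trans (Finset.sum_congr rfl fun j _ => Finset.sum_comm)
      _ = ∑ i ∈ s, ∑ x ∈ rep k (h1 i), ∑ j ∈ t, ∑ m ∈ rep k (l2 j), ∑ y ∈ rep k (h2 i),
              e * β x.1 (e * β (l1 j) a) * (e * β x.2 e)
                * (u y.1 m.1 * (e * β (y.2 * m.2) e)) := by
            have h0 := renest k (∑ j ∈ t, ∑ m ∈ rep k (l2 j),
                tri k 1 (LinearMap.mulLeft k e ∘ₗ β.flip (e * β (l1 j) a))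
                  (LinearMap.mulLeft k e ∘ₗ β.flip e)
                  (SS k (bi k 1 (u.flip m.1)
                    (LinearMap.mulLeft k e ∘ₗ β.flip e ∘ₗ LinearMap.mulRight k m.2) 1)) 1) hs
            simpa only [LinearMap.coe_sum, Finset.sum_apply, tri_apply, bi_apply,
              SS_apply, LinearMap.coe_comp, Function.comp_apply, LinearMap.mulLeft_apply,
              LinearMap.mulRight_apply, LinearMap.flip_apply, one_mul, mul_one,
              Finset.mul_sum, Finset.sum_mul, mul_assoc] using h0.symm
      _ = ∑ i ∈ s, ∑ j ∈ t, ∑ x ∈ rep k (h1 i), ∑ m ∈ rep k (l2 j), ∑ y ∈ rep k (h2 i),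
              e * β x.1 (e * β (l1 j) a) * (e * β x.2 e)
                * (u y.1 m.1 * (e * β (y.2 * m.2) e)) := by
            exact Finset.sum_congr rfl fun i _ => Finset.sum_comm
      _ = ∑ i ∈ s, ∑ j ∈ t, ∑ r ∈ rep k (h1 i), ∑ m ∈ rep k (l2 j), ∑ y ∈ rep k (h2 i),
              e * β r.1 e * β r.2 (β (l1 j) a)
                * (u y.1 m.1 * (e * β (y.2 * m.2) e)) := by
            refine Finset.sum_congr rfl fun i _ => Finset.sum_congr rfl fun j _ => ?_
            calc
              ∑ x ∈ rep k (h1 i), ∑ m ∈ rep k (l2 j), ∑ y ∈ rep k (h2 i),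
                  e * β x.1 (e * β (l1 j) a) * (e * β x.2 e)
                    * (u y.1 m.1 * (e * β (y.2 * m.2) e))
                  = ∑ x ∈ rep k (h1 i),
                      e * β x.1 (e * β (l1 j) a) * (e * β x.2 e)
                        * ∑ m ∈ rep k (l2 j), ∑ y ∈ rep k (h2 i),
                            u y.1 m.1 * (e * β (y.2 * m.2) e) := by
                    exact Finset.sum_congr rfl fun x _ => fact2l _ _ _ _
              _ = (∑ x ∈ rep k (h1 i), e * β x.1 (e * β (l1 j) a) * (e * β x.2 e))
                      * ∑ m ∈ rep k (l2 j), ∑ y ∈ rep k (h2 i),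
                          u y.1 m.1 * (e * β (y.2 * m.2) e) := by
                    rw [Finset.sum_mul]
              _ = (e * β (h1 i) (e * β (l1 j) a))
                      * ∑ m ∈ rep k (l2 j), ∑ y ∈ rep k (h2 i),
                          u y.1 m.1 * (e * β (y.2 * m.2) e) := by
                    rw [habsorb]
              _ = (∑ r ∈ rep k (h1 i), e * β r.1 e * β r.2 (β (l1 j) a))
                      * ∑ m ∈ rep k (l2 j), ∑ y ∈ rep k (h2 i),
                          u y.1 m.1 * (e * β (y.2 * m.2) e) := by
                    rw [hLa]
              _ = ∑ r ∈ rep k (h1 i),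
                      e * β r.1 e * β r.2 (β (l1 j) a)
                        * ∑ m ∈ rep k (l2 j), ∑ y ∈ rep k (h2 i),
                            u y.1 m.1 * (e * β (y.2 * m.2) e) := by
                    rw [Finset.sum_mul]
              _ = ∑ r ∈ rep k (h1 i), ∑ m ∈ rep k (l2 j), ∑ y ∈ rep k (h2 i),
                      e * β r.1 e * β r.2 (β (l1 j) a)
                        * (u y.1 m.1 * (e * β (y.2 * m.2) e)) := by
                    exact Finset.sum_congr rfl fun r _ => (fact2l _ _ _ _).symm
      _ = ∑ i ∈ s, ∑ r ∈ rep k (h1 i), ∑ j ∈ t, ∑ m ∈ rep k (l2 j), ∑ y ∈ rep k (h2 i),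
              e * β r.1 e * β r.2 (β (l1 j) a)
                * (u y.1 m.1 * (e * β (y.2 * m.2) e)) := by
            exact Finset.sum_congr rfl fun i _ => Finset.sum_comm
      _ = ∑ i ∈ s, ∑ r ∈ rep k (h2 i), ∑ j ∈ t, ∑ m ∈ rep k (l2 j), ∑ y ∈ rep k r.2,
              e * β (h1 i) e * β r.1 (β (l1 j) a)
                * (u y.1 m.1 * (e * β (y.2 * m.2) e)) := by
            have h0 := renest k (∑ j ∈ t, ∑ m ∈ rep k (l2 j),
                tri k 1 (LinearMap.mulLeft k e ∘ₗ β.flip e)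
                  (β.flip (β (l1 j) a))
                  (SS k (bi k 1 (u.flip m.1)
                    (LinearMap.mulLeft k e ∘ₗ β.flip e ∘ₗ LinearMap.mulRight k m.2) 1)) 1) hs
            simpa only [LinearMap.coe_sum, Finset.sum_apply, tri_apply, bi_apply,
              SS_apply, LinearMap.coe_comp, Function.comp_apply, LinearMap.mulLeft_apply,
              LinearMap.mulRight_apply, LinearMap.flip_apply, one_mul, mul_one,
              Finset.mul_sum, Finset.sum_mul, mul_assoc] using h0
      _ = ∑ i ∈ s, ∑ r ∈ rep k (h2 i), ∑ y ∈ rep k r.2, ∑ j ∈ t, ∑ m ∈ rep k (l2 j),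
              e * β (h1 i) e * β r.1 (β (l1 j) a)
                * (u y.1 m.1 * (e * β (y.2 * m.2) e)) := by
            refine Finset.sum_congr rfl fun i _ => Finset.sum_congr rfl fun r _ => ?_
            exact (Finset.sum_congr rfl fun j _ => Finset.sum_comm).trans Finset.sum_comm
      _ = ∑ i ∈ s, ∑ r ∈ rep k (h2 i), ∑ y ∈ rep k r.1, ∑ j ∈ t, ∑ m ∈ rep k (l2 j),
              e * β (h1 i) e * β y.1 (β (l1 j) a) * u y.2 m.1
                * (e * β (r.2 * m.2) e) := by
            refine Finset.sum_congr rfl fun i _ => ?_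
            have h0 := renest k (∑ j ∈ t, ∑ m ∈ rep k (l2 j),
                tri k (e * β (h1 i) e) (β.flip (β (l1 j) a)) (u.flip m.1)
                  (LinearMap.mulLeft k e ∘ₗ β.flip e ∘ₗ LinearMap.mulRight k m.2) 1)
                (rep_spec k (h2 i))
            simpa only [LinearMap.coe_sum, Finset.sum_apply, tri_apply,
              LinearMap.coe_comp, Function.comp_apply, LinearMap.mulLeft_apply,
              LinearMap.mulRight_apply, LinearMap.flip_apply, mul_one,
              mul_assoc] using h0.symm
      _ = ∑ i ∈ s, ∑ r ∈ rep k (h2 i), ∑ y ∈ rep k r.1, ∑ j ∈ t, ∑ m ∈ rep k (l1 j),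
              e * β (h1 i) e * (β y.1 (β m.1 a) * u y.2 m.2)
                * (e * β (r.2 * l2 j) e) := by
            refine Finset.sum_congr rfl fun i _ => Finset.sum_congr rfl fun r _ =>
              Finset.sum_congr rfl fun y _ => ?_
            have h0 := renest k (tri k (e * β (h1 i) e) ((β y.1) ∘ₗ β.flip a) (u y.2)
                (LinearMap.mulLeft k e ∘ₗ β.flip e ∘ₗ LinearMap.mulLeft k r.2) 1) ht
            simpa only [tri_apply, LinearMap.coe_comp, Function.comp_apply,
              LinearMap.mulLeft_apply, LinearMap.flip_apply, mul_one,
              mul_assoc] using h0.symm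
      _ = ∑ i ∈ s, ∑ r ∈ rep k (h2 i), ∑ j ∈ t, ∑ y ∈ rep k r.1, ∑ m ∈ rep k (l1 j),
              e * β (h1 i) e * (β y.1 (β m.1 a) * u y.2 m.2)
                * (e * β (r.2 * l2 j) e) := by
            exact Finset.sum_congr rfl fun i _ => Finset.sum_congr rfl fun r _ =>
              Finset.sum_comm
      _ = ∑ i ∈ s, ∑ r ∈ rep k (h2 i), ∑ j ∈ t, ∑ y ∈ rep k r.1, ∑ m ∈ rep k (l1 j),
              e * β (h1 i) e * (u y.1 m.1 * β (y.2 * m.2) a)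
                * (e * β (r.2 * l2 j) e) := by
            refine Finset.sum_congr rfl fun i _ => Finset.sum_congr rfl fun r _ =>
              Finset.sum_congr rfl fun j _ => ?_
            rw [fact2, fact2, htwist']
      _ = ∑ i ∈ s, ∑ r ∈ rep k (h2 i), ∑ y ∈ rep k r.1, ∑ j ∈ t, ∑ m ∈ rep k (l1 j),
              e * β (h1 i) e * (u y.1 m.1 * β (y.2 * m.2) a)
                * (e * β (r.2 * l2 j) e) := by
            exact Finset.sum_congr rfl fun i _ => Finset.sum_congr rfl fun r _ =>
              Finset.sum_comm
      _ = ∑ i ∈ s, ∑ r ∈ rep k (h2 i), ∑ y ∈ rep k r.2, ∑ j ∈ t, ∑ m ∈ rep k (l1 j),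
              e * β (h1 i) e * u r.1 m.1
                * (β (y.1 * m.2) a * (e * β (y.2 * l2 j) e)) := by
            refine Finset.sum_congr rfl fun i _ => ?_
            have h0 := renest k (∑ j ∈ t, ∑ m ∈ rep k (l1 j),
                tri k (e * β (h1 i) e) (u.flip m.1)
                  (β.flip a ∘ₗ LinearMap.mulRight k m.2)
                  (LinearMap.mulLeft k e ∘ₗ β.flip e ∘ₗ LinearMap.mulRight k (l2 j)) 1)
                (rep_spec k (h2 i))
            simpa only [LinearMap.coe_sum, Finset.sum_apply, tri_apply,
              LinearMap.coe_comp, Function.comp_apply, LinearMap.mulLeft_apply,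
              LinearMap.mulRight_apply, LinearMap.flip_apply, mul_one,
              mul_assoc] using h0
      _ = ∑ i ∈ s, ∑ r ∈ rep k (h2 i), ∑ y ∈ rep k r.2, ∑ j ∈ t, ∑ m ∈ rep k (l2 j),
              e * β (h1 i) e * u r.1 (l1 j)
                * (β (y.1 * m.1) a * (e * β (y.2 * m.2) e)) := by
            refine Finset.sum_congr rfl fun i _ => Finset.sum_congr rfl fun r _ =>
              Finset.sum_congr rfl fun y _ => ?_
            have h0 := renest k (tri k (e * β (h1 i) e) (u r.1)
                (β.flip a ∘ₗ LinearMap.mulLeft k y.1)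
                (LinearMap.mulLeft k e ∘ₗ β.flip e ∘ₗ LinearMap.mulLeft k y.2) 1) ht
            simpa only [tri_apply, LinearMap.coe_comp, Function.comp_apply,
              LinearMap.mulLeft_apply, LinearMap.flip_apply, mul_one,
              mul_assoc] using h0
      _ = ∑ i ∈ s, ∑ r ∈ rep k (h2 i), ∑ j ∈ t, ∑ y ∈ rep k r.2, ∑ m ∈ rep k (l2 j),
              e * β (h1 i) e * u r.1 (l1 j)
                * (β (y.1 * m.1) a * (e * β (y.2 * m.2) e)) := by
            exact Finset.sum_congr rfl fun i _ => Finset.sum_congr rfl fun r _ =>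
              Finset.sum_comm
      _ = ∑ i ∈ s, ∑ r ∈ rep k (h2 i), ∑ j ∈ t,
              e * β (h1 i) e * u r.1 (l1 j) * (e * β (r.2 * l2 j) a) := by
            refine Finset.sum_congr rfl fun i _ => Finset.sum_congr rfl fun r _ =>
              Finset.sum_congr rfl fun j _ => ?_
            rw [fact2l, hmerge2, ← he_central a, ha]
  · intro h l ι κ s t h1 h2 l1 l2 hs ht
    rw [key e he_idem h l ι κ s t h1 h2 l1 l2 hs ht]
    exact hW h l ι (H × H) κ s (fun i => rep k (h2 i)) t h1 h2
      (fun _ q => q.1) (fun _ q => q.2) l1 l2 hs (fun i _ => rep_spec k (h2 i)) ht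
end

section
/- Let G be a finite group, L a cocommutative Hopf algebra over a field k which is a left kG-module algebra, and H = L ⋊ kG the smash product Hopf algebra. Suppose given a left partial action of H on a k-algebra A, and let γ: G × G → kˣ be a normalized 2-cocycle (γ(x,y)γ(xy,z) = γ(x,yz)γ(y,z) and γ(g,1) = γ(1,g) = 1). Define ω: H ⊗ H → A on elements h = l ⊗ g, m = l' ⊗ s by ω(h, m) = γ(g,s)(h·(m·1_A)). Then (·, ω) is a twisted partial action of H on A satisfying additionally ω(h,1_H) = ω(1_H,h) = h·1_A and the cocycle identity Σ(h₍₁₎·ω(l₍₁₎,m₍₁₎))ω(h₍₂₎,l₍₂₎m₍₂₎) = Σω(h₍₁₎,l₍₁₎)ω(h₍₂₎l₍₂₎,m). -/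
open TensorProduct

noncomputable section

noncomputable section Aux

section Pack
variable {k : Type} [Field k] {M P : Type} [AddCommGroup M] [Module k M]
  [AddCommGroup P] [Module k P]

def P2 (D : M →ₗ[k] M ⊗[k] M) (Φ : (M ⊗[k] M) ⊗[k] (M ⊗[k] M) →ₗ[k] P) :
    M →ₗ[k] M →ₗ[k] P :=
  ((TensorProduct.curry Φ) ∘ₗ D).compl₂ D

lemma P2_eq_sum (D : M →ₗ[k] M ⊗[k] M) (Φ : (M ⊗[k] M) ⊗[k] (M ⊗[k] M) →ₗ[k] P)
    {h l : M} {ι κ : Type} {s : Finset ι} {t : Finset κ} {h1 h2 : ι → M} {l1 l2 : κ → M}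
    (hh : D h = ∑ i ∈ s, h1 i ⊗ₜ[k] h2 i) (hl : D l = ∑ j ∈ t, l1 j ⊗ₜ[k] l2 j) :
    P2 D Φ h l = ∑ i ∈ s, ∑ j ∈ t, Φ ((h1 i ⊗ₜ[k] h2 i) ⊗ₜ[k] (l1 j ⊗ₜ[k] l2 j)) := by
  simp only [P2, LinearMap.compl₂_apply, LinearMap.comp_apply, hh, hl, map_sum,
    LinearMap.sum_apply, TensorProduct.curry_apply]
  exact Finset.sum_comm

def P3 (D : M →ₗ[k] M ⊗[k] M)
    (Φ : ((M ⊗[k] M) ⊗[k] (M ⊗[k] M)) ⊗[k] (M ⊗[k] M) →ₗ[k] P) :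
    M →ₗ[k] M →ₗ[k] M →ₗ[k] P :=
  (((TensorProduct.curry (TensorProduct.curry Φ)) ∘ₗ D).compl₂ D).compr₂
    (LinearMap.lcomp k P D)

lemma P3_eq_sum (D : M →ₗ[k] M ⊗[k] M)
    (Φ : ((M ⊗[k] M) ⊗[k] (M ⊗[k] M)) ⊗[k] (M ⊗[k] M) →ₗ[k] P)
    {h l m : M} {ι κ ν : Type} {s : Finset ι} {t : Finset κ} {r : Finset ν}
    {h1 h2 : ι → M} {l1 l2 : κ → M} {m1 m2 : ν → M}
    (hh : D h = ∑ i ∈ s, h1 i ⊗ₜ[k] h2 i) (hl : D l = ∑ j ∈ t, l1 j ⊗ₜ[k] l2 j)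
    (hm : D m = ∑ p ∈ r, m1 p ⊗ₜ[k] m2 p) :
    P3 D Φ h l m = ∑ i ∈ s, ∑ j ∈ t, ∑ p ∈ r,
      Φ (((h1 i ⊗ₜ[k] h2 i) ⊗ₜ[k] (l1 j ⊗ₜ[k] l2 j)) ⊗ₜ[k] (m1 p ⊗ₜ[k] m2 p)) := by
  simp only [P3, LinearMap.compr₂_apply, LinearMap.compl₂_apply, LinearMap.comp_apply,
    LinearMap.lcomp_apply, hh, hl, hm, map_sum, LinearMap.sum_apply,
    TensorProduct.curry_apply]
  exact Finset.sum_comm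

def P2m (D : M →ₗ[k] M ⊗[k] M)
    (Φ : ((M ⊗[k] M) ⊗[k] (M ⊗[k] M)) ⊗[k] M →ₗ[k] P) :
    M →ₗ[k] M →ₗ[k] M →ₗ[k] P :=
  ((TensorProduct.curry (TensorProduct.curry Φ)) ∘ₗ D).compl₂ D

lemma P2m_eq_sum (D : M →ₗ[k] M ⊗[k] M)
    (Φ : ((M ⊗[k] M) ⊗[k] (M ⊗[k] M)) ⊗[k] M →ₗ[k] P)
    {h l : M} (m : M) {ι κ : Type} {s : Finset ι} {t : Finset κ}
    {h1 h2 : ι → M} {l1 l2 : κ → M}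
    (hh : D h = ∑ i ∈ s, h1 i ⊗ₜ[k] h2 i) (hl : D l = ∑ j ∈ t, l1 j ⊗ₜ[k] l2 j) :
    P2m D Φ h l m = ∑ i ∈ s, ∑ j ∈ t,
      Φ (((h1 i ⊗ₜ[k] h2 i) ⊗ₜ[k] (l1 j ⊗ₜ[k] l2 j)) ⊗ₜ[k] m) := by
  simp only [P2m, LinearMap.compl₂_apply, LinearMap.comp_apply, hh, hl, map_sum,
    LinearMap.sum_apply, TensorProduct.curry_apply]
  exact Finset.sum_comm

lemma ext_on₂ {s : Set M} (hs : Submodule.span k s = ⊤) {F G : M →ₗ[k] M →ₗ[k] P}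
    (h : ∀ x ∈ s, ∀ y ∈ s, F x y = G x y) : F = G :=
  LinearMap.ext_on hs fun x hx => LinearMap.ext_on hs (h x hx)

lemma ext_on₃ {s : Set M} (hs : Submodule.span k s = ⊤) {F G : M →ₗ[k] M →ₗ[k] M →ₗ[k] P}
    (h : ∀ x ∈ s, ∀ y ∈ s, ∀ z ∈ s, F x y z = G x y z) : F = G :=
  LinearMap.ext_on hs fun x hx => ext_on₂ hs (h x hx)

end Pack

section Maps
variable {k : Type} [Field k] {H A : Type} [Ring H] [Algebra k H]
  [Ring A] [Algebra k A]
  (act : H →ₗ[k] A →ₗ[k] A) (W : H →ₗ[k] H →ₗ[k] A)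

/-- `x ⊗ u ↦ act x (act u a)` -/
def Bact (a : A) : H ⊗[k] H →ₗ[k] A :=
  TensorProduct.lift (act.compl₂ (act.flip a))

@[simp] lemma Bact_tmul (a : A) (x u : H) : Bact act a (x ⊗ₜ[k] u) = act x (act u a) := by
  simp [Bact]

/-- `x ⊗ u ↦ W x u` -/
def BW : H ⊗[k] H →ₗ[k] A := TensorProduct.lift W

@[simp] lemma BW_tmul (x u : H) : BW W (x ⊗ₜ[k] u) = W x u := by simp [BW]

/-- `y ⊗ v ↦ act (y*v) a` -/
def Bmulact (a : A) : H ⊗[k] H →ₗ[k] A :=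
  TensorProduct.lift ((LinearMap.mul k H).compr₂ (act.flip a))

@[simp] lemma Bmulact_tmul (a : A) (y v : H) :
    Bmulact act a (y ⊗ₜ[k] v) = act (y * v) a := by simp [Bmulact]

/-- `(x ⊗ u) ⊗ p ↦ act x (W u p)` -/
def BactW : (H ⊗[k] H) ⊗[k] H →ₗ[k] A :=
  TensorProduct.lift (TensorProduct.lift
    (((LinearMap.llcomp k H A A).comp act).compl₂ W))

@[simp] lemma BactW_tmul (x u p : H) :
    BactW act W ((x ⊗ₜ[k] u) ⊗ₜ[k] p) = act x (W u p) := by simp [BactW]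

/-- `(y ⊗ v) ⊗ q ↦ W y (v*q)` -/
def BWmul : (H ⊗[k] H) ⊗[k] H →ₗ[k] A :=
  TensorProduct.lift (TensorProduct.lift
    (((LinearMap.llcomp k H H A).comp W).compl₂ (LinearMap.mul k H)))

@[simp] lemma BWmul_tmul (y v q : H) :
    BWmul W ((y ⊗ₜ[k] v) ⊗ₜ[k] q) = W y (v * q) := by simp [BWmul]

/-- `(x⊗y)⊗(u⊗v) ↦ act x (act u a) * W y v` -/
def Phi1L (a : A) : (H ⊗[k] H) ⊗[k] (H ⊗[k] H) →ₗ[k] A :=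
  (LinearMap.mul' k A) ∘ₗ TensorProduct.map (Bact act a) (BW W) ∘ₗ
    (TensorProduct.tensorTensorTensorComm k H H H H).toLinearMap

@[simp] lemma Phi1L_tmul (a : A) (x y u v : H) :
    Phi1L act W a ((x ⊗ₜ[k] y) ⊗ₜ[k] (u ⊗ₜ[k] v)) = act x (act u a) * W y v := by
  simp [Phi1L]

/-- `(x⊗y)⊗(u⊗v) ↦ W x u * act (y*v) a` -/
def Phi1R (a : A) : (H ⊗[k] H) ⊗[k] (H ⊗[k] H) →ₗ[k] A :=
  (LinearMap.mul' k A) ∘ₗ TensorProduct.map (BW W) (Bmulact act a) ∘ₗ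
    (TensorProduct.tensorTensorTensorComm k H H H H).toLinearMap

@[simp] lemma Phi1R_tmul (a : A) (x y u v : H) :
    Phi1R act W a ((x ⊗ₜ[k] y) ⊗ₜ[k] (u ⊗ₜ[k] v)) = W x u * act (y * v) a := by
  simp [Phi1R]

/-- `((x⊗y)⊗(u⊗v))⊗(p⊗q) ↦ act x (W u p) * W y (v*q)` -/
def Phi3L : ((H ⊗[k] H) ⊗[k] (H ⊗[k] H)) ⊗[k] (H ⊗[k] H) →ₗ[k] A :=
  (LinearMap.mul' k A) ∘ₗ TensorProduct.map (BactW act W) (BWmul W) ∘ₗ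
    (TensorProduct.tensorTensorTensorComm k (H ⊗[k] H) (H ⊗[k] H) H H).toLinearMap ∘ₗ
    TensorProduct.map (TensorProduct.tensorTensorTensorComm k H H H H).toLinearMap
      LinearMap.id

@[simp] lemma Phi3L_tmul (x y u v p q : H) :
    Phi3L act W (((x ⊗ₜ[k] y) ⊗ₜ[k] (u ⊗ₜ[k] v)) ⊗ₜ[k] (p ⊗ₜ[k] q)) =
      act x (W u p) * W y (v * q) := by
  simp [Phi3L]

/-- `(y ⊗ v) ⊗ m ↦ W (y*v) m` -/
def BmulW : (H ⊗[k] H) ⊗[k] H →ₗ[k] A :=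
  TensorProduct.lift (W ∘ₗ LinearMap.mul' k H)

@[simp] lemma BmulW_tmul (y v m : H) :
    BmulW W ((y ⊗ₜ[k] v) ⊗ₜ[k] m) = W (y * v) m := by simp [BmulW]

/-- `((x⊗y)⊗(u⊗v))⊗m ↦ W x u * W (y*v) m` -/
def Phi3R : ((H ⊗[k] H) ⊗[k] (H ⊗[k] H)) ⊗[k] H →ₗ[k] A :=
  (LinearMap.mul' k A) ∘ₗ TensorProduct.map (BW W) (BmulW W) ∘ₗ
    (TensorProduct.assoc k (H ⊗[k] H) (H ⊗[k] H) H).toLinearMap ∘ₗ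
    TensorProduct.map (TensorProduct.tensorTensorTensorComm k H H H H).toLinearMap
      LinearMap.id

@[simp] lemma Phi3R_tmul (x y u v m : H) :
    Phi3R W (((x ⊗ₜ[k] y) ⊗ₜ[k] (u ⊗ₜ[k] v)) ⊗ₜ[k] m) = W x u * W (y * v) m := by
  simp [Phi3R]

end Maps
end Aux

set_option maxHeartbeats 1000000 in
/-- Proposition 3.2: let `G` be a finite group, `L` a cocommutative Hopf
algebra over a field `k` which is a left `kG`-module algebra (via
`φ : G →* (L →ₐ L)`), and let `H = L ⋊ kG` be the smash product Hopf algebra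
(presented abstractly via the spanning family `j g l` representing `l ⊗ g`,
with `Δ(l ⊗ g) = Σ (l₁ ⊗ g) ⊗ (l₂ ⊗ g)`).  Given a left partial action of
`H` on a `k`-algebra `A` and a normalized 2-cocycle `γ : G × G → kˣ`, the map
`ω(l ⊗ g, l' ⊗ s) = γ(g,s)·((l⊗g)·((l'⊗s)·1_A))` turns the partial action
into a twisted partial action satisfying in addition the normalization (8)
and the cocycle identity (9). -/
theorem smashProduct_groupCocycle_twists
    {k : Type} [Field k] {L : Type} [Ring L] [HopfAlgebra k L]
    {G : Type} [Group G] [Fintype G]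
    (hLcocomm : ∀ x : L, (TensorProduct.comm k L L)
      (Coalgebra.comul (R := k) x) = Coalgebra.comul (R := k) x)
    (φ : G →* (L →ₐ[k] L))
    {H : Type} [Ring H] [HopfAlgebra k H]
    (j : G → L →ₗ[k] H)
    (hspan : Submodule.span k {x : H | ∃ g l, j g l = x} = ⊤)
    (hj_one : j 1 1 = 1)
    (hj_mul : ∀ (g s : G) (l l' : L), (j g l) * (j s l') = j (g * s) (l * φ g l'))
    (hj_comul : ∀ (g : G) (l : L) (ι : Type) (s : Finset ι) (l1 l2 : ι → L),
      Coalgebra.comul (R := k) l = ∑ i ∈ s, l1 i ⊗ₜ[k] l2 i →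
      Coalgebra.comul (R := k) (j g l) = ∑ i ∈ s, (j g (l1 i)) ⊗ₜ[k] (j g (l2 i)))
    {A : Type} [Ring A] [Algebra k A]
    (act : H →ₗ[k] A →ₗ[k] A)
    (hact_one : ∀ a : A, act 1 a = a)
    (hact_mul : ∀ (h : H) (a b : A) (ι : Type) (s : Finset ι) (h1 h2 : ι → H),
      Coalgebra.comul (R := k) h = ∑ i ∈ s, h1 i ⊗ₜ[k] h2 i →
      act h (a * b) = ∑ i ∈ s, act (h1 i) a * act (h2 i) b)
    (hact_partial : ∀ (h l : H) (a : A) (ι : Type) (s : Finset ι)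
      (h1 h2 : ι → H),
      Coalgebra.comul (R := k) h = ∑ i ∈ s, h1 i ⊗ₜ[k] h2 i →
      act h (act l a) = ∑ i ∈ s, act (h1 i) 1 * act (h2 i * l) a)
    (γ : G → G → kˣ)
    (hγ_cocycle : ∀ x y z : G, γ x y * γ (x * y) z = γ x (y * z) * γ y z)
    (hγ_norm₁ : ∀ g : G, γ g 1 = 1) (hγ_norm₂ : ∀ g : G, γ 1 g = 1)
    (W : H →ₗ[k] H →ₗ[k] A)
    (hW : ∀ (g s : G) (l l' : L),
      W (j g l) (j s l') = (γ g s : k) • act (j g l) (act (j s l') 1)) :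
    -- the pair `(act, W)` is a twisted partial action …
    ((∀ (h l : H) (a : A) (ι κ : Type) (s : Finset ι) (t : Finset κ)
        (h1 h2 : ι → H) (l1 l2 : κ → H),
        Coalgebra.comul (R := k) h = ∑ i ∈ s, h1 i ⊗ₜ[k] h2 i →
        Coalgebra.comul (R := k) l = ∑ j ∈ t, l1 j ⊗ₜ[k] l2 j →
        ∑ i ∈ s, ∑ j ∈ t, act (h1 i) (act (l1 j) a) * W (h2 i) (l2 j) =
          ∑ i ∈ s, ∑ j ∈ t, W (h1 i) (l1 j) * act (h2 i * l2 j) a) ∧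
      (∀ (h l : H) (ι κ : Type) (s : Finset ι) (t : Finset κ)
        (h1 h2 : ι → H) (l1 l2 : κ → H),
        Coalgebra.comul (R := k) h = ∑ i ∈ s, h1 i ⊗ₜ[k] h2 i →
        Coalgebra.comul (R := k) l = ∑ j ∈ t, l1 j ⊗ₜ[k] l2 j →
        W h l = ∑ i ∈ s, ∑ j ∈ t, W (h1 i) (l1 j) * act (h2 i * l2 j) 1)) ∧
    -- … satisfying the normalization (8) …
    (∀ h : H, W h 1 = act h 1 ∧ W 1 h = act h 1) ∧
    -- … and the cocycle identity (9)
    (∀ (h l m : H) (ι κ ν : Type) (s : Finset ι) (t : Finset κ)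
      (r : Finset ν) (h1 h2 : ι → H) (l1 l2 : κ → H) (m1 m2 : ν → H),
      Coalgebra.comul (R := k) h = ∑ i ∈ s, h1 i ⊗ₜ[k] h2 i →
      Coalgebra.comul (R := k) l = ∑ j ∈ t, l1 j ⊗ₜ[k] l2 j →
      Coalgebra.comul (R := k) m = ∑ p ∈ r, m1 p ⊗ₜ[k] m2 p →
      ∑ i ∈ s, ∑ j ∈ t, ∑ p ∈ r,
          act (h1 i) (W (l1 j) (m1 p)) * W (h2 i) (l2 j * m2 p) =
        ∑ i ∈ s, ∑ j ∈ t, W (h1 i) (l1 j) * W (h2 i * l2 j) m) := by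
  classical
  choose cH hcH using fun x : H => TensorProduct.exists_finset (Coalgebra.comul (R := k) x)
  choose cL hcL using fun x : L => TensorProduct.exists_finset (Coalgebra.comul (R := k) x)
  have hgen : ∀ (g : G) (x : L), Coalgebra.comul (R := k) (j g x) =
      ∑ p ∈ cL x, j g p.1 ⊗ₜ[k] j g p.2 := fun g x =>
    hj_comul g x _ (cL x) (fun p => p.1) (fun p => p.2) (hcL x)
  -- Claim A : h·(l·a) = Σ (h₁·(l₁·1)) ((h₂l₂)·a)
  have claimA : ∀ (h l : H) (a : A) (ι κ : Type) (s : Finset ι) (t : Finset κ)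
      (h1 h2 : ι → H) (l1 l2 : κ → H),
      Coalgebra.comul (R := k) h = ∑ i ∈ s, h1 i ⊗ₜ[k] h2 i →
      Coalgebra.comul (R := k) l = ∑ jj ∈ t, l1 jj ⊗ₜ[k] l2 jj →
      act h (act l a) =
        ∑ i ∈ s, ∑ jj ∈ t, act (h1 i) (act (l1 jj) 1) * act (h2 i * l2 jj) a := by
    intro h l a ι κ s t h1 h2 l1 l2 hh hl
    have e1 : act l a = ∑ jj ∈ t, act (l1 jj) 1 * act (l2 jj) a := by
      have := hact_mul l 1 a κ t l1 l2 hl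
      rwa [one_mul] at this
    have coas : ∑ i ∈ s, ∑ p ∈ cH (h2 i), h1 i ⊗ₜ[k] (p.1 ⊗ₜ[k] p.2) =
        ∑ i ∈ s, ∑ q ∈ cH (h1 i), q.1 ⊗ₜ[k] (q.2 ⊗ₜ[k] h2 i) := by
      have hco := Coalgebra.coassoc_apply (R := k) h
      rw [hh] at hco
      simp only [map_sum, LinearMap.rTensor_tmul, LinearMap.lTensor_tmul, hcH,
        sum_tmul, tmul_sum, assoc_tmul] at hco
      exact hco.symm
    have key : ∀ jj ∈ t,
        (∑ i ∈ s, act (h1 i) (act (l1 jj) 1) * act (h2 i) (act (l2 jj) a))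
        = ∑ i ∈ s, act (h1 i) (act (l1 jj) 1) * act (h2 i * l2 jj) a := by
      intro jj _
      have tc := congrArg (⇑((LinearMap.mul' k A) ∘ₗ
        TensorProduct.map (act.flip (act (l1 jj) 1))
        ((LinearMap.mul' k A) ∘ₗ TensorProduct.map (act.flip (1 : A))
          ((act.flip a) ∘ₗ LinearMap.mulRight k (l2 jj))))) coas
      simp only [map_sum, LinearMap.comp_apply, TensorProduct.map_tmul,
        LinearMap.mul'_apply, LinearMap.flip_apply, LinearMap.mulRight_apply] at tc
      calc (∑ i ∈ s, act (h1 i) (act (l1 jj) 1) * act (h2 i) (act (l2 jj) a))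
          = ∑ i ∈ s, ∑ p ∈ cH (h2 i),
              act (h1 i) (act (l1 jj) 1) * (act p.1 1 * act (p.2 * l2 jj) a) := by
            refine Finset.sum_congr rfl fun i _ => ?_
            rw [hact_partial (h2 i) (l2 jj) a _ (cH (h2 i)) (fun p => p.1)
              (fun p => p.2) (hcH (h2 i)), Finset.mul_sum]
        _ = ∑ i ∈ s, ∑ q ∈ cH (h1 i),
              act q.1 (act (l1 jj) 1) * (act q.2 1 * act (h2 i * l2 jj) a) := tc
        _ = ∑ i ∈ s, act (h1 i) (act (l1 jj) 1) * act (h2 i * l2 jj) a := by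
            refine Finset.sum_congr rfl fun i _ => ?_
            have e3 : act (h1 i) (act (l1 jj) 1)
                = ∑ q ∈ cH (h1 i), act q.1 (act (l1 jj) 1) * act q.2 1 := by
              have := hact_mul (h1 i) (act (l1 jj) 1) 1 _ (cH (h1 i)) (fun p => p.1)
                (fun p => p.2) (hcH (h1 i))
              rwa [mul_one] at this
            rw [e3, Finset.sum_mul]
            exact Finset.sum_congr rfl fun q _ => by rw [mul_assoc]
    calc act h (act l a) = ∑ jj ∈ t, act h (act (l1 jj) 1 * act (l2 jj) a) := by
          rw [e1, map_sum]
      _ = ∑ jj ∈ t, ∑ i ∈ s, act (h1 i) (act (l1 jj) 1) * act (h2 i) (act (l2 jj) a) :=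
          Finset.sum_congr rfl fun jj _ => hact_mul h _ _ ι s h1 h2 hh
      _ = ∑ jj ∈ t, ∑ i ∈ s, act (h1 i) (act (l1 jj) 1) * act (h2 i * l2 jj) a :=
          Finset.sum_congr rfl key
      _ = ∑ i ∈ s, ∑ jj ∈ t, act (h1 i) (act (l1 jj) 1) * act (h2 i * l2 jj) a :=
          Finset.sum_comm
  have claimAgen : ∀ (g s' : G) (x y : L) (a : A),
      act (j g x) (act (j s' y) a) =
        ∑ p ∈ cL x, ∑ q ∈ cL y,
          act (j g p.1) (act (j s' q.1) 1) * act (j g p.2 * j s' q.2) a :=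
    fun g s' x y a => claimA _ _ a _ _ (cL x) (cL y) _ _ _ _ (hgen g x) (hgen s' y)
  have key1 : ∀ (g s' : G) (x y : L) (a : A),
      act (j g x) (act (j s' y) a) =
        ∑ p ∈ cL x, ∑ q ∈ cL y,
          act (j g p.1) (act (j s' q.1) a) * act (j g p.2) (act (j s' q.2) 1) := by
    intro g s' x y a
    have e1 : act (j s' y) a = ∑ q ∈ cL y, act (j s' q.1) a * act (j s' q.2) 1 := by
      have := hact_mul (j s' y) a 1 _ (cL y) _ _ (hgen s' y)
      rwa [mul_one] at this
    calc act (j g x) (act (j s' y) a)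
        = ∑ q ∈ cL y, act (j g x) (act (j s' q.1) a * act (j s' q.2) 1) := by
          rw [e1, map_sum]
      _ = ∑ q ∈ cL y, ∑ p ∈ cL x,
            act (j g p.1) (act (j s' q.1) a) * act (j g p.2) (act (j s' q.2) 1) :=
          Finset.sum_congr rfl fun q _ => hact_mul (j g x) _ _ _ (cL x) _ _ (hgen g x)
      _ = _ := Finset.sum_comm
  refine ⟨⟨?_, ?_⟩, ?_, ?_⟩
  · -- Goal 1
    intro h l a ι κ s t h1 h2 l1 l2 hh hl
    have eL : (∑ i ∈ s, ∑ jj ∈ t, act (h1 i) (act (l1 jj) a) * W (h2 i) (l2 jj))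
        = P2 Coalgebra.comul (Phi1L act W a) h l := by
      rw [P2_eq_sum Coalgebra.comul (Phi1L act W a) hh hl]; simp
    have eR : (∑ i ∈ s, ∑ jj ∈ t, W (h1 i) (l1 jj) * act (h2 i * l2 jj) a)
        = P2 Coalgebra.comul (Phi1R act W a) h l := by
      rw [P2_eq_sum Coalgebra.comul (Phi1R act W a) hh hl]; simp
    rw [eL, eR]
    have hmaps : P2 (Coalgebra.comul (R := k)) (Phi1L act W a)
        = P2 Coalgebra.comul (Phi1R act W a) := by
      refine ext_on₂ hspan ?_
      rintro x ⟨g, xL, rfl⟩ y ⟨s', yL, rfl⟩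
      rw [P2_eq_sum Coalgebra.comul (Phi1L act W a) (hgen g xL) (hgen s' yL),
        P2_eq_sum Coalgebra.comul (Phi1R act W a) (hgen g xL) (hgen s' yL)]
      simp only [Phi1L_tmul, Phi1R_tmul]
      calc ∑ p ∈ cL xL, ∑ q ∈ cL yL,
            act (j g p.1) (act (j s' q.1) a) * W (j g p.2) (j s' q.2)
          = (γ g s' : k) • ∑ p ∈ cL xL, ∑ q ∈ cL yL,
              act (j g p.1) (act (j s' q.1) a) * act (j g p.2) (act (j s' q.2) 1) := by
            rw [Finset.smul_sum]
            refine Finset.sum_congr rfl fun p _ => ?_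
            rw [Finset.smul_sum]
            refine Finset.sum_congr rfl fun q _ => ?_
            rw [hW, mul_smul_comm]
        _ = (γ g s' : k) • act (j g xL) (act (j s' yL) a) := by rw [← key1]
        _ = ∑ p ∈ cL xL, ∑ q ∈ cL yL,
              W (j g p.1) (j s' q.1) * act (j g p.2 * j s' q.2) a := by
            rw [claimAgen g s' xL yL a, Finset.smul_sum]
            refine Finset.sum_congr rfl fun p _ => ?_
            rw [Finset.smul_sum]
            refine Finset.sum_congr rfl fun q _ => ?_
            rw [hW, smul_mul_assoc]
    exact LinearMap.congr_fun (LinearMap.congr_fun hmaps h) l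
  · -- Goal 2
    intro h l ι κ s t h1 h2 l1 l2 hh hl
    have eR : (∑ i ∈ s, ∑ jj ∈ t, W (h1 i) (l1 jj) * act (h2 i * l2 jj) 1)
        = P2 Coalgebra.comul (Phi1R act W 1) h l := by
      rw [P2_eq_sum Coalgebra.comul (Phi1R act W 1) hh hl]; simp
    rw [eR]
    have hmaps : W = P2 (Coalgebra.comul (R := k)) (Phi1R act W (1 : A)) := by
      refine ext_on₂ hspan ?_
      rintro x ⟨g, xL, rfl⟩ y ⟨s', yL, rfl⟩
      rw [P2_eq_sum Coalgebra.comul (Phi1R act W 1) (hgen g xL) (hgen s' yL)]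
      simp only [Phi1R_tmul]
      rw [hW, claimAgen g s' xL yL 1, Finset.smul_sum]
      refine Finset.sum_congr rfl fun p _ => ?_
      rw [Finset.smul_sum]
      refine Finset.sum_congr rfl fun q _ => ?_
      rw [hW, smul_mul_assoc]
    exact LinearMap.congr_fun (LinearMap.congr_fun hmaps h) l
  · -- normalization
    have n1 : W.flip (1 : H) = act.flip (1 : A) := by
      refine LinearMap.ext_on hspan ?_
      rintro x ⟨g, xL, rfl⟩
      simp only [LinearMap.flip_apply]
      rw [← hj_one, hW, hj_one, hγ_norm₁]
      simp [hact_one]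
    have n2 : W (1 : H) = act.flip (1 : A) := by
      refine LinearMap.ext_on hspan ?_
      rintro x ⟨g, xL, rfl⟩
      rw [← hj_one, hW, hj_one, hγ_norm₂]
      simp [hact_one]
    intro h
    constructor
    · have := LinearMap.congr_fun n1 h; simpa using this
    · have := LinearMap.congr_fun n2 h; simpa using this
  · -- Goal 3
    intro h l m ι κ ν s t r h1 h2 l1 l2 m1 m2 hh hl hm
    have eL : (∑ i ∈ s, ∑ jj ∈ t, ∑ p ∈ r,
          act (h1 i) (W (l1 jj) (m1 p)) * W (h2 i) (l2 jj * m2 p))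
        = P3 Coalgebra.comul (Phi3L act W) h l m := by
      rw [P3_eq_sum Coalgebra.comul (Phi3L act W) hh hl hm]; simp
    have eR : (∑ i ∈ s, ∑ jj ∈ t, W (h1 i) (l1 jj) * W (h2 i * l2 jj) m)
        = P2m Coalgebra.comul (Phi3R W) h l m := by
      rw [P2m_eq_sum Coalgebra.comul (Phi3R W) m hh hl]; simp
    rw [eL, eR]
    have hmaps : P3 (Coalgebra.comul (R := k)) (Phi3L act W)
        = P2m Coalgebra.comul (Phi3R W) := by
      refine ext_on₃ hspan ?_
      rintro x ⟨g, xL, rfl⟩ y ⟨s', yL, rfl⟩ z ⟨t', zL, rfl⟩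
      rw [P3_eq_sum Coalgebra.comul (Phi3L act W) (hgen g xL) (hgen s' yL) (hgen t' zL),
        P2m_eq_sum Coalgebra.comul (Phi3R W) (j t' zL) (hgen g xL) (hgen s' yL)]
      simp only [Phi3L_tmul, Phi3R_tmul]
      have hsc : ((γ s' t' : k) * (γ g (s' * t') : k))
          = (γ g s' : k) * (γ (g * s') t' : k) := by
        rw [mul_comm]
        exact_mod_cast (congrArg Units.val (hγ_cocycle g s' t')).symm
      have Lsum : (∑ p ∈ cL xL, ∑ q ∈ cL yL, ∑ rr ∈ cL zL,
            act (j g p.1) (W (j s' q.1) (j t' rr.1)) * W (j g p.2) (j s' q.2 * j t' rr.2))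
          = ((γ s' t' : k) * (γ g (s' * t') : k)) •
              act (j g xL) (act (j s' yL) (act (j t' zL) 1)) := by
        calc (∑ p ∈ cL xL, ∑ q ∈ cL yL, ∑ rr ∈ cL zL,
              act (j g p.1) (W (j s' q.1) (j t' rr.1)) * W (j g p.2) (j s' q.2 * j t' rr.2))
            = ∑ p ∈ cL xL, ∑ q ∈ cL yL, ∑ rr ∈ cL zL,
                ((γ s' t' : k) * (γ g (s' * t') : k)) •
                (act (j g p.1) (act (j s' q.1) (act (j t' rr.1) 1)) *
                  act (j g p.2) (act (j s' q.2 * j t' rr.2) 1)) := by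
              refine Finset.sum_congr rfl fun p _ => ?_
              refine Finset.sum_congr rfl fun q _ => ?_
              refine Finset.sum_congr rfl fun rr _ => ?_
              rw [hW s' t' q.1 rr.1, map_smul, hj_mul s' t' q.2 rr.2,
                hW g (s' * t') p.2 _, ← hj_mul s' t' q.2 rr.2, smul_mul_assoc,
                mul_smul_comm, smul_smul]
          _ = ((γ s' t' : k) * (γ g (s' * t') : k)) • ∑ p ∈ cL xL, ∑ q ∈ cL yL, ∑ rr ∈ cL zL,
                (act (j g p.1) (act (j s' q.1) (act (j t' rr.1) 1)) *
                  act (j g p.2) (act (j s' q.2 * j t' rr.2) 1)) := by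
              simp only [← Finset.smul_sum]
          _ = ((γ s' t' : k) * (γ g (s' * t') : k)) •
              act (j g xL) (act (j s' yL) (act (j t' zL) 1)) := by
              congr 1
              calc (∑ p ∈ cL xL, ∑ q ∈ cL yL, ∑ rr ∈ cL zL,
                    act (j g p.1) (act (j s' q.1) (act (j t' rr.1) 1)) *
                      act (j g p.2) (act (j s' q.2 * j t' rr.2) 1))
                  = ∑ q ∈ cL yL, ∑ rr ∈ cL zL, ∑ p ∈ cL xL,
                      act (j g p.1) (act (j s' q.1) (act (j t' rr.1) 1)) *
                        act (j g p.2) (act (j s' q.2 * j t' rr.2) 1) := by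
                    rw [Finset.sum_comm]
                    exact Finset.sum_congr rfl fun q _ => Finset.sum_comm
                _ = ∑ q ∈ cL yL, ∑ rr ∈ cL zL,
                      act (j g xL) (act (j s' q.1) (act (j t' rr.1) 1) *
                        act (j s' q.2 * j t' rr.2) 1) := by
                    refine Finset.sum_congr rfl fun q _ => ?_
                    refine Finset.sum_congr rfl fun rr _ => ?_
                    exact (hact_mul (j g xL) _ _ _ (cL xL) _ _ (hgen g xL)).symm
                _ = act (j g xL) (∑ q ∈ cL yL, ∑ rr ∈ cL zL,
                      act (j s' q.1) (act (j t' rr.1) 1) * act (j s' q.2 * j t' rr.2) 1) := by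
                    rw [map_sum]
                    exact Finset.sum_congr rfl fun q _ => (map_sum _ _ _).symm
                _ = act (j g xL) (act (j s' yL) (act (j t' zL) 1)) := by
                    rw [← claimAgen s' t' yL zL 1]
      have Rsum : (∑ p ∈ cL xL, ∑ q ∈ cL yL,
            W (j g p.1) (j s' q.1) * W (j g p.2 * j s' q.2) (j t' zL))
          = ((γ g s' : k) * (γ (g * s') t' : k)) •
              act (j g xL) (act (j s' yL) (act (j t' zL) 1)) := by
        calc (∑ p ∈ cL xL, ∑ q ∈ cL yL,
              W (j g p.1) (j s' q.1) * W (j g p.2 * j s' q.2) (j t' zL))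
            = ∑ p ∈ cL xL, ∑ q ∈ cL yL,
                ((γ g s' : k) * (γ (g * s') t' : k)) •
                (act (j g p.1) (act (j s' q.1) 1) *
                  act (j g p.2 * j s' q.2) (act (j t' zL) 1)) := by
              refine Finset.sum_congr rfl fun p _ => ?_
              refine Finset.sum_congr rfl fun q _ => ?_
              rw [hW g s' p.1 q.1, hj_mul g s' p.2 q.2, hW (g * s') t' _ zL,
                ← hj_mul g s' p.2 q.2, smul_mul_assoc, mul_smul_comm, smul_smul]
          _ = ((γ g s' : k) * (γ (g * s') t' : k)) • ∑ p ∈ cL xL, ∑ q ∈ cL yL,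
                (act (j g p.1) (act (j s' q.1) 1) *
                  act (j g p.2 * j s' q.2) (act (j t' zL) 1)) := by
              simp only [← Finset.smul_sum]
          _ = ((γ g s' : k) * (γ (g * s') t' : k)) •
              act (j g xL) (act (j s' yL) (act (j t' zL) 1)) := by
              rw [← claimAgen g s' xL yL (act (j t' zL) 1)]
      rw [Lsum, Rsum, hsc]
    rw [hmaps]
end
end

section
/- Let (A, ·, ω) be a symmetric twisted partial H-module algebra with ω' the inverse of ω in the ideal ⟨f₁ * f₂⟩. Then for all h,k ∈ H and a ∈ A: h·(k·a) = Σ ω(h₍₁₎,k₍₁₎)(h₍₂₎k₍₂₎·a)ω'(h₍₃₎,k₍₃₎). -/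
open TensorProduct

noncomputable section

/-- A symmetric twisted partial action (Definition 4.2): the maps
`f₁(h⊗l) = (h·1)ε(l)` and `f₂(h⊗l) = (hl·1)` are central in the convolution
algebra `Hom(H ⊗ H, A)`, the cocycle `ω` is normalized, satisfies the cocycle
identity, and is invertible in the ideal `⟨f₁ * f₂⟩` with inverse `ω'`
(called `inv` below), and `h·(l·1) = Σ (h₁·1)(h₂l·1)`. -/
structure SymmetricTwistedPartialAction (k H A : Type) [CommRing k]
    [Ring H] [HopfAlgebra k H] [Ring A] [Algebra k A]
    extends TwistedPartialAction k H A where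
  inv : H →ₗ[k] H →ₗ[k] A
  f1_central : ∀ (T : H →ₗ[k] H →ₗ[k] A) (h l : H) (ι κ : Type)
    (s : Finset ι) (t : Finset κ) (h1 h2 : ι → H) (l1 l2 : κ → H),
    Coalgebra.comul (R := k) h = ∑ i ∈ s, h1 i ⊗ₜ[k] h2 i →
    Coalgebra.comul (R := k) l = ∑ j ∈ t, l1 j ⊗ₜ[k] l2 j →
    ∑ i ∈ s, ∑ j ∈ t,
        (Coalgebra.counit (R := k) (l1 j) • act (h1 i) 1) * T (h2 i) (l2 j) =
      ∑ i ∈ s, ∑ j ∈ t,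
        T (h1 i) (l1 j) * (Coalgebra.counit (R := k) (l2 j) • act (h2 i) 1)
  f2_central : ∀ (T : H →ₗ[k] H →ₗ[k] A) (h l : H) (ι κ : Type)
    (s : Finset ι) (t : Finset κ) (h1 h2 : ι → H) (l1 l2 : κ → H),
    Coalgebra.comul (R := k) h = ∑ i ∈ s, h1 i ⊗ₜ[k] h2 i →
    Coalgebra.comul (R := k) l = ∑ j ∈ t, l1 j ⊗ₜ[k] l2 j →
    ∑ i ∈ s, ∑ j ∈ t, act (h1 i * l1 j) 1 * T (h2 i) (l2 j) =
      ∑ i ∈ s, ∑ j ∈ t, T (h1 i) (l1 j) * act (h2 i * l2 j) 1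
  norm_right : ∀ h : H, cocycle h 1 = act h 1
  norm_left : ∀ h : H, cocycle 1 h = act h 1
  /-- the cocycle identity (9):
  `Σ (h₁·ω(l₁,m₁)) ω(h₂, l₂m₂) = Σ ω(h₁,l₁) ω(h₂l₂, m)` -/
  cocycle_id : ∀ (h l m : H) (ι κ ν : Type) (s : Finset ι) (t : Finset κ)
    (r : Finset ν) (h1 h2 : ι → H) (l1 l2 : κ → H) (m1 m2 : ν → H),
    Coalgebra.comul (R := k) h = ∑ i ∈ s, h1 i ⊗ₜ[k] h2 i →
    Coalgebra.comul (R := k) l = ∑ j ∈ t, l1 j ⊗ₜ[k] l2 j →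
    Coalgebra.comul (R := k) m = ∑ p ∈ r, m1 p ⊗ₜ[k] m2 p →
    ∑ i ∈ s, ∑ j ∈ t, ∑ p ∈ r,
        act (h1 i) (cocycle (l1 j) (m1 p)) * cocycle (h2 i) (l2 j * m2 p) =
      ∑ i ∈ s, ∑ j ∈ t, cocycle (h1 i) (l1 j) * cocycle (h2 i * l2 j) m
  /-- `ω' * f₁ = ω'` -/
  inv_absorb_f1 : ∀ (h l : H) (ι κ : Type) (s : Finset ι) (t : Finset κ)
    (h1 h2 : ι → H) (l1 l2 : κ → H),
    Coalgebra.comul (R := k) h = ∑ i ∈ s, h1 i ⊗ₜ[k] h2 i →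
    Coalgebra.comul (R := k) l = ∑ j ∈ t, l1 j ⊗ₜ[k] l2 j →
    ∑ i ∈ s, ∑ j ∈ t,
        inv (h1 i) (l1 j) * (Coalgebra.counit (R := k) (l2 j) • act (h2 i) 1) =
      inv h l
  /-- `ω' * f₂ = ω'` -/
  inv_absorb_f2 : ∀ (h l : H) (ι κ : Type) (s : Finset ι) (t : Finset κ)
    (h1 h2 : ι → H) (l1 l2 : κ → H),
    Coalgebra.comul (R := k) h = ∑ i ∈ s, h1 i ⊗ₜ[k] h2 i →
    Coalgebra.comul (R := k) l = ∑ j ∈ t, l1 j ⊗ₜ[k] l2 j →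
    inv h l = ∑ i ∈ s, ∑ j ∈ t, inv (h1 i) (l1 j) * act (h2 i * l2 j) 1
  /-- `ω * ω' = f₁ * f₂` -/
  cocycle_inv : ∀ (h l : H) (ι κ : Type) (s : Finset ι) (t : Finset κ)
    (h1 h2 : ι → H) (l1 l2 : κ → H),
    Coalgebra.comul (R := k) h = ∑ i ∈ s, h1 i ⊗ₜ[k] h2 i →
    Coalgebra.comul (R := k) l = ∑ j ∈ t, l1 j ⊗ₜ[k] l2 j →
    ∑ i ∈ s, ∑ j ∈ t, cocycle (h1 i) (l1 j) * inv (h2 i) (l2 j) =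
      ∑ i ∈ s, act (h1 i) 1 * act (h2 i * l) 1
  /-- `ω' * ω = f₁ * f₂` -/
  inv_cocycle : ∀ (h l : H) (ι κ : Type) (s : Finset ι) (t : Finset κ)
    (h1 h2 : ι → H) (l1 l2 : κ → H),
    Coalgebra.comul (R := k) h = ∑ i ∈ s, h1 i ⊗ₜ[k] h2 i →
    Coalgebra.comul (R := k) l = ∑ j ∈ t, l1 j ⊗ₜ[k] l2 j →
    ∑ i ∈ s, ∑ j ∈ t, inv (h1 i) (l1 j) * cocycle (h2 i) (l2 j) =
      ∑ i ∈ s, act (h1 i) 1 * act (h2 i * l) 1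
  /-- `h · (l · 1) = Σ (h₁ · 1)(h₂ l · 1)` -/
  act_act_one : ∀ (h l : H) (ι : Type) (s : Finset ι) (h1 h2 : ι → H),
    Coalgebra.comul (R := k) h = ∑ i ∈ s, h1 i ⊗ₜ[k] h2 i →
    act h (act l 1) = ∑ i ∈ s, act (h1 i) 1 * act (h2 i * l) 1

section Aux

variable {k H A : Type} [CommRing k] [Ring H] [HopfAlgebra k H] [Ring A] [Algebra k A]

/-- `combine F G ((x ⊗ m) ⊗ (u ⊗ n)) = F x u * G (m ⊗ n)`. -/
def combine {M N : Type} [AddCommMonoid M] [AddCommMonoid N] [Module k M] [Module k N]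
    (F : H →ₗ[k] H →ₗ[k] A) (G : M ⊗[k] N →ₗ[k] A) :
    (H ⊗[k] M) ⊗[k] (H ⊗[k] N) →ₗ[k] A :=
  (LinearMap.mul' k A) ∘ₗ (TensorProduct.map (TensorProduct.lift F) G) ∘ₗ
    (TensorProduct.tensorTensorTensorComm k H M H N).toLinearMap

@[simp] lemma combine_tmul {M N : Type} [AddCommMonoid M] [AddCommMonoid N]
    [Module k M] [Module k N]
    (F : H →ₗ[k] H →ₗ[k] A) (G : M ⊗[k] N →ₗ[k] A) (x u : H) (m : M) (n : N) :
    combine F G ((x ⊗ₜ[k] m) ⊗ₜ[k] (u ⊗ₜ[k] n)) = F x u * G (m ⊗ₜ[k] n) := by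
  simp [combine]

lemma combine_eval {M N : Type} [AddCommMonoid M] [AddCommMonoid N]
    [Module k M] [Module k N]
    (F : H →ₗ[k] H →ₗ[k] A) (G : M ⊗[k] N →ₗ[k] A)
    {ι ι' κ κ' : Type} (s : Finset ι) (s' : ι → Finset ι') (t : Finset κ)
    (t' : κ → Finset κ')
    (x : ι → ι' → H) (m : ι → ι' → M) (u : κ → κ' → H) (n : κ → κ' → N) :
    combine F G ((∑ i ∈ s, ∑ j ∈ s' i, x i j ⊗ₜ[k] m i j) ⊗ₜ[k]
        (∑ p ∈ t, ∑ q ∈ t' p, u p q ⊗ₜ[k] n p q)) =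
      ∑ i ∈ s, ∑ j ∈ s' i, ∑ p ∈ t, ∑ q ∈ t' p,
        F (x i j) (u p q) * G (m i j ⊗ₜ[k] n p q) := by
  simp only [sum_tmul, tmul_sum, map_sum, combine_tmul]
  refine ((Finset.sum_congr rfl fun p _ => Finset.sum_comm).trans ?_)
  refine ((Finset.sum_congr rfl fun p _ =>
    Finset.sum_congr rfl fun i _ => Finset.sum_comm).trans ?_)
  exact Finset.sum_comm.trans (Finset.sum_congr rfl fun i _ => Finset.sum_comm)

/-- The triple coproduct `(id ⊗ Δ) ∘ Δ`. -/
def Trip (h : H) : H ⊗[k] (H ⊗[k] H) :=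
  (Coalgebra.comul (R := k)).lTensor H (Coalgebra.comul (R := k) h)

lemma Trip_eq {h : H} {ι ι' : Type} {s : Finset ι} {s' : ι → Finset ι'}
    {h1 h2 : ι → H} {h21 h22 : ι → ι' → H}
    (hc : Coalgebra.comul (R := k) h = ∑ i ∈ s, h1 i ⊗ₜ[k] h2 i)
    (hc2 : ∀ i ∈ s, Coalgebra.comul (R := k) (h2 i) =
      ∑ j ∈ s' i, h21 i j ⊗ₜ[k] h22 i j) :
    Trip (k := k) h = ∑ i ∈ s, ∑ j ∈ s' i, h1 i ⊗ₜ[k] (h21 i j ⊗ₜ[k] h22 i j) := by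
  rw [Trip, hc, map_sum]
  refine Finset.sum_congr rfl fun i hi => ?_
  rw [LinearMap.lTensor_tmul, hc2 i hi, tmul_sum]

/-- Coassociativity: the triple coproduct also has a `(Δ ⊗ id) ∘ Δ`-shaped
representation. -/
lemma Trip_coassoc (h : H) :
    ∃ (s : Finset (H × H)) (t : H × H → Finset (H × H)),
      Coalgebra.comul (R := k) h = ∑ p ∈ s, p.1 ⊗ₜ[k] p.2 ∧
      (∀ p : H × H, Coalgebra.comul (R := k) p.1 = ∑ q ∈ t p, q.1 ⊗ₜ[k] q.2) ∧
      Trip (k := k) h = ∑ p ∈ s, ∑ q ∈ t p, q.1 ⊗ₜ[k] (q.2 ⊗ₜ[k] p.2) := by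
  obtain ⟨s, hs⟩ := TensorProduct.exists_finset (Coalgebra.comul (R := k) h)
  choose t ht using fun p : H × H =>
    TensorProduct.exists_finset (Coalgebra.comul (R := k) p.1)
  refine ⟨s, t, hs, ht, ?_⟩
  have hco := Coalgebra.coassoc_apply (R := k) h
  rw [Trip, ← hco, hs, map_sum, map_sum]
  refine Finset.sum_congr rfl fun p hp => ?_
  rw [LinearMap.rTensor_tmul, ht p, sum_tmul, map_sum]
  simp [TensorProduct.assoc_tmul]

end Aux

/-- For a symmetric twisted partial `H`-module algebra (equation (19)):
`h·(l·a) = Σ ω(h₁,l₁)(h₂l₂ · a) ω'(h₃,l₃)`. -/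
theorem symm_act_act
    {k H A : Type} [CommRing k] [Ring H] [HopfAlgebra k H]
    [Ring A] [Algebra k A] (P : SymmetricTwistedPartialAction k H A) :
    ∀ (h l : H) (a : A) (ι ι' κ κ' : Type) (s : Finset ι)
      (s' : ι → Finset ι') (t : Finset κ) (t' : κ → Finset κ')
      (h1 h2 : ι → H) (h21 h22 : ι → ι' → H)
      (l1 l2 : κ → H) (l21 l22 : κ → κ' → H),
      Coalgebra.comul (R := k) h = ∑ i ∈ s, h1 i ⊗ₜ[k] h2 i →
      (∀ i ∈ s, Coalgebra.comul (R := k) (h2 i) =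
        ∑ j ∈ s' i, h21 i j ⊗ₜ[k] h22 i j) →
      Coalgebra.comul (R := k) l = ∑ p ∈ t, l1 p ⊗ₜ[k] l2 p →
      (∀ p ∈ t, Coalgebra.comul (R := k) (l2 p) =
        ∑ q ∈ t' p, l21 p q ⊗ₜ[k] l22 p q) →
      P.act h (P.act l a) =
        ∑ i ∈ s, ∑ j ∈ s' i, ∑ p ∈ t, ∑ q ∈ t' p,
          P.cocycle (h1 i) (l1 p) * P.act (h21 i j * l21 p q) a *
            P.inv (h22 i j) (l22 p q) := by
  intro h l a ι ι' κ κ' s s' t t' h1 h2 h21 h22 l1 l2 l21 l22 hh hh2 hl hl2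
  set G1 : H →ₗ[k] H →ₗ[k] A := (LinearMap.mul k H).compr₂ (P.act.flip a) with hG1
  set F2 : H →ₗ[k] H →ₗ[k] A := P.act.compl₂ (P.act.flip a) with hF2
  set ΦA := combine P.cocycle (combine G1 (TensorProduct.lift P.inv)) with hΦA
  set ΦB := combine F2 (combine P.cocycle (TensorProduct.lift P.inv)) with hΦB
  have hTh := Trip_eq hh hh2
  have hTl := Trip_eq hl hl2
  -- Step 1 : the RHS is `ΦA (Trip h ⊗ Trip l)`
  have e1 : ΦA (Trip (k := k) h ⊗ₜ[k] Trip (k := k) l) =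
      ∑ i ∈ s, ∑ j ∈ s' i, ∑ p ∈ t, ∑ q ∈ t' p,
        P.cocycle (h1 i) (l1 p) * P.act (h21 i j * l21 p q) a *
          P.inv (h22 i j) (l22 p q) := by
    rw [hTh, hTl, hΦA,
      combine_eval P.cocycle (combine G1 (TensorProduct.lift P.inv)) s s' t t'
        (fun i _ => h1 i) (fun i j => h21 i j ⊗ₜ[k] h22 i j)
        (fun p _ => l1 p) (fun p q => l21 p q ⊗ₜ[k] l22 p q)]
    simp [hG1, mul_assoc]
  -- Step 2 : `ΦA` agrees with `ΦB` on the triple coproducts (the twisted axiom)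
  obtain ⟨sh, th, hsh, hth, hTh'⟩ := Trip_coassoc (k := k) h
  obtain ⟨sl, tl, hsl, htl, hTl'⟩ := Trip_coassoc (k := k) l
  have e2 : ΦA (Trip (k := k) h ⊗ₜ[k] Trip (k := k) l) =
      ΦB (Trip (k := k) h ⊗ₜ[k] Trip (k := k) l) := by
    rw [hTh', hTl', hΦA, hΦB,
      combine_eval P.cocycle (combine G1 (TensorProduct.lift P.inv)) sh th sl tl
        (fun _ q => q.1) (fun p q => q.2 ⊗ₜ[k] p.2)
        (fun _ w => w.1) (fun r w => w.2 ⊗ₜ[k] r.2),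
      combine_eval F2 (combine P.cocycle (TensorProduct.lift P.inv)) sh th sl tl
        (fun _ q => q.1) (fun p q => q.2 ⊗ₜ[k] p.2)
        (fun _ w => w.1) (fun r w => w.2 ⊗ₜ[k] r.2)]
    refine Finset.sum_congr rfl fun p hp => ?_
    rw [Finset.sum_comm, Finset.sum_comm (s := th p)]
    refine Finset.sum_congr rfl fun r hr => ?_
    have tw := P.twisted p.1 r.1 a (H × H) (H × H) (th p) (tl r)
      (fun q => q.1) (fun q => q.2) (fun w => w.1) (fun w => w.2) (hth p) (htl r)
    have lhs_eq : (∑ q ∈ th p, ∑ w ∈ tl r,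
        P.cocycle q.1 w.1 * combine G1 (TensorProduct.lift P.inv)
          ((q.2 ⊗ₜ[k] p.2) ⊗ₜ[k] (w.2 ⊗ₜ[k] r.2))) =
        (∑ q ∈ th p, ∑ w ∈ tl r, P.cocycle q.1 w.1 * P.act (q.2 * w.2) a) *
          P.inv p.2 r.2 := by
      rw [Finset.sum_mul]
      refine Finset.sum_congr rfl fun q _ => ?_
      rw [Finset.sum_mul]
      refine Finset.sum_congr rfl fun w _ => ?_
      simp [hG1, mul_assoc]
    have rhs_eq : (∑ q ∈ th p, ∑ w ∈ tl r,
        F2 q.1 w.1 * combine P.cocycle (TensorProduct.lift P.inv)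
          ((q.2 ⊗ₜ[k] p.2) ⊗ₜ[k] (w.2 ⊗ₜ[k] r.2))) =
        (∑ q ∈ th p, ∑ w ∈ tl r, P.act q.1 (P.act w.1 a) * P.cocycle q.2 w.2) *
          P.inv p.2 r.2 := by
      rw [Finset.sum_mul]
      refine Finset.sum_congr rfl fun q _ => ?_
      rw [Finset.sum_mul]
      refine Finset.sum_congr rfl fun w _ => ?_
      simp [hF2, mul_assoc]
    rw [lhs_eq, rhs_eq, tw]
  -- Step 3 : `ΦB (Trip h ⊗ Trip l)` equals the left hand side
  have e3 : ΦB (Trip (k := k) h ⊗ₜ[k] Trip (k := k) l) =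
      ∑ i ∈ s, ∑ p ∈ t,
        P.act (h1 i) (P.act (l1 p) a) * P.act (h2 i) (P.act (l2 p) 1) := by
    rw [hTh, hTl, hΦB,
      combine_eval F2 (combine P.cocycle (TensorProduct.lift P.inv)) s s' t t'
        (fun i _ => h1 i) (fun i j => h21 i j ⊗ₜ[k] h22 i j)
        (fun p _ => l1 p) (fun p q => l21 p q ⊗ₜ[k] l22 p q)]
    refine Finset.sum_congr rfl fun i hi => ?_
    rw [Finset.sum_comm]
    refine Finset.sum_congr rfl fun p hp => ?_
    have ci := P.cocycle_inv (h2 i) (l2 p) ι' κ' (s' i) (t' p)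
      (h21 i) (h22 i) (l21 p) (l22 p) (hh2 i hi) (hl2 p hp)
    have aa := P.act_act_one (h2 i) (l2 p) ι' (s' i) (h21 i) (h22 i) (hh2 i hi)
    calc (∑ j ∈ s' i, ∑ q ∈ t' p,
          F2 (h1 i) (l1 p) * combine P.cocycle (TensorProduct.lift P.inv)
            ((h21 i j ⊗ₜ[k] h22 i j) ⊗ₜ[k] (l21 p q ⊗ₜ[k] l22 p q)))
        = P.act (h1 i) (P.act (l1 p) a) *
            (∑ j ∈ s' i, ∑ q ∈ t' p,
              P.cocycle (h21 i j) (l21 p q) * P.inv (h22 i j) (l22 p q)) := by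
          rw [Finset.mul_sum]
          refine Finset.sum_congr rfl fun j _ => ?_
          rw [Finset.mul_sum]
          refine Finset.sum_congr rfl fun q _ => ?_
          simp [hF2]
      _ = P.act (h1 i) (P.act (l1 p) a) * P.act (h2 i) (P.act (l2 p) 1) := by
          rw [ci, ← aa]
  have e4 : P.act h (P.act l a) =
      ∑ i ∈ s, ∑ p ∈ t,
        P.act (h1 i) (P.act (l1 p) a) * P.act (h2 i) (P.act (l2 p) 1) := by
    have hla : P.act l a = ∑ p ∈ t, P.act (l1 p) a * P.act (l2 p) 1 := by
      conv_lhs => rw [show a = a * 1 from (mul_one a).symm]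
      exact P.act_mul l a 1 κ t l1 l2 hl
    rw [hla, map_sum]
    calc (∑ p ∈ t, P.act h (P.act (l1 p) a * P.act (l2 p) 1))
        = ∑ p ∈ t, ∑ i ∈ s,
            P.act (h1 i) (P.act (l1 p) a) * P.act (h2 i) (P.act (l2 p) 1) :=
          Finset.sum_congr rfl fun p _ =>
            P.act_mul h (P.act (l1 p) a) (P.act (l2 p) 1) ι s h1 h2 hh
      _ = _ := Finset.sum_comm
  rw [e4, ← e3, ← e2, e1]
end
end

section
/- Let (A, ·, (ω,ω')) be a symmetric twisted partial H-module algebra. Then for all h,k,m ∈ H: h·ω(k,m) = Σ ω(h₍₁₎,k₍₁₎) ω(h₍₂₎k₍₂₎,m₍₁₎) ω'(h₍₃₎,k₍₃₎m₍₂₎). -/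
open TensorProduct

noncomputable section

section AuxLemmas

variable {k H A : Type} [CommRing k] [Ring H] [HopfAlgebra k H] [Ring A] [Algebra k A]

/-- auxiliary trilinear multiplication map -/
def triAux (f g j : H →ₗ[k] A) : H ⊗[k] (H ⊗[k] H) →ₗ[k] A :=
  (LinearMap.mul' k A) ∘ₗ (TensorProduct.map f ((LinearMap.mul' k A) ∘ₗ TensorProduct.map g j))

lemma triAux_tmul (f g j : H →ₗ[k] A) (x y z : H) :
    triAux f g j (x ⊗ₜ[k] (y ⊗ₜ[k] z)) = f x * (g y * j z) := by
  simp [triAux]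

lemma triAux_congr (F G J : H →ₗ[k] A) {ι κ : Type} {s : Finset ι} {t : Finset κ}
    {a b c : ι → H} {d e f : κ → H}
    (heq : ∑ i ∈ s, a i ⊗ₜ[k] (b i ⊗ₜ[k] c i) = ∑ j ∈ t, d j ⊗ₜ[k] (e j ⊗ₜ[k] f j)) :
    ∑ i ∈ s, F (a i) * (G (b i) * J (c i)) = ∑ j ∈ t, F (d j) * (G (e j) * J (f j)) := by
  have := congrArg (triAux F G J) heq
  simpa [map_sum, triAux_tmul] using this

lemma coassoc_rep (x : H) {ι ι' ι'' : Type} (s : Finset ι) (s2 : ι → Finset ι')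
    (s1 : ι → Finset ι'')
    (x1 x2 : ι → H) (x21 x22 : ι → ι' → H) (x11 x12 : ι → ι'' → H)
    (hx : Coalgebra.comul (R := k) x = ∑ i ∈ s, x1 i ⊗ₜ[k] x2 i)
    (h2 : ∀ i ∈ s, Coalgebra.comul (R := k) (x2 i) = ∑ j ∈ s2 i, x21 i j ⊗ₜ[k] x22 i j)
    (h1 : ∀ i ∈ s, Coalgebra.comul (R := k) (x1 i) = ∑ c ∈ s1 i, x11 i c ⊗ₜ[k] x12 i c) :
    ∑ i ∈ s, ∑ j ∈ s2 i, x1 i ⊗ₜ[k] (x21 i j ⊗ₜ[k] x22 i j) =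
      ∑ i ∈ s, ∑ c ∈ s1 i, x11 i c ⊗ₜ[k] (x12 i c ⊗ₜ[k] x2 i) := by
  have L : ∑ i ∈ s, ∑ j ∈ s2 i, x1 i ⊗ₜ[k] (x21 i j ⊗ₜ[k] x22 i j)
      = (Coalgebra.comul (R := k)).lTensor H (Coalgebra.comul (R := k) x) := by
    rw [hx, map_sum]
    refine Finset.sum_congr rfl fun i hi => ?_
    rw [LinearMap.lTensor_tmul, h2 i hi, tmul_sum]
  have R : ∑ i ∈ s, ∑ c ∈ s1 i, x11 i c ⊗ₜ[k] (x12 i c ⊗ₜ[k] x2 i)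
      = TensorProduct.assoc k H H H
          ((Coalgebra.comul (R := k)).rTensor H (Coalgebra.comul (R := k) x)) := by
    rw [hx, map_sum, map_sum]
    refine Finset.sum_congr rfl fun i hi => ?_
    rw [LinearMap.rTensor_tmul, h1 i hi, sum_tmul, map_sum]
    simp
  rw [L, R, Coalgebra.coassoc_apply]

lemma comul_mul_repr (x y : H) {ι κ : Type} (s : Finset ι) (t : Finset κ)
    (x1 x2 : ι → H) (y1 y2 : κ → H)
    (hx : Coalgebra.comul (R := k) x = ∑ i ∈ s, x1 i ⊗ₜ[k] x2 i)
    (hy : Coalgebra.comul (R := k) y = ∑ j ∈ t, y1 j ⊗ₜ[k] y2 j) :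
    Coalgebra.comul (R := k) (x * y) =
      ∑ z ∈ s ×ˢ t, (x1 z.1 * y1 z.2) ⊗ₜ[k] (x2 z.1 * y2 z.2) := by
  rw [Bialgebra.comul_mul, hx, hy, Finset.sum_mul_sum, Finset.sum_product]
  simp [Algebra.TensorProduct.tmul_mul_tmul]

end AuxLemmas
set_option maxHeartbeats 2000000 in
/-- Proposition 4.4, equation (22):
`h·ω(l,m) = Σ ω(h₁,l₁) ω(h₂l₂,m₁) ω'(h₃,l₃m₂)`. -/
theorem symm_act_cocycle
    {k H A : Type} [CommRing k] [Ring H] [HopfAlgebra k H]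
    [Ring A] [Algebra k A] (P : SymmetricTwistedPartialAction k H A) :
    ∀ (h l m : H) (ι ι' κ κ' ν : Type) (s : Finset ι)
      (s' : ι → Finset ι') (t : Finset κ) (t' : κ → Finset κ') (r : Finset ν)
      (h1 h2 : ι → H) (h21 h22 : ι → ι' → H)
      (l1 l2 : κ → H) (l21 l22 : κ → κ' → H) (m1 m2 : ν → H),
      Coalgebra.comul (R := k) h = ∑ i ∈ s, h1 i ⊗ₜ[k] h2 i →
      (∀ i ∈ s, Coalgebra.comul (R := k) (h2 i) =
        ∑ j ∈ s' i, h21 i j ⊗ₜ[k] h22 i j) →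
      Coalgebra.comul (R := k) l = ∑ p ∈ t, l1 p ⊗ₜ[k] l2 p →
      (∀ p ∈ t, Coalgebra.comul (R := k) (l2 p) =
        ∑ q ∈ t' p, l21 p q ⊗ₜ[k] l22 p q) →
      Coalgebra.comul (R := k) m = ∑ n ∈ r, m1 n ⊗ₜ[k] m2 n →
      P.act h (P.cocycle l m) =
        ∑ i ∈ s, ∑ j ∈ s' i, ∑ p ∈ t, ∑ q ∈ t' p, ∑ n ∈ r,
          P.cocycle (h1 i) (l1 p) * P.cocycle (h21 i j * l21 p q) (m1 n) *
            P.inv (h22 i j) (l22 p q * m2 n) := by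
  intro h l m ι ι' κ κ' ν s s' t t' r h1 h2 h21 h22 l1 l2 l21 l22 m1 m2 hh hh2 hl hl2 hm
  classical
  choose u hu using fun n : ν => TensorProduct.exists_finset (Coalgebra.comul (R := k) (m1 n))
  choose v hv using fun n : ν => TensorProduct.exists_finset (Coalgebra.comul (R := k) (m2 n))
  choose cs hcs using fun i : ι => TensorProduct.exists_finset (Coalgebra.comul (R := k) (h1 i))
  choose ds hds using fun p : κ => TensorProduct.exists_finset (Coalgebra.comul (R := k) (l1 p))
  have EH : (∑ x ∈ s.sigma s', h1 x.1 ⊗ₜ[k] (h21 x.1 x.2 ⊗ₜ[k] h22 x.1 x.2)) =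
      ∑ x ∈ s.sigma cs, x.2.1 ⊗ₜ[k] (x.2.2 ⊗ₜ[k] h2 x.1) := by
    rw [Finset.sum_sigma, Finset.sum_sigma]
    exact coassoc_rep h s s' cs h1 h2 h21 h22 (fun _ c => c.1) (fun _ c => c.2) hh hh2
      (fun i _ => hcs i)
  have EL : (∑ y ∈ t.sigma t', l1 y.1 ⊗ₜ[k] (l21 y.1 y.2 ⊗ₜ[k] l22 y.1 y.2)) =
      ∑ y ∈ t.sigma ds, y.2.1 ⊗ₜ[k] (y.2.2 ⊗ₜ[k] l2 y.1) := by
    rw [Finset.sum_sigma, Finset.sum_sigma]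
    exact coassoc_rep l t t' ds l1 l2 l21 l22 (fun _ d => d.1) (fun _ d => d.2) hl hl2
      (fun p _ => hds p)
  have EM : (∑ z ∈ r.sigma v, m1 z.1 ⊗ₜ[k] (z.2.1 ⊗ₜ[k] z.2.2)) =
      ∑ z ∈ r.sigma u, z.2.1 ⊗ₜ[k] (z.2.2 ⊗ₜ[k] m2 z.1) := by
    rw [Finset.sum_sigma, Finset.sum_sigma]
    exact coassoc_rep m r v u m1 m2 (fun _ b => b.1) (fun _ b => b.2) (fun _ a => a.1)
      (fun _ a => a.2) hm (fun n _ => hv n) (fun n _ => hu n)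
  have key : ∀ i ∈ s, ∀ p ∈ t, ∀ n : ν, P.act (h2 i) (P.act (l2 p * m2 n) 1) =
      ∑ j ∈ s' i, ∑ z ∈ t' p ×ˢ v n,
        P.cocycle (h21 i j) (l21 p z.1 * z.2.1) * P.inv (h22 i j) (l22 p z.1 * z.2.2) := by
    intro i hi p hp n
    rw [P.act_act_one (h2 i) (l2 p * m2 n) ι' (s' i) (h21 i) (h22 i) (hh2 i hi)]
    exact (P.cocycle_inv (h2 i) (l2 p * m2 n) ι' (κ' × (H × H)) (s' i) (t' p ×ˢ v n)
      (h21 i) (h22 i) (fun z => l21 p z.1 * z.2.1) (fun z => l22 p z.1 * z.2.2)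
      (hh2 i hi)
      (comul_mul_repr (l2 p) (m2 n) (t' p) (v n) (l21 p) (l22 p) Prod.fst Prod.snd
        (hl2 p hp) (hv n))).symm
  have e1 : P.act h (P.cocycle l m) =
      ∑ i ∈ s, ∑ p ∈ t, ∑ n ∈ r,
        P.act (h1 i) (P.cocycle (l1 p) (m1 n)) * P.act (h2 i) (P.act (l2 p * m2 n) 1) := by
    rw [P.cocycle_absorb l m κ ν t r l1 l2 m1 m2 hl hm]
    simp only [map_sum]
    have hmul : ∀ (p : κ) (n : ν),
        P.act h (P.cocycle (l1 p) (m1 n) * P.act (l2 p * m2 n) 1)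
        = ∑ i ∈ s, P.act (h1 i) (P.cocycle (l1 p) (m1 n)) *
            P.act (h2 i) (P.act (l2 p * m2 n) 1) :=
      fun p n => P.act_mul h _ _ ι s h1 h2 hh
    simp only [hmul]
    conv_lhs => enter [2, p]; rw [Finset.sum_comm]
    rw [Finset.sum_comm]
  have e2 : (∑ i ∈ s, ∑ p ∈ t, ∑ n ∈ r,
        P.act (h1 i) (P.cocycle (l1 p) (m1 n)) * P.act (h2 i) (P.act (l2 p * m2 n) 1)) =
      ∑ i ∈ s, ∑ p ∈ t, ∑ n ∈ r, ∑ j ∈ s' i, ∑ z ∈ t' p ×ˢ v n,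
        P.act (h1 i) (P.cocycle (l1 p) (m1 n)) *
          (P.cocycle (h21 i j) (l21 p z.1 * z.2.1) * P.inv (h22 i j) (l22 p z.1 * z.2.2)) := by
    refine Finset.sum_congr rfl fun i hi => Finset.sum_congr rfl fun p hp =>
      Finset.sum_congr rfl fun n _ => ?_
    rw [key i hi p hp n, Finset.mul_sum]
    refine Finset.sum_congr rfl fun j _ => ?_
    rw [Finset.mul_sum]
  have e3 : (∑ i ∈ s, ∑ p ∈ t, ∑ n ∈ r, ∑ j ∈ s' i, ∑ z ∈ t' p ×ˢ v n,
        P.act (h1 i) (P.cocycle (l1 p) (m1 n)) *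
          (P.cocycle (h21 i j) (l21 p z.1 * z.2.1) * P.inv (h22 i j) (l22 p z.1 * z.2.2))) =
      ∑ x ∈ s.sigma s', ∑ y ∈ t.sigma t', ∑ z ∈ r.sigma v,
        P.act (h1 x.1) (P.cocycle (l1 y.1) (m1 z.1)) *
          (P.cocycle (h21 x.1 x.2) (l21 y.1 y.2 * z.2.1) *
            P.inv (h22 x.1 x.2) (l22 y.1 y.2 * z.2.2)) := by
    simp only [Finset.sum_sigma, Finset.sum_product]
    refine Finset.sum_congr rfl fun i _ => ?_
    conv_lhs => enter [2, p]; rw [Finset.sum_comm]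
    rw [Finset.sum_comm]
    exact Finset.sum_congr rfl fun j _ => Finset.sum_congr rfl fun p _ => Finset.sum_comm
  have e4 : (∑ x ∈ s.sigma s', ∑ y ∈ t.sigma t', ∑ z ∈ r.sigma v,
        P.act (h1 x.1) (P.cocycle (l1 y.1) (m1 z.1)) *
          (P.cocycle (h21 x.1 x.2) (l21 y.1 y.2 * z.2.1) *
            P.inv (h22 x.1 x.2) (l22 y.1 y.2 * z.2.2))) =
      ∑ x ∈ s.sigma s', ∑ y ∈ t.sigma t', ∑ z ∈ r.sigma u,
        P.act (h1 x.1) (P.cocycle (l1 y.1) z.2.1) *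
          (P.cocycle (h21 x.1 x.2) (l21 y.1 y.2 * z.2.2) *
            P.inv (h22 x.1 x.2) (l22 y.1 y.2 * m2 z.1)) := by
    refine Finset.sum_congr rfl fun x _ => Finset.sum_congr rfl fun y _ => ?_
    have := triAux_congr (P.act (h1 x.1) ∘ₗ P.cocycle (l1 y.1))
      (P.cocycle (h21 x.1 x.2) ∘ₗ LinearMap.mulLeft k (l21 y.1 y.2))
      (P.inv (h22 x.1 x.2) ∘ₗ LinearMap.mulLeft k (l22 y.1 y.2)) EM
    simpa only [LinearMap.comp_apply, LinearMap.mulLeft_apply] using this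
  have e5 : (∑ x ∈ s.sigma s', ∑ y ∈ t.sigma t', ∑ z ∈ r.sigma u,
        P.act (h1 x.1) (P.cocycle (l1 y.1) z.2.1) *
          (P.cocycle (h21 x.1 x.2) (l21 y.1 y.2 * z.2.2) *
            P.inv (h22 x.1 x.2) (l22 y.1 y.2 * m2 z.1))) =
      ∑ y ∈ t.sigma t', ∑ z ∈ r.sigma u, ∑ x ∈ s.sigma s',
        P.act (h1 x.1) (P.cocycle (l1 y.1) z.2.1) *
          (P.cocycle (h21 x.1 x.2) (l21 y.1 y.2 * z.2.2) *
            P.inv (h22 x.1 x.2) (l22 y.1 y.2 * m2 z.1)) := by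
    rw [Finset.sum_comm]
    exact Finset.sum_congr rfl fun y _ => Finset.sum_comm
  have e6 : (∑ y ∈ t.sigma t', ∑ z ∈ r.sigma u, ∑ x ∈ s.sigma s',
        P.act (h1 x.1) (P.cocycle (l1 y.1) z.2.1) *
          (P.cocycle (h21 x.1 x.2) (l21 y.1 y.2 * z.2.2) *
            P.inv (h22 x.1 x.2) (l22 y.1 y.2 * m2 z.1))) =
      ∑ y ∈ t.sigma t', ∑ z ∈ r.sigma u, ∑ x ∈ s.sigma cs,
        P.act x.2.1 (P.cocycle (l1 y.1) z.2.1) *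
          (P.cocycle x.2.2 (l21 y.1 y.2 * z.2.2) *
            P.inv (h2 x.1) (l22 y.1 y.2 * m2 z.1)) := by
    refine Finset.sum_congr rfl fun y _ => Finset.sum_congr rfl fun z _ => ?_
    have := triAux_congr (LinearMap.flip P.act (P.cocycle (l1 y.1) z.2.1))
      (LinearMap.flip P.cocycle (l21 y.1 y.2 * z.2.2))
      (LinearMap.flip P.inv (l22 y.1 y.2 * m2 z.1)) EH
    simpa only [LinearMap.flip_apply] using this
  have e7 : (∑ y ∈ t.sigma t', ∑ z ∈ r.sigma u, ∑ x ∈ s.sigma cs,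
        P.act x.2.1 (P.cocycle (l1 y.1) z.2.1) *
          (P.cocycle x.2.2 (l21 y.1 y.2 * z.2.2) *
            P.inv (h2 x.1) (l22 y.1 y.2 * m2 z.1))) =
      ∑ z ∈ r.sigma u, ∑ x ∈ s.sigma cs, ∑ y ∈ t.sigma t',
        P.act x.2.1 (P.cocycle (l1 y.1) z.2.1) *
          (P.cocycle x.2.2 (l21 y.1 y.2 * z.2.2) *
            P.inv (h2 x.1) (l22 y.1 y.2 * m2 z.1)) := by
    rw [Finset.sum_comm]
    exact Finset.sum_congr rfl fun z _ => Finset.sum_comm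
  have e8 : (∑ z ∈ r.sigma u, ∑ x ∈ s.sigma cs, ∑ y ∈ t.sigma t',
        P.act x.2.1 (P.cocycle (l1 y.1) z.2.1) *
          (P.cocycle x.2.2 (l21 y.1 y.2 * z.2.2) *
            P.inv (h2 x.1) (l22 y.1 y.2 * m2 z.1))) =
      ∑ z ∈ r.sigma u, ∑ x ∈ s.sigma cs, ∑ y ∈ t.sigma ds,
        P.act x.2.1 (P.cocycle y.2.1 z.2.1) *
          (P.cocycle x.2.2 (y.2.2 * z.2.2) *
            P.inv (h2 x.1) (l2 y.1 * m2 z.1)) := by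
    refine Finset.sum_congr rfl fun z _ => Finset.sum_congr rfl fun x _ => ?_
    have := triAux_congr (P.act x.2.1 ∘ₗ LinearMap.flip P.cocycle z.2.1)
      (P.cocycle x.2.2 ∘ₗ LinearMap.mulRight k z.2.2)
      (P.inv (h2 x.1) ∘ₗ LinearMap.mulRight k (m2 z.1)) EL
    simpa only [LinearMap.comp_apply, LinearMap.flip_apply, LinearMap.mulRight_apply] using this
  have e9 : (∑ z ∈ r.sigma u, ∑ x ∈ s.sigma cs, ∑ y ∈ t.sigma ds,
        P.act x.2.1 (P.cocycle y.2.1 z.2.1) *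
          (P.cocycle x.2.2 (y.2.2 * z.2.2) *
            P.inv (h2 x.1) (l2 y.1 * m2 z.1))) =
      ∑ n ∈ r, ∑ i ∈ s, ∑ p ∈ t, ∑ c ∈ cs i, ∑ d ∈ ds p, ∑ a ∈ u n,
        P.act c.1 (P.cocycle d.1 a.1) *
          (P.cocycle c.2 (d.2 * a.2) * P.inv (h2 i) (l2 p * m2 n)) := by
    simp only [Finset.sum_sigma]
    refine Finset.sum_congr rfl fun n _ => ?_
    rw [Finset.sum_comm]
    refine Finset.sum_congr rfl fun i _ => ?_
    rw [Finset.sum_comm]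
    conv_lhs => enter [2, cc]; rw [Finset.sum_comm]
    conv_lhs => enter [2, cc, 2, pp]; rw [Finset.sum_comm]
    rw [Finset.sum_comm]
  have e10 : (∑ n ∈ r, ∑ i ∈ s, ∑ p ∈ t, ∑ c ∈ cs i, ∑ d ∈ ds p, ∑ a ∈ u n,
        P.act c.1 (P.cocycle d.1 a.1) *
          (P.cocycle c.2 (d.2 * a.2) * P.inv (h2 i) (l2 p * m2 n))) =
      ∑ n ∈ r, ∑ i ∈ s, ∑ p ∈ t, ∑ c ∈ cs i, ∑ d ∈ ds p,
        P.cocycle c.1 d.1 *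
          (P.cocycle (c.2 * d.2) (m1 n) * P.inv (h2 i) (l2 p * m2 n)) := by
    refine Finset.sum_congr rfl fun n _ => Finset.sum_congr rfl fun i _ =>
      Finset.sum_congr rfl fun p _ => ?_
    have cid := P.cocycle_id (h1 i) (l1 p) (m1 n) (H × H) (H × H) (H × H) (cs i) (ds p) (u n)
      Prod.fst Prod.snd Prod.fst Prod.snd Prod.fst Prod.snd (hcs i) (hds p) (hu n)
    calc (∑ c ∈ cs i, ∑ d ∈ ds p, ∑ a ∈ u n,
          P.act c.1 (P.cocycle d.1 a.1) *
            (P.cocycle c.2 (d.2 * a.2) * P.inv (h2 i) (l2 p * m2 n)))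
        = (∑ c ∈ cs i, ∑ d ∈ ds p, ∑ a ∈ u n,
            P.act c.1 (P.cocycle d.1 a.1) * P.cocycle c.2 (d.2 * a.2)) *
              P.inv (h2 i) (l2 p * m2 n) := by
          simp only [← mul_assoc, ← Finset.sum_mul]
      _ = (∑ c ∈ cs i, ∑ d ∈ ds p, P.cocycle c.1 d.1 * P.cocycle (c.2 * d.2) (m1 n)) *
              P.inv (h2 i) (l2 p * m2 n) := by rw [cid]
      _ = ∑ c ∈ cs i, ∑ d ∈ ds p, P.cocycle c.1 d.1 *
            (P.cocycle (c.2 * d.2) (m1 n) * P.inv (h2 i) (l2 p * m2 n)) := by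
          simp only [Finset.sum_mul, mul_assoc]
  have e11 : (∑ n ∈ r, ∑ i ∈ s, ∑ p ∈ t, ∑ c ∈ cs i, ∑ d ∈ ds p,
        P.cocycle c.1 d.1 *
          (P.cocycle (c.2 * d.2) (m1 n) * P.inv (h2 i) (l2 p * m2 n))) =
      ∑ n ∈ r, ∑ i ∈ s, ∑ c ∈ cs i, ∑ y ∈ t.sigma ds,
        P.cocycle c.1 y.2.1 *
          (P.cocycle (c.2 * y.2.2) (m1 n) * P.inv (h2 i) (l2 y.1 * m2 n)) := by
    refine Finset.sum_congr rfl fun n _ => Finset.sum_congr rfl fun i _ => ?_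
    rw [Finset.sum_comm]
    exact Finset.sum_congr rfl fun cc _ => (Finset.sum_sigma t ds (fun y =>
      P.cocycle cc.1 y.2.1 *
        (P.cocycle (cc.2 * y.2.2) (m1 n) * P.inv (h2 i) (l2 y.1 * m2 n)))).symm
  have e12 : (∑ n ∈ r, ∑ i ∈ s, ∑ c ∈ cs i, ∑ y ∈ t.sigma ds,
        P.cocycle c.1 y.2.1 *
          (P.cocycle (c.2 * y.2.2) (m1 n) * P.inv (h2 i) (l2 y.1 * m2 n))) =
      ∑ n ∈ r, ∑ i ∈ s, ∑ c ∈ cs i, ∑ y ∈ t.sigma t',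
        P.cocycle c.1 (l1 y.1) *
          (P.cocycle (c.2 * l21 y.1 y.2) (m1 n) *
            P.inv (h2 i) (l22 y.1 y.2 * m2 n)) := by
    refine Finset.sum_congr rfl fun n _ => Finset.sum_congr rfl fun i _ =>
      Finset.sum_congr rfl fun c _ => ?_
    have := triAux_congr (P.cocycle c.1)
      (LinearMap.flip P.cocycle (m1 n) ∘ₗ LinearMap.mulLeft k c.2)
      (P.inv (h2 i) ∘ₗ LinearMap.mulRight k (m2 n)) EL.symm
    simpa only [LinearMap.comp_apply, LinearMap.flip_apply, LinearMap.mulLeft_apply,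
      LinearMap.mulRight_apply] using this
  have e13 : (∑ n ∈ r, ∑ i ∈ s, ∑ c ∈ cs i, ∑ y ∈ t.sigma t',
        P.cocycle c.1 (l1 y.1) *
          (P.cocycle (c.2 * l21 y.1 y.2) (m1 n) *
            P.inv (h2 i) (l22 y.1 y.2 * m2 n))) =
      ∑ n ∈ r, ∑ y ∈ t.sigma t', ∑ x ∈ s.sigma cs,
        P.cocycle x.2.1 (l1 y.1) *
          (P.cocycle (x.2.2 * l21 y.1 y.2) (m1 n) *
            P.inv (h2 x.1) (l22 y.1 y.2 * m2 n)) := by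
    refine Finset.sum_congr rfl fun n _ => ?_
    conv_lhs => enter [2, i]; rw [Finset.sum_comm]
    rw [Finset.sum_comm]
    exact Finset.sum_congr rfl fun y _ => (Finset.sum_sigma s cs (fun x =>
      P.cocycle x.2.1 (l1 y.1) *
        (P.cocycle (x.2.2 * l21 y.1 y.2) (m1 n) * P.inv (h2 x.1) (l22 y.1 y.2 * m2 n)))).symm
  have e14 : (∑ n ∈ r, ∑ y ∈ t.sigma t', ∑ x ∈ s.sigma cs,
        P.cocycle x.2.1 (l1 y.1) *
          (P.cocycle (x.2.2 * l21 y.1 y.2) (m1 n) *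
            P.inv (h2 x.1) (l22 y.1 y.2 * m2 n))) =
      ∑ n ∈ r, ∑ y ∈ t.sigma t', ∑ x ∈ s.sigma s',
        P.cocycle (h1 x.1) (l1 y.1) *
          (P.cocycle (h21 x.1 x.2 * l21 y.1 y.2) (m1 n) *
            P.inv (h22 x.1 x.2) (l22 y.1 y.2 * m2 n)) := by
    refine Finset.sum_congr rfl fun n _ => Finset.sum_congr rfl fun y _ => ?_
    have := triAux_congr (LinearMap.flip P.cocycle (l1 y.1))
      (LinearMap.flip P.cocycle (m1 n) ∘ₗ LinearMap.mulRight k (l21 y.1 y.2))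
      (LinearMap.flip P.inv (l22 y.1 y.2 * m2 n)) EH.symm
    simpa only [LinearMap.comp_apply, LinearMap.flip_apply, LinearMap.mulRight_apply] using this
  have e15 : (∑ n ∈ r, ∑ y ∈ t.sigma t', ∑ x ∈ s.sigma s',
        P.cocycle (h1 x.1) (l1 y.1) *
          (P.cocycle (h21 x.1 x.2 * l21 y.1 y.2) (m1 n) *
            P.inv (h22 x.1 x.2) (l22 y.1 y.2 * m2 n))) =
      ∑ i ∈ s, ∑ j ∈ s' i, ∑ p ∈ t, ∑ q ∈ t' p, ∑ n ∈ r,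
        P.cocycle (h1 i) (l1 p) * P.cocycle (h21 i j * l21 p q) (m1 n) *
          P.inv (h22 i j) (l22 p q * m2 n) := by
    simp only [Finset.sum_sigma, ← mul_assoc]
    rw [Finset.sum_comm]
    conv_lhs => enter [2, p]; rw [Finset.sum_comm]
    conv_lhs => enter [2, p, 2, q]; rw [Finset.sum_comm]
    conv_lhs => enter [2, p, 2, q, 2, i]; rw [Finset.sum_comm]
    conv_lhs => enter [2, p]; rw [Finset.sum_comm]
    rw [Finset.sum_comm]
    conv_lhs => enter [2, i, 2, p]; rw [Finset.sum_comm]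
    conv_lhs => enter [2, i]; rw [Finset.sum_comm]
  exact e1.trans (e2.trans (e3.trans (e4.trans (e5.trans (e6.trans (e7.trans (e8.trans
    (e9.trans (e10.trans (e11.trans (e12.trans (e13.trans (e14.trans e15)))))))))))))
end
end

section
/- Let (A, ·, (ω,ω')) be a symmetric twisted partial H-module algebra. Then for all h,k,m ∈ H: h·ω'(k,m) = Σ ω(h₍₁₎,k₍₁₎m₍₁₎) ω'(h₍₂₎k₍₂₎,m₍₂₎) ω'(h₍₃₎,k₍₃₎). -/
open TensorProduct

noncomputable section

namespace STPA

variable {k A : Type} [CommRing k] [Ring A] [Algebra k A]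

section Conv

variable {C : Type} [AddCommGroup C] [Module k C] [Coalgebra k C]

/-- Convolution product on `Hom(C, A)`. -/
def conv (f g : C →ₗ[k] A) : C →ₗ[k] A :=
  LinearMap.mul' k A ∘ₗ TensorProduct.map f g ∘ₗ Coalgebra.comul

lemma conv_eq_sum {f g : C →ₗ[k] A} {c : C} {ι : Type*} {s : Finset ι} {y1 y2 : ι → C}
    (hc : Coalgebra.comul (R := k) c = ∑ i ∈ s, y1 i ⊗ₜ[k] y2 i) :
    conv f g c = ∑ i ∈ s, f (y1 i) * g (y2 i) := by
  simp [conv, hc, map_sum]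

lemma conv_repr {f g : C →ₗ[k] A} {c : C} (r : Coalgebra.Repr k c (C × C)) :
    conv f g c = ∑ i ∈ r.index, f (r.left i) * g (r.right i) :=
  conv_eq_sum r.eq.symm

lemma conv_assoc (f g e : C →ₗ[k] A) : conv (conv f g) e = conv f (conv g e) := by
  ext c
  set r := Coalgebra.Repr.arbitrary k c
  set a₁ : (i : r.ι) → Coalgebra.Repr k (r.left i) (C × C) := fun i => Coalgebra.Repr.arbitrary k _
  set a₂ : (i : r.ι) → Coalgebra.Repr k (r.right i) (C × C) := fun i => Coalgebra.Repr.arbitrary k _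
  have key := Coalgebra.sum_tmul_tmul_eq r a₁ a₂
  have := congrArg (LinearMap.mul' k A ∘ₗ TensorProduct.map f
      (LinearMap.mul' k A ∘ₗ TensorProduct.map g e)) key
  simp only [map_sum, LinearMap.comp_apply, TensorProduct.map_tmul, LinearMap.mul'_apply] at this
  calc conv (conv f g) e c = ∑ i ∈ r.index, conv f g (r.left i) * e (r.right i) := conv_repr r
    _ = ∑ i ∈ r.index, (∑ j ∈ (a₁ i).index, f ((a₁ i).left j) * g ((a₁ i).right j)) *
          e (r.right i) := by
        refine Finset.sum_congr rfl fun i _ => ?_; rw [conv_repr (a₁ i)]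
    _ = ∑ i ∈ r.index, ∑ j ∈ (a₁ i).index,
          f ((a₁ i).left j) * (g ((a₁ i).right j) * e (r.right i)) := by
        simp [Finset.sum_mul, mul_assoc]
    _ = ∑ i ∈ r.index, ∑ j ∈ (a₂ i).index,
          f (r.left i) * (g ((a₂ i).left j) * e ((a₂ i).right j)) := this
    _ = ∑ i ∈ r.index, f (r.left i) * conv g e (r.right i) := by
        refine Finset.sum_congr rfl fun i _ => ?_
        rw [conv_repr (a₂ i), Finset.mul_sum]
    _ = conv f (conv g e) c := (conv_repr r).symm

end Conv

section Comp

variable {C D : Type} [AddCommGroup C] [Module k C] [Coalgebra k C]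
  [AddCommGroup D] [Module k D] [Coalgebra k D]

lemma conv_comp {φ : C →ₗ[k] D}
    (hφ : Coalgebra.comul ∘ₗ φ = TensorProduct.map φ φ ∘ₗ Coalgebra.comul (R := k)) 
    (f g : D →ₗ[k] A) :
    conv (f ∘ₗ φ) (g ∘ₗ φ) = conv f g ∘ₗ φ := by
  unfold conv
  rw [TensorProduct.map_comp, LinearMap.comp_assoc, LinearMap.comp_assoc, ← hφ]
  rfl

end Comp

section Expand

variable {M N : Type} [AddCommGroup M] [Module k M] [Coalgebra k M]
  [AddCommGroup N] [Module k N] [Coalgebra k N]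

lemma comul_tmul_eq (a : M) (b : N) :
    Coalgebra.comul (A := M ⊗[k] N) (a ⊗ₜ[k] b) =
      TensorProduct.tensorTensorTensorComm k M M N N
        (Coalgebra.comul (R := k) a ⊗ₜ[k] Coalgebra.comul (R := k) b) := rfl

lemma comul_tmul_expand {a : M} {b : N} {ι κ : Type} {s : Finset ι} {t : Finset κ}
    {a1 a2 : ι → M} {b1 b2 : κ → N}
    (ha : Coalgebra.comul (R := k) a = ∑ i ∈ s, a1 i ⊗ₜ[k] a2 i)
    (hb : Coalgebra.comul (R := k) b = ∑ j ∈ t, b1 j ⊗ₜ[k] b2 j) :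
    Coalgebra.comul (A := M ⊗[k] N) (a ⊗ₜ[k] b) =
      ∑ i ∈ s, ∑ j ∈ t, (a1 i ⊗ₜ[k] b1 j) ⊗ₜ[k] (a2 i ⊗ₜ[k] b2 j) := by
  rw [comul_tmul_eq, ha, hb, TensorProduct.sum_tmul]
  simp [TensorProduct.tmul_sum, map_sum]

lemma conv_tmul_expand {f g : M ⊗[k] N →ₗ[k] A} {a : M} {b : N} {ι κ : Type}
    {s : Finset ι} {t : Finset κ} {a1 a2 : ι → M} {b1 b2 : κ → N}
    (ha : Coalgebra.comul (R := k) a = ∑ i ∈ s, a1 i ⊗ₜ[k] a2 i)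
    (hb : Coalgebra.comul (R := k) b = ∑ j ∈ t, b1 j ⊗ₜ[k] b2 j) :
    conv f g (a ⊗ₜ[k] b) =
      ∑ i ∈ s, ∑ j ∈ t, f (a1 i ⊗ₜ[k] b1 j) * g (a2 i ⊗ₜ[k] b2 j) := by
  unfold conv
  simp only [LinearMap.comp_apply]
  erw [comul_tmul_expand ha hb]
  simp [map_sum]

/-- collapse `∑ ε(x₁) • x₂ = x` -/
lemma counit_collapse_left {x : M} {ι : Type} {s : Finset ι} {x1 x2 : ι → M}
    (hx : Coalgebra.comul (R := k) x = ∑ i ∈ s, x1 i ⊗ₜ[k] x2 i) :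
    ∑ i ∈ s, (Coalgebra.counit (R := k) (x1 i)) • x2 i = x := by
  have := Coalgebra.rTensor_counit_comul (R := k) x
  rw [hx, map_sum] at this
  simp only [LinearMap.rTensor_tmul] at this
  have := congrArg (TensorProduct.lid k M) this
  simpa [map_sum] using this

lemma counit_collapse_right {x : M} {ι : Type} {s : Finset ι} {x1 x2 : ι → M}
    (hx : Coalgebra.comul (R := k) x = ∑ i ∈ s, x1 i ⊗ₜ[k] x2 i) :
    ∑ i ∈ s, (Coalgebra.counit (R := k) (x2 i)) • x1 i = x := by
  have := Coalgebra.lTensor_counit_comul (R := k) x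
  rw [hx, map_sum] at this
  simp only [LinearMap.lTensor_tmul] at this
  have := congrArg (TensorProduct.rid k M) this
  simpa [map_sum] using this

end Expand



section Main

variable {k H A : Type} [CommRing k] [Ring H] [HopfAlgebra k H] [Ring A] [Algebra k A]
  (P : SymmetricTwistedPartialAction k H A)

/-! ### Basic maps -/

def aone : H →ₗ[k] A := P.act.flip 1

@[simp] lemma aone_apply (h : H) : aone P h = P.act h 1 := rfl

def W : H ⊗[k] H →ₗ[k] A := TensorProduct.lift P.cocycle

def Wi : H ⊗[k] H →ₗ[k] A := TensorProduct.lift P.inv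

@[simp] lemma W_tmul (h l : H) : W P (h ⊗ₜ[k] l) = P.cocycle h l := rfl

@[simp] lemma Wi_tmul (h l : H) : Wi P (h ⊗ₜ[k] l) = P.inv h l := rfl

def F1 : H ⊗[k] H →ₗ[k] A :=
  TensorProduct.lift
    ((((LinearMap.lsmul k A).comp (Coalgebra.counit (R := k))).compl₂ (aone P)).flip)

@[simp] lemma F1_tmul (h l : H) :
    F1 P (h ⊗ₜ[k] l) = Coalgebra.counit (R := k) l • P.act h 1 := rfl

def F2 : H ⊗[k] H →ₗ[k] A := aone P ∘ₗ LinearMap.mul' k H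

@[simp] lemma F2_tmul (h l : H) : F2 P (h ⊗ₜ[k] l) = P.act (h * l) 1 := by
  simp [F2]

def F2z (z : H) : H ⊗[k] H →ₗ[k] A :=
  aone P ∘ₗ LinearMap.mulRight k z ∘ₗ LinearMap.mul' k H

@[simp] lemma F2z_tmul (z h l : H) : F2z P z (h ⊗ₜ[k] l) = P.act (h * l * z) 1 := by
  simp [F2z]

def liftAct {C : Type} [AddCommGroup C] [Module k C] (f : C →ₗ[k] A) :
    H ⊗[k] C →ₗ[k] A :=
  TensorProduct.lift (P.act.compl₂ f)

@[simp] lemma liftAct_tmul {C : Type} [AddCommGroup C] [Module k C] (f : C →ₗ[k] A)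
    (h : H) (c : C) : liftAct P f (h ⊗ₜ[k] c) = P.act h (f c) := rfl

def NN : H ⊗[k] H →ₗ[k] A := liftAct P (aone P)

@[simp] lemma NN_tmul (h l : H) : NN P (h ⊗ₜ[k] l) = P.act h (P.act l 1) := rfl

/-! ### Collapse helpers -/

lemma collapse_smul_left {M : Type} [AddCommGroup M] [Module k M] [Coalgebra k M]
    {x : M} {ι : Type} {s : Finset ι} {x1 x2 : ι → M}
    (hx : Coalgebra.comul (R := k) x = ∑ i ∈ s, x1 i ⊗ₜ[k] x2 i)
    {V : Type*} [AddCommGroup V] [Module k V] (T : M →ₗ[k] V) :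
    ∑ i ∈ s, Coalgebra.counit (R := k) (x1 i) • T (x2 i) = T x := by
  have h0 := counit_collapse_left (k := k) hx
  calc ∑ i ∈ s, Coalgebra.counit (R := k) (x1 i) • T (x2 i)
      = T (∑ i ∈ s, Coalgebra.counit (R := k) (x1 i) • x2 i) := by
        rw [map_sum]; simp [map_smul]
    _ = T x := by rw [h0]

lemma collapse_smul_right {M : Type} [AddCommGroup M] [Module k M] [Coalgebra k M]
    {x : M} {ι : Type} {s : Finset ι} {x1 x2 : ι → M}
    (hx : Coalgebra.comul (R := k) x = ∑ i ∈ s, x1 i ⊗ₜ[k] x2 i)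
    {V : Type*} [AddCommGroup V] [Module k V] (T : M →ₗ[k] V) :
    ∑ i ∈ s, Coalgebra.counit (R := k) (x2 i) • T (x1 i) = T x := by
  have h0 := counit_collapse_right (k := k) hx
  calc ∑ i ∈ s, Coalgebra.counit (R := k) (x2 i) • T (x1 i)
      = T (∑ i ∈ s, Coalgebra.counit (R := k) (x2 i) • x1 i) := by
        rw [map_sum]; simp [map_smul]
    _ = T x := by rw [h0]

lemma counit_counit_collapse {x : H} {ι : Type} {s : Finset ι} {x1 x2 : ι → H}
    (hx : Coalgebra.comul (R := k) x = ∑ i ∈ s, x1 i ⊗ₜ[k] x2 i) :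
    ∑ i ∈ s, Coalgebra.counit (R := k) (x1 i) * Coalgebra.counit (R := k) (x2 i)
      = Coalgebra.counit (R := k) x := by
  have := collapse_smul_left (k := k) hx (Coalgebra.counit (R := k))
  simpa [smul_eq_mul] using this

lemma comul_mul_expand {h l : H} {ι κ : Type} {s : Finset ι} {t : Finset κ}
    {h1 h2 : ι → H} {l1 l2 : κ → H}
    (hh : Coalgebra.comul (R := k) h = ∑ i ∈ s, h1 i ⊗ₜ[k] h2 i)
    (hl : Coalgebra.comul (R := k) l = ∑ j ∈ t, l1 j ⊗ₜ[k] l2 j) :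
    Coalgebra.comul (R := k) (h * l) =
      ∑ p ∈ s ×ˢ t, (h1 p.1 * l1 p.2) ⊗ₜ[k] (h2 p.1 * l2 p.2) := by
  rw [Bialgebra.comul_mul, hh, hl, Finset.sum_mul_sum, Finset.sum_product]
  simp [Algebra.TensorProduct.tmul_mul_tmul]

/-- `Σ (h₁·1)(h₂·1) = h·1` -/
lemma sum_aone_aone {x : H} {ι : Type} {s : Finset ι} {x1 x2 : ι → H}
    (hx : Coalgebra.comul (R := k) x = ∑ i ∈ s, x1 i ⊗ₜ[k] x2 i) :
    ∑ i ∈ s, P.act (x1 i) 1 * P.act (x2 i) 1 = P.act x 1 := by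
  have := P.act_act_one x 1 _ s x1 x2 hx
  simpa [P.act_one] using this.symm

/-- value of `F1 ⋆ F2` on a pure tensor. -/
lemma E_tmul (h l : H) {ι : Type} {s : Finset ι} {h1 h2 : ι → H}
    (hh : Coalgebra.comul (R := k) h = ∑ i ∈ s, h1 i ⊗ₜ[k] h2 i) :
    conv (F1 P) (F2 P) (h ⊗ₜ[k] l) = ∑ i ∈ s, P.act (h1 i) 1 * P.act (h2 i * l) 1 := by
  have rl := Coalgebra.Repr.arbitrary k l
  rw [conv_tmul_expand hh rl.eq.symm]
  refine Finset.sum_congr rfl fun i _ => ?_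
  simp only [F1_tmul, F2_tmul, smul_mul_assoc]
  have := collapse_smul_left (k := k) rl.eq.symm
    ((LinearMap.mulLeft k (P.act (h1 i) 1)) ∘ₗ (aone P) ∘ₗ (LinearMap.mulLeft k (h2 i)))
  simpa using this

/-! ### Q₂ identities -/

lemma W_F2 : conv (W P) (F2 P) = W P := by
  apply TensorProduct.ext'
  intro h l
  have rh := Coalgebra.Repr.arbitrary k h
  have rl := Coalgebra.Repr.arbitrary k l
  rw [conv_tmul_expand rh.eq.symm rl.eq.symm]
  simp only [W_tmul, F2_tmul]
  exact (P.cocycle_absorb h l _ _ rh.index rl.index rh.left rh.right rl.left rl.right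
    rh.eq.symm rl.eq.symm).symm

lemma Wi_F1 : conv (Wi P) (F1 P) = Wi P := by
  apply TensorProduct.ext'
  intro h l
  have rh := Coalgebra.Repr.arbitrary k h
  have rl := Coalgebra.Repr.arbitrary k l
  rw [conv_tmul_expand rh.eq.symm rl.eq.symm]
  simp only [Wi_tmul, F1_tmul]
  exact P.inv_absorb_f1 h l _ _ rh.index rl.index rh.left rh.right rl.left rl.right
    rh.eq.symm rl.eq.symm

lemma Wi_F2 : conv (Wi P) (F2 P) = Wi P := by
  apply TensorProduct.ext'
  intro h l
  have rh := Coalgebra.Repr.arbitrary k h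
  have rl := Coalgebra.Repr.arbitrary k l
  rw [conv_tmul_expand rh.eq.symm rl.eq.symm]
  simp only [Wi_tmul, F2_tmul]
  exact (P.inv_absorb_f2 h l _ _ rh.index rl.index rh.left rh.right rl.left rl.right
    rh.eq.symm rl.eq.symm).symm

lemma F1_central (T : H ⊗[k] H →ₗ[k] A) : conv (F1 P) T = conv T (F1 P) := by
  apply TensorProduct.ext'
  intro h l
  have rh := Coalgebra.Repr.arbitrary k h
  have rl := Coalgebra.Repr.arbitrary k l
  rw [conv_tmul_expand rh.eq.symm rl.eq.symm, conv_tmul_expand rh.eq.symm rl.eq.symm]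
  have := P.f1_central (TensorProduct.curry T) h l _ _ rh.index rl.index
    rh.left rh.right rl.left rl.right rh.eq.symm rl.eq.symm
  simpa [TensorProduct.curry_apply] using this

lemma F2_central (T : H ⊗[k] H →ₗ[k] A) : conv (F2 P) T = conv T (F2 P) := by
  apply TensorProduct.ext'
  intro h l
  have rh := Coalgebra.Repr.arbitrary k h
  have rl := Coalgebra.Repr.arbitrary k l
  rw [conv_tmul_expand rh.eq.symm rl.eq.symm, conv_tmul_expand rh.eq.symm rl.eq.symm]
  have := P.f2_central (TensorProduct.curry T) h l _ _ rh.index rl.index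
    rh.left rh.right rl.left rl.right rh.eq.symm rl.eq.symm
  simpa [TensorProduct.curry_apply] using this

lemma W_Wi : conv (W P) (Wi P) = conv (F1 P) (F2 P) := by
  apply TensorProduct.ext'
  intro h l
  have rh := Coalgebra.Repr.arbitrary k h
  have rl := Coalgebra.Repr.arbitrary k l
  rw [conv_tmul_expand rh.eq.symm rl.eq.symm, E_tmul P h l rh.eq.symm]
  simp only [W_tmul, Wi_tmul]
  exact P.cocycle_inv h l _ _ rh.index rl.index rh.left rh.right rl.left rl.right
    rh.eq.symm rl.eq.symm

lemma Wi_W : conv (Wi P) (W P) = conv (F1 P) (F2 P) := by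
  apply TensorProduct.ext'
  intro h l
  have rh := Coalgebra.Repr.arbitrary k h
  have rl := Coalgebra.Repr.arbitrary k l
  rw [conv_tmul_expand rh.eq.symm rl.eq.symm, E_tmul P h l rh.eq.symm]
  simp only [Wi_tmul, W_tmul]
  exact P.inv_cocycle h l _ _ rh.index rl.index rh.left rh.right rl.left rl.right
    rh.eq.symm rl.eq.symm

lemma F1_F1 : conv (F1 P) (F1 P) = F1 P := by
  apply TensorProduct.ext'
  intro h l
  have rh := Coalgebra.Repr.arbitrary k h
  have rl := Coalgebra.Repr.arbitrary k l
  rw [conv_tmul_expand rh.eq.symm rl.eq.symm]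
  simp only [F1_tmul]
  calc ∑ i ∈ rh.index, ∑ j ∈ rl.index,
        (Coalgebra.counit (R := k) (rl.left j) • P.act (rh.left i) 1) *
          (Coalgebra.counit (R := k) (rl.right j) • P.act (rh.right i) 1)
      = ∑ j ∈ rl.index, ∑ i ∈ rh.index,
          (Coalgebra.counit (R := k) (rl.left j) * Coalgebra.counit (R := k) (rl.right j)) •
            (P.act (rh.left i) 1 * P.act (rh.right i) 1) := by
        rw [Finset.sum_comm]
        refine Finset.sum_congr rfl fun j _ => Finset.sum_congr rfl fun i _ => ?_
        rw [smul_mul_smul_comm]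
    _ = (∑ j ∈ rl.index,
          Coalgebra.counit (R := k) (rl.left j) * Coalgebra.counit (R := k) (rl.right j)) •
          (∑ i ∈ rh.index, P.act (rh.left i) 1 * P.act (rh.right i) 1) := by
        rw [Finset.sum_smul]
        refine Finset.sum_congr rfl fun j _ => ?_
        rw [Finset.smul_sum]
    _ = Coalgebra.counit (R := k) l • P.act h 1 := by
        rw [counit_counit_collapse (k := k) rl.eq.symm, sum_aone_aone P rh.eq.symm]

lemma F2_F2 : conv (F2 P) (F2 P) = F2 P := by
  apply TensorProduct.ext'
  intro h l
  have rh := Coalgebra.Repr.arbitrary k h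
  have rl := Coalgebra.Repr.arbitrary k l
  rw [conv_tmul_expand rh.eq.symm rl.eq.symm]
  simp only [F2_tmul]
  have hexp := comul_mul_expand (k := k) rh.eq.symm rl.eq.symm
  have := sum_aone_aone P hexp
  rw [Finset.sum_product] at this
  simpa using this

lemma NN_W : conv (NN P) (W P) = W P := by
  apply TensorProduct.ext'
  intro h l
  have rh := Coalgebra.Repr.arbitrary k h
  have rl := Coalgebra.Repr.arbitrary k l
  rw [conv_tmul_expand rh.eq.symm rl.eq.symm]
  simp only [NN_tmul, W_tmul]
  have h1 := P.twisted h l 1 _ _ rh.index rl.index rh.left rh.right rl.left rl.right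
    rh.eq.symm rl.eq.symm
  have h2 := P.cocycle_absorb h l _ _ rh.index rl.index rh.left rh.right rl.left rl.right
    rh.eq.symm rl.eq.symm
  rw [h1, ← h2]

lemma NN_eq : NN P = conv (F1 P) (F2 P) := by
  apply TensorProduct.ext'
  intro h l
  have rh := Coalgebra.Repr.arbitrary k h
  rw [E_tmul P h l rh.eq.symm]
  simpa using P.act_act_one h l _ rh.index rh.left rh.right rh.eq.symm

end Main

section Main2

variable {k H A : Type} [CommRing k] [Ring H] [HopfAlgebra k H] [Ring A] [Algebra k A]
  (P : SymmetricTwistedPartialAction k H A)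

local notation "E" => conv (F1 P) (F2 P)

lemma E_central (T : H ⊗[k] H →ₗ[k] A) : conv E T = conv T E := by
  rw [conv_assoc, F2_central, ← conv_assoc, F1_central, conv_assoc, ← F2_central, ← conv_assoc]

lemma E_E : conv E E = E := by
  rw [conv_assoc, ← conv_assoc (F2 P), ← F1_central, conv_assoc, F2_F2, ← conv_assoc, F1_F1]

lemma F2_W : conv (F2 P) (W P) = W P := by rw [F2_central, W_F2]

lemma E_W : conv E (W P) = W P := by rw [← NN_eq, NN_W]

lemma F1_W : conv (F1 P) (W P) = W P := by
  conv_lhs => rw [← F2_W P, ← conv_assoc]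
  rw [E_W]

lemma W_F1 : conv (W P) (F1 P) = W P := by rw [← F1_central, F1_W]

lemma W_E : conv (W P) E = W P := by rw [← E_central, E_W]

lemma F1_Wi : conv (F1 P) (Wi P) = Wi P := by rw [F1_central, Wi_F1]

lemma F2_Wi : conv (F2 P) (Wi P) = Wi P := by rw [F2_central, Wi_F2]

lemma Wi_E : conv (Wi P) E = Wi P := by rw [← conv_assoc, Wi_F1, Wi_F2]

lemma E_Wi : conv E (Wi P) = Wi P := by rw [E_central, Wi_E]

/-! ### the crucial `F2z` computations -/

def Sz (z : H) : H ⊗[k] H →ₗ[k] A := liftAct P (P.act.flip (aone P z))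

@[simp] lemma Sz_tmul (z h l : H) : Sz P z (h ⊗ₜ[k] l) = P.act h (P.act l (P.act z 1)) := rfl

def tz (z : H) : H ⊗[k] H →ₗ[k] A := (P.act.flip (aone P z)) ∘ₗ LinearMap.mul' k H

@[simp] lemma tz_tmul (z h l : H) : tz P z (h ⊗ₜ[k] l) = P.act (h * l) (P.act z 1) := by
  simp [tz]

lemma tz_eq (z : H) : tz P z = conv (F2 P) (F2z P z) := by
  apply TensorProduct.ext'
  intro h l
  have rh := Coalgebra.Repr.arbitrary k h
  have rl := Coalgebra.Repr.arbitrary k l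
  rw [conv_tmul_expand rh.eq.symm rl.eq.symm, tz_tmul]
  have hexp := comul_mul_expand (k := k) rh.eq.symm rl.eq.symm
  have := P.act_act_one (h * l) z _ _ _ _ hexp
  rw [Finset.sum_product] at this
  simpa using this

/-- `liftAct (l ↦ (l z)·1) = F1 ⋆ F2z` -/
lemma liftAct_mulRight (z : H) :
    liftAct P (aone P ∘ₗ LinearMap.mulRight k z) = conv (F1 P) (F2z P z) := by
  apply TensorProduct.ext'
  intro h l
  have rh := Coalgebra.Repr.arbitrary k h
  have rl := Coalgebra.Repr.arbitrary k l
  rw [conv_tmul_expand rh.eq.symm rl.eq.symm]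
  have hact := P.act_act_one h (l * z) _ rh.index rh.left rh.right rh.eq.symm
  simp only [← mul_assoc] at hact
  simp only [liftAct_tmul, LinearMap.comp_apply, aone_apply, LinearMap.mulRight_apply]
  rw [hact]
  refine Finset.sum_congr rfl fun i _ => ?_
  simp only [F1_tmul, F2z_tmul, smul_mul_assoc]
  have := collapse_smul_left (k := k) rl.eq.symm
    ((LinearMap.mulLeft k (P.act (rh.left i) 1)) ∘ₗ (aone P) ∘ₗ
      (LinearMap.mulRight k z) ∘ₗ (LinearMap.mulLeft k (rh.right i)))
  simp only [LinearMap.comp_apply, LinearMap.mulLeft_apply, LinearMap.mulRight_apply,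
    aone_apply] at this
  exact this.symm

/-- the map `l ↦ l·(z·1)` as a convolution on `H`. -/
lemma actflip_eq (z : H) :
    P.act.flip (aone P z) = conv (aone P) (aone P ∘ₗ LinearMap.mulRight k z) := by
  ext l
  have rl := Coalgebra.Repr.arbitrary k l
  rw [conv_repr rl]
  simpa using P.act_act_one l z _ rl.index rl.left rl.right rl.eq.symm

/-- `liftAct` turns convolution over `C` into convolution over `H ⊗ C`. -/
lemma liftAct_conv {C : Type} [AddCommGroup C] [Module k C] [Coalgebra k C]
    (f g : C →ₗ[k] A) :
    liftAct P (conv f g) = conv (liftAct P f) (liftAct P g) := by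
  apply TensorProduct.ext'
  intro h x
  have rh := Coalgebra.Repr.arbitrary k h
  have rx := Coalgebra.Repr.arbitrary k x
  rw [conv_tmul_expand rh.eq.symm rx.eq.symm]
  simp only [liftAct_tmul]
  rw [conv_repr rx, map_sum]
  rw [Finset.sum_comm]
  refine Finset.sum_congr rfl fun j _ => ?_
  exact P.act_mul h (f (rx.left j)) (g (rx.right j)) _ rh.index rh.left rh.right rh.eq.symm

lemma Sz_eq (z : H) : Sz P z = conv E (F2z P z) := by
  have h1 : Sz P z = conv (NN P) (conv (F1 P) (F2z P z)) := by
    rw [Sz, actflip_eq, liftAct_conv, ← liftAct_mulRight]; rfl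
  rw [h1, NN_eq, ← conv_assoc, conv_assoc (F1 P), ← F1_central,
    ← conv_assoc (F1 P) (F1 P), F1_F1]

lemma Sz_W (z : H) : conv (Sz P z) (W P) = conv (W P) (F2z P z) := by
  have h1 : conv (Sz P z) (W P) = conv (W P) (tz P z) := by
    apply TensorProduct.ext'
    intro h l
    have rh := Coalgebra.Repr.arbitrary k h
    have rl := Coalgebra.Repr.arbitrary k l
    rw [conv_tmul_expand rh.eq.symm rl.eq.symm, conv_tmul_expand rh.eq.symm rl.eq.symm]
    have := P.twisted h l (P.act z 1) _ _ rh.index rl.index rh.left rh.right rl.left rl.right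
      rh.eq.symm rl.eq.symm
    simpa using this
  rw [h1, tz_eq, ← conv_assoc, W_F2]

lemma Sz_E (z : H) : conv (Sz P z) E = Sz P z := by
  rw [Sz_eq, conv_assoc, ← E_central, ← conv_assoc, E_E, ← Sz_eq]

/-- THE CRUX: `F2z` commutes with `ω'`. -/
lemma crux (z : H) : conv (Wi P) (F2z P z) = conv (F2z P z) (Wi P) := by
  have h1 : conv (Wi P) (F2z P z) = conv (Wi P) (Sz P z) := by
    rw [Sz_eq, ← conv_assoc, Wi_E]
  calc conv (Wi P) (F2z P z)
      = conv (Wi P) (Sz P z) := h1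
    _ = conv (Wi P) (conv (conv (Sz P z) (W P)) (Wi P)) := by
        conv_lhs => rw [← Sz_E P z, ← W_Wi P, ← conv_assoc (Sz P z) (W P) (Wi P)]
    _ = conv (Wi P) (conv (conv (W P) (F2z P z)) (Wi P)) := by rw [Sz_W]
    _ = conv (conv (conv (Wi P) (W P)) (F2z P z)) (Wi P) := by
        rw [← conv_assoc, ← conv_assoc]
    _ = conv (conv E (F2z P z)) (Wi P) := by rw [Wi_W]
    _ = conv (F2z P z) (conv E (Wi P)) := by rw [E_central, conv_assoc]
    _ = conv (F2z P z) (Wi P) := by rw [E_Wi]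

end Main2

section Main3

variable {k H A : Type} [CommRing k] [Ring H] [HopfAlgebra k H] [Ring A] [Algebra k A]

/-- extensionality for maps out of `H ⊗ (H ⊗ H)`. -/
lemma ext3 {V : Type*} [AddCommGroup V] [Module k V]
    {f g : H ⊗[k] (H ⊗[k] H) →ₗ[k] V}
    (hfg : ∀ a b c : H, f (a ⊗ₜ[k] (b ⊗ₜ[k] c)) = g (a ⊗ₜ[k] (b ⊗ₜ[k] c))) : f = g := by
  apply TensorProduct.ext'
  intro a x
  induction x using TensorProduct.induction_on with
  | zero => rw [TensorProduct.tmul_zero, map_zero, map_zero]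
  | tmul b c => exact hfg a b c
  | add x y hx hy => rw [TensorProduct.tmul_add, map_add, map_add, hx, hy]

def phb : H ⊗[k] (H ⊗[k] H) →ₗ[k] H ⊗[k] H := LinearMap.lTensor H (LinearMap.mul' k H)

def phc : H ⊗[k] (H ⊗[k] H) →ₗ[k] H ⊗[k] H :=
  LinearMap.rTensor H (LinearMap.mul' k H) ∘ₗ (TensorProduct.assoc k H H H).symm.toLinearMap

def phd : H ⊗[k] (H ⊗[k] H) →ₗ[k] H ⊗[k] H :=
  LinearMap.lTensor H
    ((TensorProduct.rid k H).toLinearMap ∘ₗ LinearMap.lTensor H (Coalgebra.counit (R := k)))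

@[simp] lemma phb_tmul (h l m : H) : phb (k := k) (h ⊗ₜ[k] (l ⊗ₜ[k] m)) = h ⊗ₜ[k] (l * m) := by
  simp [phb]

@[simp] lemma phc_tmul (h l m : H) : phc (k := k) (h ⊗ₜ[k] (l ⊗ₜ[k] m)) = (h * l) ⊗ₜ[k] m := by
  simp [phc]

@[simp] lemma phd_tmul (h l m : H) :
    phd (k := k) (h ⊗ₜ[k] (l ⊗ₜ[k] m)) = Coalgebra.counit (R := k) m • (h ⊗ₜ[k] l) := by
  simp [phd, TensorProduct.tmul_smul, TensorProduct.smul_tmul']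

/-- product-indexed form of `comul_tmul_expand`. -/
lemma comul_tmul_expand' {M N : Type} [AddCommGroup M] [Module k M] [Coalgebra k M]
    [AddCommGroup N] [Module k N] [Coalgebra k N]
    {a : M} {b : N} {ι κ : Type} {s : Finset ι} {t : Finset κ}
    {a1 a2 : ι → M} {b1 b2 : κ → N}
    (ha : Coalgebra.comul (R := k) a = ∑ i ∈ s, a1 i ⊗ₜ[k] a2 i)
    (hb : Coalgebra.comul (R := k) b = ∑ j ∈ t, b1 j ⊗ₜ[k] b2 j) :
    Coalgebra.comul (A := M ⊗[k] N) (a ⊗ₜ[k] b) =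
      ∑ p ∈ s ×ˢ t, (a1 p.1 ⊗ₜ[k] b1 p.2) ⊗ₜ[k] (a2 p.1 ⊗ₜ[k] b2 p.2) := by
  refine (comul_tmul_expand ha hb).trans (Finset.sum_product (s := s) (t := t)
    (f := fun p => (a1 p.1 ⊗ₜ[k] b1 p.2) ⊗ₜ[k] (a2 p.1 ⊗ₜ[k] b2 p.2))).symm

lemma hom_phb : Coalgebra.comul (R := k) ∘ₗ phb (k := k) (H := H) =
    TensorProduct.map phb phb ∘ₗ Coalgebra.comul := by
  apply ext3
  intro h l m
  have rh := Coalgebra.Repr.arbitrary k h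
  have rl := Coalgebra.Repr.arbitrary k l
  have rm := Coalgebra.Repr.arbitrary k m
  have hlm := comul_mul_expand (k := k) rl.eq.symm rm.eq.symm
  have hx := comul_tmul_expand' (k := k) rl.eq.symm rm.eq.symm
  simp only [LinearMap.comp_apply, phb_tmul]
  erw [comul_tmul_expand rh.eq.symm hlm, comul_tmul_expand rh.eq.symm hx]
  simp [map_sum]

lemma hom_phc : Coalgebra.comul (R := k) ∘ₗ phc (k := k) (H := H) =
    TensorProduct.map phc phc ∘ₗ Coalgebra.comul := by
  apply ext3
  intro h l m
  have rh := Coalgebra.Repr.arbitrary k h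
  have rl := Coalgebra.Repr.arbitrary k l
  have rm := Coalgebra.Repr.arbitrary k m
  have hhl := comul_mul_expand (k := k) rh.eq.symm rl.eq.symm
  have hx := comul_tmul_expand' (k := k) rl.eq.symm rm.eq.symm
  simp only [LinearMap.comp_apply, phc_tmul]
  erw [comul_tmul_expand hhl rm.eq.symm, comul_tmul_expand rh.eq.symm hx]
  simp only [map_sum, TensorProduct.map_tmul, phc_tmul, Finset.sum_product]

lemma hom_phd : Coalgebra.comul (R := k) ∘ₗ phd (k := k) (H := H) =
    TensorProduct.map phd phd ∘ₗ Coalgebra.comul := by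
  apply ext3
  intro h l m
  have rh := Coalgebra.Repr.arbitrary k h
  have rl := Coalgebra.Repr.arbitrary k l
  have rm := Coalgebra.Repr.arbitrary k m
  have hx := comul_tmul_expand' (k := k) rl.eq.symm rm.eq.symm
  simp only [LinearMap.comp_apply, phd_tmul, map_smul]
  erw [comul_tmul_expand rh.eq.symm rl.eq.symm, comul_tmul_expand rh.eq.symm hx]
  simp only [map_sum, TensorProduct.map_tmul, phd_tmul]
  rw [Finset.smul_sum]
  refine Finset.sum_congr rfl fun i _ => ?_
  simp only [Finset.sum_product]
  rw [Finset.smul_sum]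
  refine Finset.sum_congr rfl fun j _ => ?_
  rw [← counit_counit_collapse (k := k) rm.eq.symm, Finset.sum_smul]
  refine Finset.sum_congr rfl fun p _ => ?_
  simp [TensorProduct.smul_tmul, TensorProduct.tmul_smul, smul_smul, mul_comm]

variable (P : SymmetricTwistedPartialAction k H A)

def Bb : H ⊗[k] (H ⊗[k] H) →ₗ[k] A := W P ∘ₗ phb
def Cc : H ⊗[k] (H ⊗[k] H) →ₗ[k] A := W P ∘ₗ phc
def Cc' : H ⊗[k] (H ⊗[k] H) →ₗ[k] A := Wi P ∘ₗ phc
def Dd : H ⊗[k] (H ⊗[k] H) →ₗ[k] A := W P ∘ₗ phd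
def Dd' : H ⊗[k] (H ⊗[k] H) →ₗ[k] A := Wi P ∘ₗ phd
def G1 : H ⊗[k] (H ⊗[k] H) →ₗ[k] A := F1 P ∘ₗ phd
def C1 : H ⊗[k] (H ⊗[k] H) →ₗ[k] A := F2 P ∘ₗ phd
def F2' : H ⊗[k] (H ⊗[k] H) →ₗ[k] A := F2 P ∘ₗ phb
def U : H ⊗[k] (H ⊗[k] H) →ₗ[k] A := liftAct P (Wi P)
def AW : H ⊗[k] (H ⊗[k] H) →ₗ[k] A := liftAct P (W P)

end Main3

section Main4

variable {k H A : Type} [CommRing k] [Ring H] [HopfAlgebra k H] [Ring A] [Algebra k A]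
  (P : SymmetricTwistedPartialAction k H A)

lemma counit2_tmul (a b : H) :
    Coalgebra.counit (R := k) (a ⊗ₜ[k] b) =
      Coalgebra.counit (R := k) a * Coalgebra.counit (R := k) b := by
  rw [TensorProduct.counit_tmul, smul_eq_mul, mul_comm]

@[simp] lemma Bb_tmul (h l m : H) :
    Bb P (h ⊗ₜ[k] (l ⊗ₜ[k] m)) = P.cocycle h (l * m) := by simp [Bb]

@[simp] lemma Cc_tmul (h l m : H) :
    Cc P (h ⊗ₜ[k] (l ⊗ₜ[k] m)) = P.cocycle (h * l) m := by simp [Cc]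

@[simp] lemma Cc'_tmul (h l m : H) :
    Cc' P (h ⊗ₜ[k] (l ⊗ₜ[k] m)) = P.inv (h * l) m := by simp [Cc']

@[simp] lemma Dd_tmul (h l m : H) :
    Dd P (h ⊗ₜ[k] (l ⊗ₜ[k] m)) = Coalgebra.counit (R := k) m • P.cocycle h l := by simp [Dd]

@[simp] lemma Dd'_tmul (h l m : H) :
    Dd' P (h ⊗ₜ[k] (l ⊗ₜ[k] m)) = Coalgebra.counit (R := k) m • P.inv h l := by simp [Dd']

@[simp] lemma G1_tmul (h l m : H) :
    G1 P (h ⊗ₜ[k] (l ⊗ₜ[k] m)) =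
      Coalgebra.counit (R := k) (l ⊗ₜ[k] m) • P.act h 1 := by
  simp [G1, counit2_tmul, smul_smul, mul_comm]

@[simp] lemma C1_tmul (h l m : H) :
    C1 P (h ⊗ₜ[k] (l ⊗ₜ[k] m)) = Coalgebra.counit (R := k) m • P.act (h * l) 1 := by
  simp [C1]

@[simp] lemma F2'_tmul (h l m : H) :
    F2' P (h ⊗ₜ[k] (l ⊗ₜ[k] m)) = P.act (h * (l * m)) 1 := by simp [F2']

@[simp] lemma U_tmul (h l m : H) :
    U P (h ⊗ₜ[k] (l ⊗ₜ[k] m)) = P.act h (P.inv l m) := by simp [U]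

@[simp] lemma AW_tmul (h l m : H) :
    AW P (h ⊗ₜ[k] (l ⊗ₜ[k] m)) = P.act h (P.cocycle l m) := by simp [AW]

/-! ### value identifications -/

lemma vG1b : F1 P ∘ₗ phb = G1 P := by
  apply ext3
  intro h l m
  simp [phb, F1, G1, counit2_tmul, smul_smul, Bialgebra.counit_mul, mul_comm]

lemma vC1c : F1 P ∘ₗ phc = C1 P := by
  apply ext3
  intro h l m
  simp [phc]

lemma vF2c : F2 P ∘ₗ phc = F2' P := by
  apply ext3
  intro h l m
  simp [phc, mul_assoc]

lemma vLAF1 : liftAct P (F1 P) = NN P ∘ₗ phd := by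
  apply ext3
  intro h l m
  simp [phd]

lemma vLAF2 : liftAct P (F2 P) = NN P ∘ₗ phb := by
  apply ext3
  intro h l m
  simp [phb]

/-! ### basic Q₃ algebra -/

lemma G1_G1 : conv (G1 P) (G1 P) = G1 P := by
  show conv (F1 P ∘ₗ phd) (F1 P ∘ₗ phd) = F1 P ∘ₗ phd
  rw [conv_comp hom_phd, F1_F1]

lemma C1_G1_swap : conv (C1 P) (G1 P) = conv (G1 P) (C1 P) := by
  show conv (F2 P ∘ₗ phd) (F1 P ∘ₗ phd) = conv (F1 P ∘ₗ phd) (F2 P ∘ₗ phd)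
  rw [conv_comp hom_phd, conv_comp hom_phd, F1_central]

def PP : H ⊗[k] (H ⊗[k] H) →ₗ[k] A := conv (G1 P) (conv (C1 P) (F2' P))

lemma liftActE : liftAct P (conv (F1 P) (F2 P)) = PP P := by
  rw [liftAct_conv, vLAF1, vLAF2, NN_eq]
  rw [show conv (F1 P) (F2 P) ∘ₗ phd = conv (F1 P ∘ₗ phd) (F2 P ∘ₗ phd) from
    (conv_comp hom_phd _ _).symm]
  rw [show conv (F1 P) (F2 P) ∘ₗ phb = conv (F1 P ∘ₗ phb) (F2 P ∘ₗ phb) from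
    (conv_comp hom_phb _ _).symm]
  rw [show F1 P ∘ₗ phd = G1 P from rfl, show F2 P ∘ₗ phd = C1 P from rfl,
    show F2 P ∘ₗ phb = F2' P from rfl, vG1b]
  rw [conv_assoc, ← conv_assoc (C1 P), C1_G1_swap, conv_assoc (G1 P) (C1 P),
    ← conv_assoc (G1 P) (G1 P), G1_G1]
  rfl

lemma UAW : conv (U P) (AW P) = PP P := by
  rw [U, AW, ← liftAct_conv, Wi_W, liftActE]

lemma U_PP : conv (U P) (PP P) = U P := by
  rw [← liftActE, U, ← liftAct_conv, Wi_E]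

/-! ### the ⋆-lemma from centrality of f₁ -/

lemma star (S : H →ₗ[k] A) {h : H} {ι : Type} {s : Finset ι} {h1 h2 : ι → H}
    (hh : Coalgebra.comul (R := k) h = ∑ i ∈ s, h1 i ⊗ₜ[k] h2 i) :
    ∑ i ∈ s, P.act (h1 i) 1 * S (h2 i) = ∑ i ∈ s, S (h1 i) * P.act (h2 i) 1 := by
  have hone : Coalgebra.comul (R := k) (1 : H) =
      ∑ _x ∈ ({0} : Finset ℕ), (1 : H) ⊗ₜ[k] (1 : H) := by
    simp [Bialgebra.comul_one, Algebra.TensorProduct.one_def]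
  have := P.f1_central
    ((((LinearMap.lsmul k A).comp (Coalgebra.counit (R := k))).compl₂ S).flip)
    h 1 _ _ s {0} h1 h2 (fun _ => 1) (fun _ => 1) hh hone
  simpa [Bialgebra.counit_one] using this

/-! ### Q₃ centralities -/

lemma G1_central (T : H ⊗[k] (H ⊗[k] H) →ₗ[k] A) : conv (G1 P) T = conv T (G1 P) := by
  apply ext3
  intro h l m
  have rh := Coalgebra.Repr.arbitrary k h
  have rl := Coalgebra.Repr.arbitrary k l
  have rm := Coalgebra.Repr.arbitrary k m
  have hx := comul_tmul_expand' (k := k) rl.eq.symm rm.eq.symm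
  rw [conv_tmul_expand rh.eq.symm hx, conv_tmul_expand rh.eq.symm hx]
  calc ∑ i ∈ rh.index, ∑ p ∈ rl.index ×ˢ rm.index,
        G1 P (rh.left i ⊗ₜ[k] (rl.left p.1 ⊗ₜ[k] rm.left p.2)) *
          T (rh.right i ⊗ₜ[k] (rl.right p.1 ⊗ₜ[k] rm.right p.2))
      = ∑ i ∈ rh.index, P.act (rh.left i) 1 * T (rh.right i ⊗ₜ[k] (l ⊗ₜ[k] m)) := by
        refine Finset.sum_congr rfl fun i _ => ?_
        have hc := collapse_smul_left (k := k) hx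
          ((LinearMap.mulLeft k (P.act (rh.left i) 1)) ∘ₗ T ∘ₗ
            (TensorProduct.mk k H (H ⊗[k] H) (rh.right i)))
        simp only [LinearMap.comp_apply, LinearMap.mulLeft_apply,
          TensorProduct.mk_apply] at hc
        rw [← hc]
        refine Finset.sum_congr rfl fun p _ => ?_
        rw [G1_tmul, smul_mul_assoc]
    _ = ∑ i ∈ rh.index, T (rh.left i ⊗ₜ[k] (l ⊗ₜ[k] m)) * P.act (rh.right i) 1 := by
        have := star P (T ∘ₗ ((TensorProduct.mk k H (H ⊗[k] H)).flip (l ⊗ₜ[k] m)))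
          rh.eq.symm
        simpa using this
    _ = ∑ i ∈ rh.index, ∑ p ∈ rl.index ×ˢ rm.index,
        T (rh.left i ⊗ₜ[k] (rl.left p.1 ⊗ₜ[k] rm.left p.2)) *
          G1 P (rh.right i ⊗ₜ[k] (rl.right p.1 ⊗ₜ[k] rm.right p.2)) := by
        refine Finset.sum_congr rfl fun i _ => ?_
        have hc := collapse_smul_right (k := k) hx
          ((LinearMap.mulRight k (P.act (rh.right i) 1)) ∘ₗ T ∘ₗ
            (TensorProduct.mk k H (H ⊗[k] H) (rh.left i)))
        simp only [LinearMap.comp_apply, LinearMap.mulRight_apply,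
          TensorProduct.mk_apply] at hc
        rw [← hc]
        refine Finset.sum_congr rfl fun p _ => ?_
        rw [G1_tmul, mul_smul_comm]

lemma C1_central (T : H ⊗[k] (H ⊗[k] H) →ₗ[k] A) : conv (C1 P) T = conv T (C1 P) := by
  apply ext3
  intro h l m
  have rh := Coalgebra.Repr.arbitrary k h
  have rl := Coalgebra.Repr.arbitrary k l
  have rm := Coalgebra.Repr.arbitrary k m
  have hx := comul_tmul_expand' (k := k) rl.eq.symm rm.eq.symm
  rw [conv_tmul_expand rh.eq.symm hx, conv_tmul_expand rh.eq.symm hx]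
  simp only [Finset.sum_product]
  calc ∑ i ∈ rh.index, ∑ j ∈ rl.index, ∑ p ∈ rm.index,
        C1 P (rh.left i ⊗ₜ[k] (rl.left j ⊗ₜ[k] rm.left p)) *
          T (rh.right i ⊗ₜ[k] (rl.right j ⊗ₜ[k] rm.right p))
      = ∑ i ∈ rh.index, ∑ j ∈ rl.index,
          P.act (rh.left i * rl.left j) 1 *
            T (rh.right i ⊗ₜ[k] (rl.right j ⊗ₜ[k] m)) := by
        refine Finset.sum_congr rfl fun i _ => Finset.sum_congr rfl fun j _ => ?_
        have hc := collapse_smul_left (k := k) rm.eq.symm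
          ((LinearMap.mulLeft k (P.act (rh.left i * rl.left j) 1)) ∘ₗ T ∘ₗ
            (TensorProduct.mk k H (H ⊗[k] H) (rh.right i)) ∘ₗ
            (TensorProduct.mk k H H (rl.right j)))
        simp only [LinearMap.comp_apply, LinearMap.mulLeft_apply,
          TensorProduct.mk_apply] at hc
        rw [← hc]
        refine Finset.sum_congr rfl fun p _ => ?_
        rw [C1_tmul, smul_mul_assoc]
    _ = ∑ i ∈ rh.index, ∑ j ∈ rl.index,
          T (rh.left i ⊗ₜ[k] (rl.left j ⊗ₜ[k] m)) *
            P.act (rh.right i * rl.right j) 1 := by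
        have := P.f2_central
          (TensorProduct.curry (T ∘ₗ LinearMap.lTensor H ((TensorProduct.mk k H H).flip m)))
          h l _ _ rh.index rl.index rh.left rh.right rl.left rl.right rh.eq.symm rl.eq.symm
        simpa [TensorProduct.curry_apply] using this
    _ = ∑ i ∈ rh.index, ∑ j ∈ rl.index, ∑ p ∈ rm.index,
        T (rh.left i ⊗ₜ[k] (rl.left j ⊗ₜ[k] rm.left p)) *
          C1 P (rh.right i ⊗ₜ[k] (rl.right j ⊗ₜ[k] rm.right p)) := by
        refine Finset.sum_congr rfl fun i _ => Finset.sum_congr rfl fun j _ => ?_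
        have hc := collapse_smul_right (k := k) rm.eq.symm
          ((LinearMap.mulRight k (P.act (rh.right i * rl.right j) 1)) ∘ₗ T ∘ₗ
            (TensorProduct.mk k H (H ⊗[k] H) (rh.left i)) ∘ₗ
            (TensorProduct.mk k H H (rl.left j)))
        simp only [LinearMap.comp_apply, LinearMap.mulRight_apply,
          TensorProduct.mk_apply] at hc
        rw [← hc]
        refine Finset.sum_congr rfl fun p _ => ?_
        rw [C1_tmul, mul_smul_comm]

/-! ### the crux in `Q₃` and the cocycle identity -/

lemma crux3 : conv (F2' P) (Dd' P) = conv (Dd' P) (F2' P) := by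
  apply ext3
  intro h l m
  have rh := Coalgebra.Repr.arbitrary k h
  have rl := Coalgebra.Repr.arbitrary k l
  have rm := Coalgebra.Repr.arbitrary k m
  have hx := comul_tmul_expand' (k := k) rl.eq.symm rm.eq.symm
  rw [conv_tmul_expand rh.eq.symm hx, conv_tmul_expand rh.eq.symm hx]
  simp only [Finset.sum_product]
  have key := congrArg (fun (f : H ⊗[k] H →ₗ[k] A) => f (h ⊗ₜ[k] l)) (crux P m)
  rw [conv_tmul_expand rh.eq.symm rl.eq.symm, conv_tmul_expand rh.eq.symm rl.eq.symm] at key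
  calc ∑ i ∈ rh.index, ∑ j ∈ rl.index, ∑ p ∈ rm.index,
        F2' P (rh.left i ⊗ₜ[k] (rl.left j ⊗ₜ[k] rm.left p)) *
          Dd' P (rh.right i ⊗ₜ[k] (rl.right j ⊗ₜ[k] rm.right p))
      = ∑ i ∈ rh.index, ∑ j ∈ rl.index,
          F2z P m (rh.left i ⊗ₜ[k] rl.left j) * Wi P (rh.right i ⊗ₜ[k] rl.right j) := by
        refine Finset.sum_congr rfl fun i _ => Finset.sum_congr rfl fun j _ => ?_
        have hc := collapse_smul_right (k := k) rm.eq.symm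
          ((LinearMap.mulRight k (P.inv (rh.right i) (rl.right j))) ∘ₗ (aone P) ∘ₗ
            (LinearMap.mulLeft k (rh.left i)) ∘ₗ (LinearMap.mulLeft k (rl.left j)))
        simp only [LinearMap.comp_apply, LinearMap.mulRight_apply, LinearMap.mulLeft_apply,
          aone_apply] at hc
        rw [F2z_tmul, Wi_tmul, mul_assoc (rh.left i) (rl.left j) m, ← hc]
        refine Finset.sum_congr rfl fun p _ => ?_
        rw [F2'_tmul, Dd'_tmul, mul_smul_comm]
    _ = ∑ i ∈ rh.index, ∑ j ∈ rl.index,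
          Wi P (rh.left i ⊗ₜ[k] rl.left j) * F2z P m (rh.right i ⊗ₜ[k] rl.right j) := key.symm
    _ = ∑ i ∈ rh.index, ∑ j ∈ rl.index, ∑ p ∈ rm.index,
        Dd' P (rh.left i ⊗ₜ[k] (rl.left j ⊗ₜ[k] rm.left p)) *
          F2' P (rh.right i ⊗ₜ[k] (rl.right j ⊗ₜ[k] rm.right p)) := by
        refine Finset.sum_congr rfl fun i _ => Finset.sum_congr rfl fun j _ => ?_
        have hc := collapse_smul_left (k := k) rm.eq.symm
          ((LinearMap.mulLeft k (P.inv (rh.left i) (rl.left j))) ∘ₗ (aone P) ∘ₗ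
            (LinearMap.mulLeft k (rh.right i)) ∘ₗ (LinearMap.mulLeft k (rl.right j)))
        simp only [LinearMap.comp_apply, LinearMap.mulLeft_apply, aone_apply] at hc
        rw [Wi_tmul, F2z_tmul, mul_assoc (rh.right i) (rl.right j) m, ← hc]
        refine Finset.sum_congr rfl fun p _ => ?_
        rw [Dd'_tmul, F2'_tmul, smul_mul_assoc]

lemma CO3 : conv (AW P) (Bb P) = conv (Dd P) (Cc P) := by
  apply ext3
  intro h l m
  have rh := Coalgebra.Repr.arbitrary k h
  have rl := Coalgebra.Repr.arbitrary k l
  have rm := Coalgebra.Repr.arbitrary k m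
  have hx := comul_tmul_expand' (k := k) rl.eq.symm rm.eq.symm
  rw [conv_tmul_expand rh.eq.symm hx, conv_tmul_expand rh.eq.symm hx]
  simp only [Finset.sum_product]
  have hco := P.cocycle_id h l m _ _ _ rh.index rl.index rm.index
    rh.left rh.right rl.left rl.right rm.left rm.right rh.eq.symm rl.eq.symm rm.eq.symm
  calc ∑ i ∈ rh.index, ∑ j ∈ rl.index, ∑ p ∈ rm.index,
        AW P (rh.left i ⊗ₜ[k] (rl.left j ⊗ₜ[k] rm.left p)) *
          Bb P (rh.right i ⊗ₜ[k] (rl.right j ⊗ₜ[k] rm.right p))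
      = ∑ i ∈ rh.index, ∑ j ∈ rl.index,
          P.cocycle (rh.left i) (rl.left j) * P.cocycle (rh.right i * rl.right j) m := by
        simp only [AW_tmul, Bb_tmul]
        exact hco
    _ = ∑ i ∈ rh.index, ∑ j ∈ rl.index, ∑ p ∈ rm.index,
        Dd P (rh.left i ⊗ₜ[k] (rl.left j ⊗ₜ[k] rm.left p)) *
          Cc P (rh.right i ⊗ₜ[k] (rl.right j ⊗ₜ[k] rm.right p)) := by
        refine Finset.sum_congr rfl fun i _ => Finset.sum_congr rfl fun j _ => ?_
        have hc := collapse_smul_left (k := k) rm.eq.symm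
          ((LinearMap.mulLeft k (P.cocycle (rh.left i) (rl.left j))) ∘ₗ
            (P.cocycle (rh.right i * rl.right j)))
        simp only [LinearMap.comp_apply, LinearMap.mulLeft_apply] at hc
        rw [← hc]
        refine Finset.sum_congr rfl fun p _ => ?_
        rw [Dd_tmul, Cc_tmul, smul_mul_assoc]

/-! ### absorption lemmas -/

lemma F2'_Bb : conv (F2' P) (Bb P) = Bb P := by
  show conv (F2 P ∘ₗ phb) (W P ∘ₗ phb) = W P ∘ₗ phb
  rw [conv_comp hom_phb, F2_W]

lemma Dd_C1 : conv (Dd P) (C1 P) = Dd P := by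
  show conv (W P ∘ₗ phd) (F2 P ∘ₗ phd) = W P ∘ₗ phd
  rw [conv_comp hom_phd, W_F2]

lemma Dd'_C1 : conv (Dd' P) (C1 P) = Dd' P := by
  show conv (Wi P ∘ₗ phd) (F2 P ∘ₗ phd) = Wi P ∘ₗ phd
  rw [conv_comp hom_phd, Wi_F2]

lemma Dd'_G1 : conv (Dd' P) (G1 P) = Dd' P := by
  show conv (Wi P ∘ₗ phd) (F1 P ∘ₗ phd) = Wi P ∘ₗ phd
  rw [conv_comp hom_phd, Wi_F1]

lemma CC' : conv (Cc P) (Cc' P) = conv (C1 P) (F2' P) := by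
  show conv (W P ∘ₗ phc) (Wi P ∘ₗ phc) = conv (C1 P) (F2' P)
  rw [conv_comp hom_phc, W_Wi, ← vC1c, ← vF2c, ← conv_comp hom_phc]

lemma DD' : conv (Dd P) (Dd' P) = conv (G1 P) (C1 P) := by
  show conv (W P ∘ₗ phd) (Wi P ∘ₗ phd) = conv (G1 P) (C1 P)
  rw [conv_comp hom_phd, W_Wi]
  exact (conv_comp hom_phd _ _).symm

/-! ### main theorem, map level -/

theorem main3 : U P = conv (Bb P) (conv (Cc' P) (Dd' P)) := by
  set R := conv (Bb P) (conv (Cc' P) (Dd' P)) with hR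
  have path1 : conv (U P) (conv (AW P) R) = R := by
    rw [← conv_assoc, UAW]
    -- PP ⋆ R = R
    have hF2R : conv (F2' P) R = R := by
      rw [hR, ← conv_assoc, F2'_Bb]
    have hC1R : conv (C1 P) R = R := by
      rw [C1_central, hR, conv_assoc, conv_assoc, Dd'_C1]
    have hG1R : conv (G1 P) R = R := by
      rw [G1_central, hR, conv_assoc, conv_assoc, Dd'_G1]
    rw [PP, conv_assoc, conv_assoc, hF2R, hC1R, hG1R]
  have path2 : conv (U P) (conv (AW P) R) = U P := by
    have inner : conv (AW P) R = PP P := by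
      rw [hR, ← conv_assoc, CO3, conv_assoc, ← conv_assoc (Cc P), CC',
        conv_assoc (C1 P), crux3, ← conv_assoc (Dd P) (C1 P), Dd_C1,
        ← conv_assoc (Dd P), DD', PP, conv_assoc]
    rw [inner, U_PP]
  rw [← path2, path1]

end Main4

end STPA

/-- Proposition 4.4, equation (23):
`h·ω'(l,m) = Σ ω(h₁,l₁m₁) ω'(h₂l₂,m₂) ω'(h₃,l₃)`. -/
theorem symm_act_inv
    {k H A : Type} [CommRing k] [Ring H] [HopfAlgebra k H]
    [Ring A] [Algebra k A] (P : SymmetricTwistedPartialAction k H A) :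
    ∀ (h l m : H) (ι ι' κ κ' ν : Type) (s : Finset ι)
      (s' : ι → Finset ι') (t : Finset κ) (t' : κ → Finset κ') (r : Finset ν)
      (h1 h2 : ι → H) (h21 h22 : ι → ι' → H)
      (l1 l2 : κ → H) (l21 l22 : κ → κ' → H) (m1 m2 : ν → H),
      Coalgebra.comul (R := k) h = ∑ i ∈ s, h1 i ⊗ₜ[k] h2 i →
      (∀ i ∈ s, Coalgebra.comul (R := k) (h2 i) =
        ∑ j ∈ s' i, h21 i j ⊗ₜ[k] h22 i j) →
      Coalgebra.comul (R := k) l = ∑ p ∈ t, l1 p ⊗ₜ[k] l2 p →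
      (∀ p ∈ t, Coalgebra.comul (R := k) (l2 p) =
        ∑ q ∈ t' p, l21 p q ⊗ₜ[k] l22 p q) →
      Coalgebra.comul (R := k) m = ∑ n ∈ r, m1 n ⊗ₜ[k] m2 n →
      P.act h (P.inv l m) =
        ∑ i ∈ s, ∑ j ∈ s' i, ∑ p ∈ t, ∑ q ∈ t' p, ∑ n ∈ r,
          P.cocycle (h1 i) (l1 p * m1 n) * P.inv (h21 i j * l21 p q) (m2 n) *
            P.inv (h22 i j) (l22 p q) := by
  intro h l m ι ι' κ κ' ν s s' t t' r h1 h2 h21 h22 l1 l2 l21 l22 m1 m2 hh hh2 hl hl2 hm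
  have hmain : P.act h (P.inv l m) =
      STPA.conv (STPA.Bb P) (STPA.conv (STPA.Cc' P) (STPA.Dd' P))
        (h ⊗ₜ[k] (l ⊗ₜ[k] m)) := by
    conv_lhs => rw [← STPA.U_tmul P h l m]
    rw [STPA.main3]
  rw [hmain]
  have hx := STPA.comul_tmul_expand' (k := k) hl hm
  rw [STPA.conv_tmul_expand hh hx]
  calc ∑ i ∈ s, ∑ pn ∈ t ×ˢ r,
        STPA.Bb P (h1 i ⊗ₜ[k] (l1 pn.1 ⊗ₜ[k] m1 pn.2)) *
          STPA.conv (STPA.Cc' P) (STPA.Dd' P) (h2 i ⊗ₜ[k] (l2 pn.1 ⊗ₜ[k] m2 pn.2))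
      = ∑ i ∈ s, ∑ pn ∈ t ×ˢ r, ∑ j ∈ s' i, ∑ q ∈ t' pn.1,
          P.cocycle (h1 i) (l1 pn.1 * m1 pn.2) *
            (P.inv (h21 i j * l21 pn.1 q) (m2 pn.2) * P.inv (h22 i j) (l22 pn.1 q)) := by
        refine Finset.sum_congr rfl fun i hi => Finset.sum_congr rfl fun pn hpn => ?_
        have hp : pn.1 ∈ t := (Finset.mem_product.mp hpn).1
        have rmn := Coalgebra.Repr.arbitrary k (m2 pn.2)
        have hx2 := STPA.comul_tmul_expand' (k := k) (hl2 pn.1 hp) rmn.eq.symm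
        rw [STPA.conv_tmul_expand (hh2 i hi) hx2, STPA.Bb_tmul, Finset.mul_sum]
        refine Finset.sum_congr rfl fun j hj => ?_
        rw [Finset.mul_sum, Finset.sum_product]
        refine Finset.sum_congr rfl fun q hq => ?_
        have hc := STPA.collapse_smul_right (k := k) rmn.eq.symm
          ((LinearMap.mulLeft k (P.cocycle (h1 i) (l1 pn.1 * m1 pn.2))) ∘ₗ
            (LinearMap.mulRight k (P.inv (h22 i j) (l22 pn.1 q))) ∘ₗ
            (P.inv (h21 i j * l21 pn.1 q)))
        simp only [LinearMap.comp_apply, LinearMap.mulLeft_apply,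
          LinearMap.mulRight_apply] at hc
        rw [← hc]
        refine Finset.sum_congr rfl fun w hw => ?_
        rw [STPA.Cc'_tmul, STPA.Dd'_tmul, mul_smul_comm, mul_smul_comm]
    _ = ∑ i ∈ s, ∑ j ∈ s' i, ∑ p ∈ t, ∑ q ∈ t' p, ∑ n ∈ r,
          P.cocycle (h1 i) (l1 p * m1 n) * P.inv (h21 i j * l21 p q) (m2 n) *
            P.inv (h22 i j) (l22 p q) := by
        refine Finset.sum_congr rfl fun i _ => ?_
        rw [Finset.sum_product]
        calc ∑ p ∈ t, ∑ n ∈ r, ∑ j ∈ s' i, ∑ q ∈ t' p,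
              P.cocycle (h1 i) (l1 p * m1 n) *
                (P.inv (h21 i j * l21 p q) (m2 n) * P.inv (h22 i j) (l22 p q))
            = ∑ p ∈ t, ∑ j ∈ s' i, ∑ n ∈ r, ∑ q ∈ t' p,
              P.cocycle (h1 i) (l1 p * m1 n) *
                (P.inv (h21 i j * l21 p q) (m2 n) * P.inv (h22 i j) (l22 p q)) := by
              exact Finset.sum_congr rfl fun p _ => Finset.sum_comm
          _ = ∑ j ∈ s' i, ∑ p ∈ t, ∑ n ∈ r, ∑ q ∈ t' p,
              P.cocycle (h1 i) (l1 p * m1 n) *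
                (P.inv (h21 i j * l21 p q) (m2 n) * P.inv (h22 i j) (l22 p q)) := by
              exact Finset.sum_comm
          _ = ∑ j ∈ s' i, ∑ p ∈ t, ∑ q ∈ t' p, ∑ n ∈ r,
              P.cocycle (h1 i) (l1 p * m1 n) *
                (P.inv (h21 i j * l21 p q) (m2 n) * P.inv (h22 i j) (l22 p q)) := by
              exact Finset.sum_congr rfl fun j _ => Finset.sum_congr rfl fun p _ =>
                Finset.sum_comm
          _ = ∑ j ∈ s' i, ∑ p ∈ t, ∑ q ∈ t' p, ∑ n ∈ r,
              P.cocycle (h1 i) (l1 p * m1 n) * P.inv (h21 i j * l21 p q) (m2 n) *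
                P.inv (h22 i j) (l22 p q) := by
              refine Finset.sum_congr rfl fun j _ => Finset.sum_congr rfl fun p _ =>
                Finset.sum_congr rfl fun q _ => Finset.sum_congr rfl fun n _ => ?_
              rw [mul_assoc]
end
end
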